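/- arXiv:1208.5213 — 10 statements merged into one kernel-verified Lean document; each statement's English description precedes it below -/
import Mathlib

section
/- The sequence {|B_{2n}|/(2n)!}_{n≥1} is log-convex: for every integer n ≥ 2, (|B_{2n}|/(2n)!)² ≤ (|B_{2n−2}|/(2n−2)!)·(|B_{2n+2}|/(2n+2)!). -/
open Real

noncomputable def zetaS (p : ℕ) : ℝ := ∑' k : ℕ, 1 / (k : ℝ) ^ p

lemma zetaS_nonneg (p : ℕ) : 0 ≤ zetaS p :=
  tsum_nonneg fun k => by positivity

lemma abs_bernoulli_eq (k : ℕ) (hk : k ≠ 0) :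
    |(bernoulli (2 * k) : ℝ)| / (Nat.factorial (2 * k) : ℝ) =
      zetaS (2 * k) * (2 / (2 * π) ^ (2 * k)) := by
  have h := (hasSum_zeta_nat hk).tsum_eq
  have hS : zetaS (2 * k) =
      (-1 : ℝ) ^ (k + 1) * (2 : ℝ) ^ (2 * k - 1) * π ^ (2 * k) *
        bernoulli (2 * k) / (Nat.factorial (2 * k) : ℝ) := h
  have hpi : (0:ℝ) < π := Real.pi_pos
  have habs : |zetaS (2 * k)| = zetaS (2 * k) := abs_of_nonneg (zetaS_nonneg _)
  have h2 : (2:ℝ) ^ (2 * k - 1) * 2 = (2 : ℝ) ^ (2 * k) := by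
    rw [← pow_succ]
    congr 1
    omega
  have := congrArg abs hS
  rw [habs, abs_div, abs_mul, abs_mul, abs_mul, abs_pow, abs_pow, abs_pow,
    abs_neg, abs_one, one_pow, one_mul, abs_of_pos hpi,
    abs_of_pos (by norm_num : (0:ℝ) < 2), Nat.abs_cast] at this
  rw [this]
  have hfac : (0:ℝ) < (Nat.factorial (2 * k) : ℝ) := by positivity
  rw [mul_pow, ← h2]
  field_simp

lemma zetaS_sq_le (n : ℕ) (hn : 2 ≤ n) :
    zetaS (2 * n) ^ 2 ≤ zetaS (2 * n - 2) * zetaS (2 * n + 2) := by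
  set f : ℕ → ℝ := fun k => 1 / (k : ℝ) ^ (n - 1) with hf
  set g : ℕ → ℝ := fun k => 1 / (k : ℝ) ^ (n + 1) with hg
  have hfg : ∀ k, f k * g k = 1 / (k : ℝ) ^ (2 * n) := by
    intro k
    simp only [hf, hg, div_mul_div_comm, one_mul, ← pow_add]
    congr 2
    omega
  have hf2 : ∀ k, f k ^ 2 = 1 / (k : ℝ) ^ (2 * n - 2) := by
    intro k
    simp only [hf, div_pow, one_pow, ← pow_mul]
    congr 2
    omega
  have hg2 : ∀ k, g k ^ 2 = 1 / (k : ℝ) ^ (2 * n + 2) := by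
    intro k
    simp only [hg, div_pow, one_pow, ← pow_mul]
    congr 2
    omega
  have hsum1 : Summable fun k : ℕ => 1 / (k : ℝ) ^ (2 * n - 2) :=
    summable_one_div_nat_pow.mpr (by omega)
  have hsum2 : Summable fun k : ℕ => 1 / (k : ℝ) ^ (2 * n + 2) :=
    summable_one_div_nat_pow.mpr (by omega)
  have hsum0 : Summable fun k : ℕ => 1 / (k : ℝ) ^ (2 * n) :=
    summable_one_div_nat_pow.mpr (by omega)
  have hA := zetaS_nonneg (2 * n - 2)
  have hB := zetaS_nonneg (2 * n + 2)
  have key : zetaS (2 * n) ≤ Real.sqrt (zetaS (2 * n - 2) * zetaS (2 * n + 2)) := by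
    apply Summable.tsum_le_of_sum_le hsum0
    intro s
    have hCS := Finset.sum_mul_sq_le_sq_mul_sq s f g
    have h1 : ∑ i ∈ s, f i * g i = ∑ i ∈ s, 1 / (i : ℝ) ^ (2 * n) := by
      exact Finset.sum_congr rfl fun i _ => hfg i
    have h2 : ∑ i ∈ s, f i ^ 2 ≤ zetaS (2 * n - 2) := by
      rw [show ∑ i ∈ s, f i ^ 2 = ∑ i ∈ s, 1 / (i : ℝ) ^ (2 * n - 2) from
        Finset.sum_congr rfl fun i _ => hf2 i]
      exact Summable.sum_le_tsum s (fun i _ => by positivity) hsum1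
    have h3 : ∑ i ∈ s, g i ^ 2 ≤ zetaS (2 * n + 2) := by
      rw [show ∑ i ∈ s, g i ^ 2 = ∑ i ∈ s, 1 / (i : ℝ) ^ (2 * n + 2) from
        Finset.sum_congr rfl fun i _ => hg2 i]
      exact Summable.sum_le_tsum s (fun i _ => by positivity) hsum2
    have hs_nonneg : 0 ≤ ∑ i ∈ s, 1 / (i : ℝ) ^ (2 * n) :=
      Finset.sum_nonneg fun i _ => by positivity
    have hsq : (∑ i ∈ s, 1 / (i : ℝ) ^ (2 * n)) ^ 2 ≤
        zetaS (2 * n - 2) * zetaS (2 * n + 2) := by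
      calc (∑ i ∈ s, 1 / (i : ℝ) ^ (2 * n)) ^ 2 = (∑ i ∈ s, f i * g i) ^ 2 := by rw [h1]
        _ ≤ (∑ i ∈ s, f i ^ 2) * ∑ i ∈ s, g i ^ 2 := hCS
        _ ≤ zetaS (2 * n - 2) * zetaS (2 * n + 2) := by
            apply mul_le_mul h2 h3 (Finset.sum_nonneg fun i _ => sq_nonneg _) hA
    calc ∑ i ∈ s, 1 / (i : ℝ) ^ (2 * n)
        = Real.sqrt ((∑ i ∈ s, 1 / (i : ℝ) ^ (2 * n)) ^ 2) := (Real.sqrt_sq hs_nonneg).symm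
      _ ≤ Real.sqrt (zetaS (2 * n - 2) * zetaS (2 * n + 2)) := Real.sqrt_le_sqrt hsq
  calc zetaS (2 * n) ^ 2 ≤ Real.sqrt (zetaS (2 * n - 2) * zetaS (2 * n + 2)) ^ 2 := by
        apply pow_le_pow_left₀ (zetaS_nonneg _) key
    _ = zetaS (2 * n - 2) * zetaS (2 * n + 2) := Real.sq_sqrt (by positivity)

/-- The sequence `{|B_{2n}|/(2n)!}_{n ≥ 1}` is log-convex, where `B_n` is the
`n`-th Bernoulli number. -/
theorem abs_bernoulli_div_factorial_logConvex (n : ℕ) (hn : 2 ≤ n) :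
    (|(bernoulli (2 * n) : ℝ)| / (Nat.factorial (2 * n) : ℝ)) ^ 2 ≤
      (|(bernoulli (2 * n - 2) : ℝ)| / (Nat.factorial (2 * n - 2) : ℝ)) *
        (|(bernoulli (2 * n + 2) : ℝ)| / (Nat.factorial (2 * n + 2) : ℝ)) := by
  have e1 : 2 * n - 2 = 2 * (n - 1) := by omega
  have e2 : 2 * n + 2 = 2 * (n + 1) := by omega
  rw [e1, e2, abs_bernoulli_eq n (by omega), abs_bernoulli_eq (n - 1) (by omega),
    abs_bernoulli_eq (n + 1) (by omega)]
  have hz := zetaS_sq_le n hn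
  rw [e1, e2] at hz
  have hpi : (0:ℝ) < 2 * π := by positivity
  have hc : (2 / (2 * π) ^ (2 * n)) ^ 2 =
      (2 / (2 * π) ^ (2 * (n - 1))) * (2 / (2 * π) ^ (2 * (n + 1))) := by
    have he : 2 * (n - 1) + 2 * (n + 1) = 2 * n * 2 := by omega
    rw [div_pow, div_mul_div_comm, ← pow_add, ← pow_mul, he]
    norm_num
  calc (zetaS (2 * n) * (2 / (2 * π) ^ (2 * n))) ^ 2
      = zetaS (2 * n) ^ 2 * (2 / (2 * π) ^ (2 * n)) ^ 2 := by ring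
    _ ≤ (zetaS (2 * (n - 1)) * zetaS (2 * (n + 1))) * (2 / (2 * π) ^ (2 * n)) ^ 2 := by
        apply mul_le_mul_of_nonneg_right hz (by positivity)
    _ = _ := by rw [hc]; ring
end

section
/- The function y ↦ log(2 ζ(y) Γ(y+1)) has strictly positive second derivative for every real y > 1; equivalently, the logarithmic derivative g'(y)/g(y) of g(y) = 2 ζ(y) Γ(y+1) is strictly increasing on (1, ∞). -/
/-- The Riemann zeta function, as a function of a real variable,
given for `x > 1` by the convergent series `∑_{n ≥ 1} 1/n^x`. -/
noncomputable def zeta (x : ℝ) : ℝ := ∑' n : ℕ, 1 / (n : ℝ) ^ x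

open Real MeasureTheory Set Filter Asymptotics Complex
open scoped Topology ENNReal NNReal

namespace ZetaGammaAux

/-- The weight function `x ↦ e^{-x}/(1-e^{-x})^2 = ∑_{n ≥ 1} n e^{-n x}`. -/
noncomputable def w (x : ℝ) : ℝ := Real.exp (-x) / (1 - Real.exp (-x)) ^ 2

/-- The complexification of `w`. -/
noncomputable def W (x : ℝ) : ℂ := (w x : ℂ)

noncomputable def L1 (x : ℝ) : ℂ := Real.log x • W x

noncomputable def H0 (t : ℝ) : ℝ := ∫ x in Ioi (0:ℝ), x ^ t * w x
noncomputable def H1 (t : ℝ) : ℝ := ∫ x in Ioi (0:ℝ), x ^ t * (Real.log x * w x)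
noncomputable def H2 (t : ℝ) : ℝ := ∫ x in Ioi (0:ℝ), x ^ t * (Real.log x ^ 2 * w x)

lemma one_sub_exp_neg_pos {x : ℝ} (hx : 0 < x) : 0 < 1 - Real.exp (-x) := by
  have : Real.exp (-x) < 1 := by
    rw [Real.exp_lt_one_iff]; linarith
  linarith

lemma w_pos {x : ℝ} (hx : 0 < x) : 0 < w x :=
  div_pos (Real.exp_pos _) (pow_pos (one_sub_exp_neg_pos hx) 2)

lemma w_eq_tsum {x : ℝ} (hx : 0 < x) :
    w x = ∑' n : ℕ, (n : ℝ) * Real.exp (-(n * x)) := by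
  have hr : ‖Real.exp (-x)‖ < 1 := by
    rw [Real.norm_eq_abs, abs_of_pos (Real.exp_pos _), Real.exp_lt_one_iff]
    linarith
  have h := tsum_coe_mul_geometric_of_norm_lt_one hr
  rw [w, ← h]
  refine tsum_congr fun n => ?_
  rw [← Real.exp_nat_mul]
  ring_nf

lemma continuousOn_w : ContinuousOn w (Ioi (0:ℝ)) := by
  apply ContinuousOn.div
  · exact (Real.continuous_exp.comp continuous_neg).continuousOn
  · exact ((continuous_const.sub (Real.continuous_exp.comp continuous_neg)).pow 2).continuousOn
  · intro x hx
    exact pow_ne_zero 2 (one_sub_exp_neg_pos hx).ne'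

lemma continuousOn_W : ContinuousOn W (Ioi (0:ℝ)) :=
  Complex.continuous_ofReal.comp_continuousOn continuousOn_w

lemma locallyIntegrableOn_W : LocallyIntegrableOn W (Ioi (0:ℝ)) :=
  continuousOn_W.locallyIntegrableOn measurableSet_Ioi

lemma continuousOn_L1 : ContinuousOn L1 (Ioi (0:ℝ)) := by
  refine ContinuousOn.smul (f := Real.log) ?_ continuousOn_W
  exact Real.continuousOn_log.mono (fun x hx => ne_of_gt hx)

lemma locallyIntegrableOn_L1 : LocallyIntegrableOn L1 (Ioi (0:ℝ)) :=
  continuousOn_L1.locallyIntegrableOn measurableSet_Ioi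

lemma exp_neg_isBigO_rpow (a : ℝ) :
    (fun x : ℝ => Real.exp (-x)) =O[atTop] fun x : ℝ => x ^ (-a) := by
  rw [isBigO_iff]
  refine ⟨1, ?_⟩
  filter_upwards [(isLittleO_rpow_exp_atTop a).bound one_pos, eventually_gt_atTop 0]
    with x h hx
  simp only [Real.norm_eq_abs, one_mul] at h ⊢
  have hxa : x ^ a ≤ Real.exp x := (le_abs_self _).trans (h.trans_eq (abs_of_pos (Real.exp_pos _)))
  have h1 : Real.exp (-x) ≤ x ^ (-a) := by
    rw [Real.exp_neg, Real.rpow_neg hx.le]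
    exact inv_anti₀ (Real.rpow_pos_of_pos hx a) hxa
  rw [abs_of_pos (Real.exp_pos _), _root_.abs_of_nonneg (Real.rpow_nonneg hx.le _)]
  exact h1

lemma W_isBigO_exp : W =O[atTop] fun x : ℝ => Real.exp (-x) := by
  rw [isBigO_iff]
  refine ⟨((1 - Real.exp (-1)) ^ 2)⁻¹, ?_⟩
  filter_upwards [eventually_ge_atTop (1:ℝ)] with x hx
  have hx0 : (0:ℝ) < x := lt_of_lt_of_le one_pos hx
  have hd1 : 0 < 1 - Real.exp (-1) := one_sub_exp_neg_pos one_pos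
  have hle : Real.exp (-x) ≤ Real.exp (-1) := by
    apply Real.exp_le_exp.mpr; linarith
  have hden : (1 - Real.exp (-1)) ^ 2 ≤ (1 - Real.exp (-x)) ^ 2 := by
    apply pow_le_pow_left₀ hd1.le; linarith
  have hb : w x ≤ Real.exp (-x) / (1 - Real.exp (-1)) ^ 2 := by
    rw [w]
    exact div_le_div_of_nonneg_left (Real.exp_pos _).le (pow_pos hd1 2) hden
  simp only [W, Complex.norm_real, Real.norm_eq_abs]
  rw [abs_of_pos (w_pos hx0), abs_of_pos (Real.exp_pos _)]
  calc w x ≤ Real.exp (-x) / (1 - Real.exp (-1)) ^ 2 := hb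
    _ = ((1 - Real.exp (-1)) ^ 2)⁻¹ * Real.exp (-x) := by ring

lemma W_isBigO_rpow_top (a : ℝ) : W =O[atTop] fun x : ℝ => x ^ (-a) :=
  W_isBigO_exp.trans (exp_neg_isBigO_rpow a)

lemma w_le {x : ℝ} (h0 : 0 < x) (h1 : x ≤ 1) : w x ≤ Real.exp 1 / x ^ 2 := by
  have he : (0:ℝ) < Real.exp (-x) := Real.exp_pos _
  have hd : x * Real.exp (-x) ≤ 1 - Real.exp (-x) := by
    have h := Real.add_one_le_exp x
    have h2 : (x + 1) * Real.exp (-x) ≤ Real.exp x * Real.exp (-x) :=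
      mul_le_mul_of_nonneg_right h he.le
    rw [← Real.exp_add, add_neg_cancel, Real.exp_zero] at h2
    nlinarith
  have hsq : (x * Real.exp (-x)) ^ 2 ≤ (1 - Real.exp (-x)) ^ 2 :=
    pow_le_pow_left₀ (by positivity) hd 2
  have step1 : w x ≤ Real.exp (-x) / (x * Real.exp (-x)) ^ 2 := by
    rw [w]
    exact div_le_div_of_nonneg_left he.le (by positivity) hsq
  have step2 : Real.exp (-x) / (x * Real.exp (-x)) ^ 2 = Real.exp x / x ^ 2 := by
    rw [Real.exp_neg]
    field_simp
  have step3 : Real.exp x / x ^ 2 ≤ Real.exp 1 / x ^ 2 :=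
    (div_le_div_iff_of_pos_right (by positivity)).mpr (Real.exp_le_exp.mpr h1)
  calc w x ≤ Real.exp (-x) / (x * Real.exp (-x)) ^ 2 := step1
    _ = Real.exp x / x ^ 2 := step2
    _ ≤ Real.exp 1 / x ^ 2 := step3

lemma W_isBigO_zero : W =O[𝓝[>] (0:ℝ)] fun x : ℝ => x ^ (-(2:ℝ)) := by
  rw [isBigO_iff]
  refine ⟨Real.exp 1, ?_⟩
  filter_upwards [Ioc_mem_nhdsGT_of_mem (α := ℝ) ⟨le_refl 0, zero_lt_one⟩] with x hx
  have h0 : (0:ℝ) < x := hx.1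
  have hrw : x ^ (-(2:ℝ)) = (x ^ 2)⁻¹ := by
    rw [Real.rpow_neg h0.le]
    norm_num [Real.rpow_natCast]
  simp only [W, Complex.norm_real, Real.norm_eq_abs]
  rw [abs_of_pos (w_pos h0), _root_.abs_of_nonneg (Real.rpow_nonneg h0.le _), hrw]
  calc w x ≤ Real.exp 1 / x ^ 2 := w_le h0 hx.2
    _ = Real.exp 1 * (x ^ 2)⁻¹ := by ring

lemma integrand_W_eq {u x : ℝ} (hx : x ∈ Ioi (0:ℝ)) :
    (x:ℂ) ^ ((u:ℂ) + 1 - 1) • W x = ((x ^ u * w x : ℝ) : ℂ) := by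
  have h1 : ((u:ℂ) + 1 - 1) = (u:ℂ) := by ring
  rw [h1, ← Complex.ofReal_cpow (le_of_lt hx) u, W, smul_eq_mul, ← Complex.ofReal_mul]

lemma integrand_L1_eq {u x : ℝ} (hx : x ∈ Ioi (0:ℝ)) :
    (x:ℂ) ^ ((u:ℂ) + 1 - 1) • (Real.log x • W x)
      = ((x ^ u * (Real.log x * w x) : ℝ) : ℂ) := by
  have h1 : ((u:ℂ) + 1 - 1) = (u:ℂ) := by ring
  rw [h1, ← Complex.ofReal_cpow (le_of_lt hx) u, W, Complex.real_smul, smul_eq_mul]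
  push_cast
  ring

lemma integrand_L2_eq {u x : ℝ} (hx : x ∈ Ioi (0:ℝ)) :
    (x:ℂ) ^ ((u:ℂ) + 1 - 1) • (Real.log x • L1 x)
      = ((x ^ u * (Real.log x ^ 2 * w x) : ℝ) : ℂ) := by
  have h1 : ((u:ℂ) + 1 - 1) = (u:ℂ) := by ring
  rw [h1, ← Complex.ofReal_cpow (le_of_lt hx) u, L1, W, Complex.real_smul, Complex.real_smul,
    smul_eq_mul]
  push_cast
  ring

lemma mellin_W_eq (u : ℝ) : mellin W ((u:ℂ) + 1) = ((H0 u : ℝ) : ℂ) := by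
  rw [mellin, H0,
    setIntegral_congr_fun measurableSet_Ioi fun x hx => integrand_W_eq hx]
  exact integral_ofReal

lemma mellin_L1_eq (u : ℝ) :
    mellin (fun x => Real.log x • W x) ((u:ℂ) + 1) = ((H1 u : ℝ) : ℂ) := by
  rw [mellin, H1,
    setIntegral_congr_fun measurableSet_Ioi fun x hx => integrand_L1_eq hx]
  exact integral_ofReal

lemma mellin_L2_eq (u : ℝ) :
    mellin (fun x => Real.log x • L1 x) ((u:ℂ) + 1) = ((H2 u : ℝ) : ℂ) := by
  rw [mellin, H2,
    setIntegral_congr_fun measurableSet_Ioi fun x hx => integrand_L2_eq hx]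
  exact integral_ofReal

lemma re_eq {t : ℝ} : ((t:ℂ) + 1).re = t + 1 := by
  simp

lemma mellin_deriv1 {t : ℝ} (ht : 1 < t) :
    MellinConvergent L1 ((t:ℂ) + 1) ∧
      HasDerivAt (mellin W) ((H1 t : ℝ) : ℂ) ((t:ℂ) + 1) := by
  have h := mellin_hasDerivAt_of_isBigO_rpow (a := t + 2) (b := 2)
    locallyIntegrableOn_W (W_isBigO_rpow_top (t + 2))
    (by rw [re_eq]; linarith) W_isBigO_zero (by rw [re_eq]; linarith)
  refine ⟨h.1, ?_⟩
  have := h.2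
  rwa [mellin_L1_eq] at this

lemma mellin_deriv2 {t : ℝ} (ht : 1 < t) :
    MellinConvergent (fun x => Real.log x • L1 x) ((t:ℂ) + 1) ∧
      HasDerivAt (mellin L1) ((H2 t : ℝ) : ℂ) ((t:ℂ) + 1) := by
  have htop : L1 =O[atTop] fun x : ℝ => x ^ (-(t + 2)) := by
    have := isBigO_rpow_top_log_smul (a := t + 3) (b := t + 2) (by linarith)
      (W_isBigO_rpow_top (t + 3))
    exact this
  have hbot : L1 =O[𝓝[>] (0:ℝ)] fun x : ℝ => x ^ (-((t + 3) / 2)) := by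
    have := isBigO_rpow_zero_log_smul (a := 2) (b := (t + 3) / 2) (by linarith)
      W_isBigO_zero
    exact this
  have h := mellin_hasDerivAt_of_isBigO_rpow (a := t + 2) (b := (t + 3) / 2)
    locallyIntegrableOn_L1 htop (by rw [re_eq]; linarith) hbot (by rw [re_eq]; linarith)
  refine ⟨h.1, ?_⟩
  have := h.2
  rwa [mellin_L2_eq] at this

lemma mellinConvergent_W {t : ℝ} (ht : 1 < t) : MellinConvergent W ((t:ℂ) + 1) :=
  mellinConvergent_of_isBigO_rpow (a := t + 2) (b := 2) locallyIntegrableOn_W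
    (W_isBigO_rpow_top (t + 2)) (by rw [re_eq]; linarith) W_isBigO_zero
    (by rw [re_eq]; linarith)

lemma hasDerivAt_H0 {t : ℝ} (ht : 1 < t) : HasDerivAt H0 (H1 t) t := by
  have h := (mellin_deriv1 ht).2
  have h2 : HasDerivAt (fun z : ℂ => mellin W (z + 1)) ((H1 t : ℝ) : ℂ) (t:ℂ) := by
    have := h.comp (t:ℂ) ((hasDerivAt_id ((t:ℂ))).add_const 1)
    simpa [Function.comp_def] using this
  have h3 : HasDerivAt (fun u : ℝ => (mellin W ((u:ℂ) + 1)).re) (H1 t) t := by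
    simpa using h2.real_of_complex
  have hfun : (fun u : ℝ => (mellin W ((u:ℂ) + 1)).re) = H0 := by
    funext u
    rw [mellin_W_eq u, Complex.ofReal_re]
  rwa [hfun] at h3

lemma hasDerivAt_H1 {t : ℝ} (ht : 1 < t) : HasDerivAt H1 (H2 t) t := by
  have h := (mellin_deriv2 ht).2
  have h2 : HasDerivAt (fun z : ℂ => mellin L1 (z + 1)) ((H2 t : ℝ) : ℂ) (t:ℂ) := by
    have := h.comp (t:ℂ) ((hasDerivAt_id ((t:ℂ))).add_const 1)
    simpa [Function.comp_def] using this
  have h3 : HasDerivAt (fun u : ℝ => (mellin L1 ((u:ℂ) + 1)).re) (H2 t) t := by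
    simpa using h2.real_of_complex
  have hfun : (fun u : ℝ => (mellin L1 ((u:ℂ) + 1)).re) = H1 := by
    funext u
    rw [show mellin L1 ((u:ℂ) + 1) = ((H1 u : ℝ) : ℂ) from mellin_L1_eq u, Complex.ofReal_re]
  rwa [hfun] at h3

/-! ### Real integrability of the three integrands -/

lemma real_integrableOn_of_complex {F : ℝ → ℂ} {g : ℝ → ℝ} (hF : IntegrableOn F (Ioi (0:ℝ)))
    (h : ∀ x ∈ Ioi (0:ℝ), F x = ((g x : ℝ) : ℂ)) : IntegrableOn g (Ioi (0:ℝ)) := by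
  have hre : IntegrableOn (fun x => (F x).re) (Ioi (0:ℝ)) := hF.re
  refine hre.congr ?_
  filter_upwards [ae_restrict_mem measurableSet_Ioi] with x hx
  rw [h x hx, Complex.ofReal_re]

lemma I0 {t : ℝ} (ht : 1 < t) : IntegrableOn (fun x => x ^ t * w x) (Ioi (0:ℝ)) :=
  real_integrableOn_of_complex (mellinConvergent_W ht) fun x hx => integrand_W_eq hx

lemma I1 {t : ℝ} (ht : 1 < t) :
    IntegrableOn (fun x => x ^ t * (Real.log x * w x)) (Ioi (0:ℝ)) :=
  real_integrableOn_of_complex ((mellin_deriv1 ht).1) fun x hx => integrand_L1_eq hx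

lemma I2 {t : ℝ} (ht : 1 < t) :
    IntegrableOn (fun x => x ^ t * (Real.log x ^ 2 * w x)) (Ioi (0:ℝ)) :=
  real_integrableOn_of_complex ((mellin_deriv2 ht).1) fun x hx => integrand_L2_eq hx

/-! ### Identification of `H0` with `ζ(t) Γ(t+1)` -/

lemma summable_rpow {t : ℝ} (ht : 1 < t) : Summable (fun n : ℕ => (n : ℝ) ^ (-t)) := by
  have h := Real.summable_one_div_nat_rpow.mpr ht
  refine h.congr fun n => ?_
  rw [Real.rpow_neg (Nat.cast_nonneg n), one_div]

lemma zeta_eq_tsum_rpow (t : ℝ) : zeta t = ∑' n : ℕ, (n : ℝ) ^ (-t) := by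
  refine tsum_congr fun n => ?_
  rw [Real.rpow_neg (Nat.cast_nonneg n), one_div]

lemma zeta_pos {t : ℝ} (ht : 1 < t) : 0 < zeta t := by
  rw [zeta_eq_tsum_rpow]
  refine Summable.tsum_pos (summable_rpow ht) (fun n => Real.rpow_nonneg (Nat.cast_nonneg n) _) 1 ?_
  norm_num

lemma integrable_term {t : ℝ} (ht : 0 < t) (n : ℕ) :
    IntegrableOn (fun x => x ^ t * ((n : ℝ) * Real.exp (-(n * x)))) (Ioi (0:ℝ)) := by
  rcases Nat.eq_zero_or_pos n with rfl | hn
  · simpa using (integrable_zero ℝ ℝ (volume.restrict (Ioi (0:ℝ))))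
  · have hb : (0:ℝ) < n := by exact_mod_cast hn
    have hint := integrableOn_rpow_mul_exp_neg_mul_rpow (s := t) (p := 1) (b := n)
      (by linarith) zero_lt_one hb
    have h2 := hint.const_mul (n : ℝ)
    refine h2.congr ?_
    filter_upwards with x
    rw [Real.rpow_one]
    ring

lemma integral_term {t : ℝ} (ht : 1 < t) (n : ℕ) :
    ∫ x in Ioi (0:ℝ), x ^ t * ((n : ℝ) * Real.exp (-(n * x)))
      = Real.Gamma (t + 1) * (n : ℝ) ^ (-t) := by
  rcases Nat.eq_zero_or_pos n with rfl | hn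
  · simp [Real.zero_rpow (show -t ≠ 0 by intro h; rw [neg_eq_zero] at h; linarith)]
  · have hb : (0:ℝ) < n := by exact_mod_cast hn
    have key : ∫ x in Ioi (0:ℝ), x ^ ((t + 1) - 1) * Real.exp (-((n : ℝ) * x))
        = (1 / (n : ℝ)) ^ (t + 1) * Real.Gamma (t + 1) :=
      Real.integral_rpow_mul_exp_neg_mul_Ioi (by linarith) hb
    have step : ∫ x in Ioi (0:ℝ), x ^ t * ((n : ℝ) * Real.exp (-(n * x)))
        = (n : ℝ) * ∫ x in Ioi (0:ℝ), x ^ ((t + 1) - 1) * Real.exp (-((n : ℝ) * x)) := by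
      rw [← integral_const_mul]
      refine setIntegral_congr_fun measurableSet_Ioi fun x hx => ?_
      rw [add_sub_cancel_right]
      ring
    rw [step, key]
    have hpow : (1 / (n : ℝ)) ^ (t + 1) = (n : ℝ) ^ (-(t + 1)) := by
      rw [one_div, ← Real.rpow_neg_one, ← Real.rpow_mul hb.le]
      norm_num
    have h2 : (n : ℝ) * (n : ℝ) ^ (-(t + 1)) = (n : ℝ) ^ (-t) := by
      have h3 := Real.rpow_add hb 1 (-(t + 1))
      rw [Real.rpow_one] at h3
      rw [← h3]
      congr 1
      ring
    rw [hpow, ← h2]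
    ring

lemma H0_eq {t : ℝ} (ht : 1 < t) : H0 t = zeta t * Real.Gamma (t + 1) := by
  have ht0 : (0:ℝ) < t := by linarith
  set f : ℕ → ℝ → ℝ := fun n x => x ^ t * ((n : ℝ) * Real.exp (-(n * x))) with hf
  have hnorm : ∀ n, ∫ x in Ioi (0:ℝ), ‖f n x‖ = Real.Gamma (t + 1) * (n : ℝ) ^ (-t) := by
    intro n
    rw [← integral_term ht n]
    refine setIntegral_congr_fun measurableSet_Ioi fun x hx => ?_
    rw [Real.norm_eq_abs, _root_.abs_of_nonneg]
    exact mul_nonneg (Real.rpow_nonneg (le_of_lt hx) t)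
      (mul_nonneg (Nat.cast_nonneg n) (Real.exp_pos _).le)
  have hsum : Summable (fun n : ℕ => Real.Gamma (t + 1) * (n : ℝ) ^ (-t)) :=
    (summable_rpow ht).mul_left _
  have hcond : ∑' n : ℕ, ∫⁻ x, ‖f n x‖₊ ∂(volume.restrict (Ioi (0:ℝ))) ≠ ∞ := by
    have heach : ∀ n : ℕ, ∫⁻ x, ‖f n x‖₊ ∂(volume.restrict (Ioi (0:ℝ)))
        = ENNReal.ofReal (Real.Gamma (t + 1) * (n : ℝ) ^ (-t)) := by
      intro n
      exact (ofReal_integral_norm_eq_lintegral_enorm (integrable_term ht0 n)).symm.trans (by rw [hnorm n])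
    rw [tsum_congr heach, ← ENNReal.ofReal_tsum_of_nonneg
      (fun n => mul_nonneg (Real.Gamma_pos_of_pos (by linarith)).le
        (Real.rpow_nonneg (Nat.cast_nonneg n) _)) hsum]
    exact ENNReal.ofReal_ne_top
  have hswap := integral_tsum
    (fun n => (integrable_term ht0 n).aestronglyMeasurable) hcond
  have hleft : H0 t = ∫ x in Ioi (0:ℝ), ∑' n : ℕ, f n x := by
    rw [H0]
    refine setIntegral_congr_fun measurableSet_Ioi fun x hx => ?_
    rw [w_eq_tsum hx, ← tsum_mul_left]
  rw [hleft, hswap, tsum_congr (fun n => integral_term ht n), tsum_mul_left,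
    zeta_eq_tsum_rpow]
  ring

lemma H0_pos {t : ℝ} (ht : 1 < t) : 0 < H0 t := by
  rw [H0_eq ht]
  exact mul_pos (zeta_pos ht) (Real.Gamma_pos_of_pos (by linarith))

/-! ### Positivity of the second derivative -/

lemma key_pos {t : ℝ} (ht : 1 < t) : 0 < H2 t * H0 t - H1 t * H1 t := by
  have h0 := H0_pos ht
  set m : ℝ := H1 t / H0 t with hm
  set q : ℝ → ℝ := fun x => (Real.log x - m) ^ 2 * (x ^ t * w x) with hq
  have hq_expand : ∀ x : ℝ, q x
      = x ^ t * (Real.log x ^ 2 * w x) - (2 * m) * (x ^ t * (Real.log x * w x))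
        + m ^ 2 * (x ^ t * w x) := by
    intro x; rw [hq]; ring
  have hA : Integrable (fun x => x ^ t * (Real.log x ^ 2 * w x)
      - 2 * m * (x ^ t * (Real.log x * w x))) (volume.restrict (Ioi (0:ℝ))) :=
    ((I2 ht).sub ((I1 ht).const_mul (2 * m)) : _)
  have hB : Integrable (fun x => m ^ 2 * (x ^ t * w x)) (volume.restrict (Ioi (0:ℝ))) :=
    (I0 ht).const_mul (m ^ 2)
  have hInt : IntegrableOn q (Ioi (0:ℝ)) := by
    refine (hA.add hB).congr ?_
    filter_upwards with x
    exact (hq_expand x).symm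
  have hval : ∫ x in Ioi (0:ℝ), q x = H2 t - 2 * m * H1 t + m ^ 2 * H0 t := by
    calc ∫ x in Ioi (0:ℝ), q x
        = ∫ x in Ioi (0:ℝ), (x ^ t * (Real.log x ^ 2 * w x)
            - 2 * m * (x ^ t * (Real.log x * w x)) + m ^ 2 * (x ^ t * w x)) := by
          exact setIntegral_congr_fun measurableSet_Ioi fun x _ => hq_expand x
      _ = H2 t - 2 * m * H1 t + m ^ 2 * H0 t := by
          rw [integral_add hA hB, integral_sub (I2 ht) ((I1 ht).const_mul (2 * m)),
            integral_const_mul, integral_const_mul, H0, H1, H2]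
  have hpos : 0 < ∫ x in Ioi (0:ℝ), q x := by
    have hnn : 0 ≤ᵐ[volume.restrict (Ioi (0:ℝ))] q := by
      filter_upwards [ae_restrict_mem measurableSet_Ioi] with x hx
      have : (0:ℝ) < x := hx
      have := w_pos this
      positivity
    rw [setIntegral_pos_iff_support_of_nonneg_ae hnn hInt]
    have hsub : Ioi (0:ℝ) \ {Real.exp m} ⊆ Function.support q ∩ Ioi (0:ℝ) := by
      rintro x ⟨hx, hxm⟩
      refine ⟨?_, hx⟩
      have hx0 : (0:ℝ) < x := hx
      have hwx := w_pos hx0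
      have hlog : Real.log x ≠ m := by
        intro h
        apply hxm
        rw [← h, Real.exp_log hx0]
        exact Set.mem_singleton x
      have hsq : 0 < (Real.log x - m) ^ 2 :=
        (sq_nonneg _).lt_of_ne (Ne.symm (pow_ne_zero 2 (sub_ne_zero.mpr hlog)))
      exact Function.mem_support.mpr
        (ne_of_gt (mul_pos hsq (mul_pos (Real.rpow_pos_of_pos hx0 t) hwx)))
    calc (0:ℝ≥0∞) < volume (Ioi (0:ℝ) \ {Real.exp m}) := by
          rw [measure_diff_null (measure_singleton _), Real.volume_Ioi]
          exact ENNReal.zero_lt_top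
      _ ≤ volume (Function.support q ∩ Ioi (0:ℝ)) := measure_mono hsub
  have halg : H0 t * (H2 t - 2 * m * H1 t + m ^ 2 * H0 t) = H2 t * H0 t - H1 t * H1 t := by
    rw [hm]
    field_simp
    ring
  have := mul_pos h0 (hval ▸ hpos)
  linarith [halg ▸ this]

end ZetaGammaAux

/-- The function `y ↦ log(2 ζ(y) Γ(y+1))` has strictly positive second
derivative for every real `y > 1`. -/
theorem log_two_zeta_mul_Gamma_deriv2_pos (y : ℝ) (hy : 1 < y) :
    0 < deriv (deriv (fun t : ℝ => Real.log (2 * zeta t * Real.Gamma (t + 1)))) y := by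
  have hmem : Ioi (1:ℝ) ∈ 𝓝 y := isOpen_Ioi.mem_nhds hy
  have hE : (fun t : ℝ => Real.log (2 * zeta t * Real.Gamma (t + 1)))
      =ᶠ[𝓝 y] fun t => Real.log (2 * ZetaGammaAux.H0 t) := by
    filter_upwards [hmem] with t ht
    rw [ZetaGammaAux.H0_eq ht, ← mul_assoc]
  have hd1 : ∀ t ∈ Ioi (1:ℝ), HasDerivAt (fun u => Real.log (2 * ZetaGammaAux.H0 u))
      (ZetaGammaAux.H1 t / ZetaGammaAux.H0 t) t := by
    intro t ht
    have h0 := ZetaGammaAux.H0_pos ht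
    have h := ((ZetaGammaAux.hasDerivAt_H0 ht).const_mul 2).log (mul_pos two_pos h0).ne'
    convert h using 1
    field_simp
  have hE2 : deriv (fun t : ℝ => Real.log (2 * zeta t * Real.Gamma (t + 1)))
      =ᶠ[𝓝 y] fun t => ZetaGammaAux.H1 t / ZetaGammaAux.H0 t := by
    filter_upwards [hE.deriv, hmem] with t h1 h2
    rw [h1, (hd1 t h2).deriv]
  rw [hE2.deriv_eq]
  have hdiv : HasDerivAt (fun t => ZetaGammaAux.H1 t / ZetaGammaAux.H0 t)
      ((ZetaGammaAux.H2 y * ZetaGammaAux.H0 y - ZetaGammaAux.H1 y * ZetaGammaAux.H1 y)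
        / ZetaGammaAux.H0 y ^ 2) y :=
    (ZetaGammaAux.hasDerivAt_H1 hy).div (ZetaGammaAux.hasDerivAt_H0 hy)
      (ZetaGammaAux.H0_pos hy).ne'
  rw [hdiv.deriv]
  exact div_pos (ZetaGammaAux.key_pos hy) (pow_pos (ZetaGammaAux.H0_pos hy) 2)
end

section
/- The function x ↦ log θ(x) is strictly increasing for x ≥ 6, where θ(x) = (2 ζ(x) Γ(x+1))^{1/x}; that is, for all real numbers 6 ≤ x < y one has θ(x) < θ(y). -/
/-- The function `θ(x) = (2 ζ(x) Γ(x+1))^{1/x}`. -/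
noncomputable def theta (x : ℝ) : ℝ := (2 * zeta x * Real.Gamma (x + 1)) ^ (1 / x)

open Real Nat

lemma telescope_hasSum : HasSum (fun n : ℕ => 1/((n:ℝ)+1) - 1/((n:ℝ)+2)) 1 := by
  rw [hasSum_iff_tendsto_nat_of_nonneg]
  · have h : ∀ n : ℕ, ∑ i ∈ Finset.range n, (1/((i:ℝ)+1) - 1/((i:ℝ)+2)) = 1 - 1/((n:ℝ)+1) := by
      intro n
      have := Finset.sum_range_sub' (f := fun i : ℕ => 1/((i:ℝ)+1)) n
      simp only [Nat.cast_add, Nat.cast_one, Nat.cast_zero] at this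
      rw [show (1:ℝ) - 1/((n:ℝ)+1) = 1/((0:ℝ)+1) - 1/((n:ℝ)+1) by norm_num, ← this]
      apply Finset.sum_congr rfl
      intro i _; ring_nf
    simp only [h]
    have : Filter.Tendsto (fun n : ℕ => 1/((n:ℝ)+1)) Filter.atTop (nhds 0) :=
      tendsto_one_div_add_atTop_nhds_zero_nat
    simpa using (tendsto_const_nhds.sub this)
  · intro n
    have h1 : (1:ℝ)/((n:ℝ)+2) ≤ 1/((n:ℝ)+1) := by
      apply one_div_le_one_div_of_le
      · positivity
      · linarith
    linarith

lemma zeta_summable {x : ℝ} (hx : 1 < x) : Summable (fun n : ℕ => 1 / (n:ℝ)^x) :=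
  summable_one_div_nat_rpow.2 hx

lemma one_le_zeta {x : ℝ} (hx : 1 < x) : 1 ≤ zeta x := by
  have h := Summable.le_tsum (zeta_summable hx) 1 (fun i _ => by positivity)
  simpa [zeta] using h

lemma zeta_antitone {x y : ℝ} (hx : 1 < x) (hxy : x ≤ y) : zeta y ≤ zeta x := by
  apply Summable.tsum_le_tsum _ (zeta_summable (lt_of_lt_of_le hx hxy)) (zeta_summable hx)
  intro n
  rcases Nat.eq_zero_or_pos n with h | h
  · simp [h, Real.zero_rpow (by linarith : x ≠ 0), Real.zero_rpow (by linarith : y ≠ 0)]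
  · have h1 : (1:ℝ) ≤ (n:ℝ) := by exact_mod_cast h
    have := Real.rpow_le_rpow_of_exponent_le h1 hxy
    have hp : (0:ℝ) < (n:ℝ)^x := by positivity
    exact one_div_le_one_div_of_le hp this

lemma eight_mul_le {m : ℝ} (hm : 2 ≤ m) : 8*(((m-1)*(m-1))*m) ≤ m^(6:ℝ) := by
  rw [show (6:ℝ) = ((6:ℕ):ℝ) by norm_num, Real.rpow_natCast]
  have h3 : (8:ℝ) ≤ m^3 := by
    have h0 : (0:ℝ) ≤ (m-2)*(m^2+2*m+4) := by
      apply mul_nonneg (by linarith)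
      nlinarith [sq_nonneg m]
    nlinarith [h0]
  have h1 : (m-1)*(m-1) ≤ m^2 := by nlinarith
  calc 8*(((m-1)*(m-1))*m) ≤ 8*(m^2*m) := by nlinarith
    _ = 8*m^3 := by ring
    _ ≤ m^3*m^3 := by nlinarith [pow_pos (by linarith : (0:ℝ) < m) 3]
    _ = m^6 := by ring

lemma tail_term_le (n : ℕ) : 1/((n:ℝ)+2)^(6:ℝ) ≤ (1/8) * (1/((n:ℝ)+1) - 1/((n:ℝ)+2)) := by
  have h2 : (2:ℝ) ≤ (n:ℝ)+2 := by
    have : (0:ℝ) ≤ (n:ℝ) := Nat.cast_nonneg n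
    linarith
  calc 1/((n:ℝ)+2)^(6:ℝ) ≤ 1/(8*(((n:ℝ)+1)*((n:ℝ)+2))) := by
        apply one_div_le_one_div_of_le
        · positivity
        · have := eight_mul_le h2
          nlinarith [this, sq_nonneg ((n:ℝ)+1)]
    _ = (1/8) * (1/((n:ℝ)+1) - 1/((n:ℝ)+2)) := by
        have ha : ((n:ℝ)+1) ≠ 0 := by positivity
        have hb : ((n:ℝ)+2) ≠ 0 := by positivity
        field_simp
        ring

lemma zeta_six_le : zeta 6 ≤ 9/8 := by
  have hs : Summable (fun n : ℕ => 1 / (n:ℝ)^(6:ℝ)) := zeta_summable (by norm_num)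
  rw [zeta, ← Summable.sum_add_tsum_nat_add 2 hs]
  have h0 : ∑ i ∈ Finset.range 2, 1 / (i:ℝ)^(6:ℝ) = 1 := by
    norm_num [Finset.sum_range_succ, Real.zero_rpow (by norm_num : (6:ℝ) ≠ 0)]
  rw [h0]
  have hb : ∑' n : ℕ, 1 / (((n+2:ℕ)):ℝ)^(6:ℝ) ≤ 1/8 := by
    have hsum2 : Summable (fun n : ℕ => 1 / (((n+2:ℕ)):ℝ)^(6:ℝ)) := (summable_nat_add_iff 2).2 hs
    have hle : ∀ n : ℕ, 1 / (((n+2:ℕ)):ℝ)^(6:ℝ) ≤ (1/8) * (1/((n:ℝ)+1) - 1/((n:ℝ)+2)) := by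
      intro n
      have := tail_term_le n
      have hcast : (((n+2:ℕ)):ℝ) = (n:ℝ)+2 := by push_cast; ring
      rw [hcast]
      exact this
    have := Summable.tsum_le_tsum hle hsum2 (telescope_hasSum.summable.mul_left _)
    calc ∑' n : ℕ, 1 / (((n+2:ℕ)):ℝ)^(6:ℝ) ≤ ∑' n : ℕ, (1/8) * (1/((n:ℝ)+1) - 1/((n:ℝ)+2)) := this
      _ = 1/8 := by rw [tsum_mul_left, telescope_hasSum.tsum_eq]; norm_num
  linarith

lemma diff_term_le {x y : ℝ} (hx : 6 ≤ x) (hxy : x ≤ y) (n : ℕ) :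
    1/((n:ℝ)+2)^x - 1/((n:ℝ)+2)^y ≤ (y-x) * ((1/8) * (1/((n:ℝ)+1) - 1/((n:ℝ)+2))) := by
  set m : ℝ := (n:ℝ)+2 with hm_def
  have h0n : (0:ℝ) ≤ (n:ℝ) := Nat.cast_nonneg n
  have hm2 : (2:ℝ) ≤ m := by rw [hm_def]; linarith
  have hm0 : (0:ℝ) < m := by linarith
  have hm1 : (1:ℝ) ≤ m := by linarith
  -- step 1 : rewrite difference
  have hstep1 : 1/m^x - 1/m^y = (1/m^x) * (1 - m^(x-y)) := by
    rw [Real.rpow_sub hm0]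
    have hx0 : m^x ≠ 0 := by positivity
    have hy0 : m^y ≠ 0 := by positivity
    field_simp
  -- step 2 : 1 - m^(x-y) ≤ (y-x) * log m
  have hstep2 : 1 - m^(x-y) ≤ (y-x) * Real.log m := by
    have h := Real.add_one_le_exp ((x-y) * Real.log m)
    rw [Real.rpow_def_of_pos hm0, mul_comm (Real.log m) (x-y)]
    linarith [h]
  have hstep3 : 0 ≤ 1 - m^(x-y) := by
    have : m^(x-y) ≤ 1 := Real.rpow_le_one_of_one_le_of_nonpos hm1 (by linarith)
    linarith
  have hstep4 : 1/m^x ≤ 1/m^(6:ℝ) := by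
    apply one_div_le_one_div_of_le
    · positivity
    · exact Real.rpow_le_rpow_of_exponent_le hm1 hx
  have hlogm : Real.log m ≤ m - 1 := by
    have := Real.log_le_sub_one_of_pos hm0
    linarith
  have hlogm0 : 0 ≤ Real.log m := Real.log_nonneg hm1
  have hyx : 0 ≤ y - x := by linarith
  calc 1/m^x - 1/m^y = (1/m^x) * (1 - m^(x-y)) := hstep1
    _ ≤ (1/m^(6:ℝ)) * ((y-x) * Real.log m) := by
        apply mul_le_mul hstep4 hstep2 hstep3 (by positivity)
    _ ≤ (1/m^(6:ℝ)) * ((y-x) * (m-1)) := by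
        apply mul_le_mul_of_nonneg_left _ (by positivity)
        exact mul_le_mul_of_nonneg_left hlogm hyx
    _ = (y-x) * ((m-1)/m^(6:ℝ)) := by ring
    _ ≤ (y-x) * ((1/8) * (1/((n:ℝ)+1) - 1/((n:ℝ)+2))) := by
        apply mul_le_mul_of_nonneg_left _ hyx
        have heq : (1:ℝ)/8 * (1/((n:ℝ)+1) - 1/((n:ℝ)+2)) = 1/(8*(((n:ℝ)+1)*((n:ℝ)+2))) := by
          have ha : ((n:ℝ)+1) ≠ 0 := by positivity
          have hb : ((n:ℝ)+2) ≠ 0 := by positivity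
          field_simp
          ring
        rw [heq]
        rw [div_le_div_iff₀ (by positivity) (by positivity)]
        have h8 := eight_mul_le hm2
        rw [show ((n:ℝ)+1) = m-1 by rw [hm_def]; ring,
          show ((n:ℝ)+2) = m by rw [hm_def]]
        linarith [h8]
  -- done

lemma zeta_sub_le {x y : ℝ} (hx : 6 ≤ x) (hxy : x ≤ y) : zeta x - zeta y ≤ (y-x)/8 := by
  have hx1 : (1:ℝ) < x := by linarith
  have hy1 : (1:ℝ) < y := by linarith
  have hfx := zeta_summable hx1
  have hfy := zeta_summable hy1
  have hd : Summable (fun n : ℕ => 1/(n:ℝ)^x - 1/(n:ℝ)^y) := hfx.sub hfy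
  have heq : zeta x - zeta y = ∑' n : ℕ, (1/(n:ℝ)^x - 1/(n:ℝ)^y) := (Summable.tsum_sub hfx hfy).symm
  rw [heq, ← Summable.sum_add_tsum_nat_add 2 hd]
  have h0 : ∑ i ∈ Finset.range 2, (1/(i:ℝ)^x - 1/(i:ℝ)^y) = 0 := by
    norm_num [Finset.sum_range_succ, Real.zero_rpow (by linarith : x ≠ 0),
      Real.zero_rpow (by linarith : y ≠ 0)]
  rw [h0]
  have hb : ∑' n : ℕ, (1/(((n+2:ℕ)):ℝ)^x - 1/(((n+2:ℕ)):ℝ)^y) ≤ (y-x)/8 := by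
    have hsum2 : Summable (fun n : ℕ => 1/(((n+2:ℕ)):ℝ)^x - 1/(((n+2:ℕ)):ℝ)^y) :=
      (summable_nat_add_iff (f := fun n : ℕ => 1/(n:ℝ)^x - 1/(n:ℝ)^y) 2).2 hd
    have hle : ∀ n : ℕ, 1/(((n+2:ℕ)):ℝ)^x - 1/(((n+2:ℕ)):ℝ)^y
        ≤ (y-x) * ((1/8) * (1/((n:ℝ)+1) - 1/((n:ℝ)+2))) := by
      intro n
      have := diff_term_le hx hxy n
      have hcast : (((n+2:ℕ)):ℝ) = (n:ℝ)+2 := by push_cast; ring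
      rw [hcast]
      exact this
    have hsb : Summable (fun n : ℕ => (y-x) * ((1/8) * (1/((n:ℝ)+1) - 1/((n:ℝ)+2)))) :=
      ((telescope_hasSum.summable.mul_left _).mul_left _)
    have := Summable.tsum_le_tsum hle hsum2 hsb
    calc ∑' n : ℕ, (1/(((n+2:ℕ)):ℝ)^x - 1/(((n+2:ℕ)):ℝ)^y)
        ≤ ∑' n : ℕ, (y-x) * ((1/8) * (1/((n:ℝ)+1) - 1/((n:ℝ)+2))) := this
      _ = (y-x)/8 := by
          rw [tsum_mul_left, tsum_mul_left, telescope_hasSum.tsum_eq]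
          ring
  linarith

lemma log_zeta_nonneg {x : ℝ} (hx : 1 < x) : 0 ≤ Real.log (zeta x) :=
  Real.log_nonneg (one_le_zeta hx)

lemma log_zeta_le {x : ℝ} (hx : 6 ≤ x) : Real.log (zeta x) ≤ 1/8 := by
  have hx1 : (1:ℝ) < x := by linarith
  have h1 : zeta x ≤ 9/8 := le_trans (zeta_antitone (by norm_num) hx) zeta_six_le
  have h2 : 0 < zeta x := lt_of_lt_of_le one_pos (one_le_zeta hx1)
  have := Real.log_le_sub_one_of_pos h2
  linarith

lemma log_zeta_sub_le {x y : ℝ} (hx : 6 ≤ x) (hxy : x ≤ y) :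
    Real.log (zeta x) - Real.log (zeta y) ≤ (y-x)/8 := by
  have hx1 : (1:ℝ) < x := by linarith
  have hy1 : (1:ℝ) < y := by linarith
  have hzy1 : 1 ≤ zeta y := one_le_zeta hy1
  have hzy : (0:ℝ) < zeta y := by linarith
  have hzyx : zeta y ≤ zeta x := zeta_antitone hx1 hxy
  have hzx : (0:ℝ) < zeta x := by linarith
  have hlog := Real.log_le_sub_one_of_pos (div_pos hzx hzy)
  rw [Real.log_div (ne_of_gt hzx) (ne_of_gt hzy)] at hlog
  have hdiv : zeta x / zeta y - 1 = (zeta x - zeta y) / zeta y := by field_simp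
  have hle : (zeta x - zeta y) / zeta y ≤ zeta x - zeta y := by
    apply div_le_self (by linarith) hzy1
  have := zeta_sub_le hx hxy
  linarith

lemma fact_le_pow (n : ℕ) : (n ! : ℝ) ≤ (((n:ℝ)+1)/2)^n := by
  induction n with
  | zero => norm_num
  | succ n ih =>
    have h0n : (0:ℝ) ≤ (n:ℝ) := Nat.cast_nonneg n
    have hpos : (0:ℝ) < (n:ℝ)+1 := by linarith
    set a : ℝ := 1/((n:ℝ)+1) with ha_def
    have hapos : 0 < a := by rw [ha_def]; positivity
    have ha : ((n:ℝ)+2)/2 = (((n:ℝ)+1)/2) * (1 + a) := by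
      rw [ha_def]; field_simp; ring
    have hb : 1 + (n:ℕ) * a ≤ (1 + a)^(n:ℕ) := one_add_mul_le_pow (by linarith) n
    have hc : ((n:ℝ)+1) ≤ (1 + (n:ℝ)*a) * (((n:ℝ)+2)/2) := by
      have hdiff : (1 + (n:ℝ)*a) * (((n:ℝ)+2)/2) - ((n:ℝ)+1) = (n:ℝ) / (2*((n:ℝ)+1)) := by
        rw [ha_def]; field_simp; ring
      have : (0:ℝ) ≤ (n:ℝ) / (2*((n:ℝ)+1)) := by positivity
      linarith
    have hpow_nonneg : (0:ℝ) ≤ (((n:ℝ)+1)/2)^n := by positivity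
    have hcast : ((n+1)! : ℝ) = ((n:ℝ)+1) * (n ! : ℝ) := by
      push_cast [Nat.factorial_succ]; ring
    have hgoal : ((n:ℝ)+1) * (((n:ℝ)+1)/2)^n ≤ (((n:ℝ)+2)/2)^(n+1) := by
      calc ((n:ℝ)+1) * (((n:ℝ)+1)/2)^n
          ≤ ((1 + (n:ℝ)*a) * (((n:ℝ)+2)/2)) * (((n:ℝ)+1)/2)^n :=
            mul_le_mul_of_nonneg_right hc hpow_nonneg
        _ ≤ ((1 + a)^n * (((n:ℝ)+2)/2)) * (((n:ℝ)+1)/2)^n := by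
            apply mul_le_mul_of_nonneg_right _ hpow_nonneg
            apply mul_le_mul_of_nonneg_right _ (by linarith)
            exact_mod_cast hb
        _ = (((n:ℝ)+2)/2)^(n+1) := by
            rw [pow_succ, ha, mul_pow]; ring
    calc ((n+1)! : ℝ) = ((n:ℝ)+1) * (n ! : ℝ) := hcast
      _ ≤ ((n:ℝ)+1) * (((n:ℝ)+1)/2)^n := mul_le_mul_of_nonneg_left ih (by linarith)
      _ ≤ (((n:ℝ)+2)/2)^(n+1) := hgoal
      _ = ((((n+1:ℕ):ℝ)+1)/2)^(n+1) := by push_cast; ring_nf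

lemma H0_slope {x y : ℝ} (hx : 6 ≤ x) (hxy : x < y) :
    Real.log (Real.Gamma (x+1)) + (y-x) * Real.log x ≤ Real.log (Real.Gamma (y+1)) := by
  have hx0 : (0:ℝ) < x := by linarith
  have h := Real.convexOn_log_Gamma.slope_mono_adjacent
    (Set.mem_Ioi.2 hx0) (Set.mem_Ioi.2 (by linarith : (0:ℝ) < y+1))
    (by linarith : x < x+1) (by linarith : x+1 < y+1)
  simp only [Function.comp_apply] at h
  rw [show x+1-x = (1:ℝ) by ring, show y+1-(x+1) = y-x by ring, div_one] at h
  rw [le_div_iff₀ (by linarith : (0:ℝ) < y-x)] at h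
  have hg : 0 < Real.Gamma x := Real.Gamma_pos_of_pos hx0
  have h2 : Real.log (Real.Gamma (x+1)) - Real.log (Real.Gamma x) = Real.log x := by
    rw [Real.Gamma_add_one (ne_of_gt hx0), Real.log_mul (ne_of_gt hx0) (ne_of_gt hg)]
    ring
  rw [h2] at h
  linarith

lemma xlogx_lower {x : ℝ} (hx : 6 ≤ x) :
    Real.log 2 + 1/2 + x/8 ≤ x * Real.log x - Real.log (Real.Gamma (x+1)) := by
  set n : ℕ := ⌊x⌋₊ with hn_def
  have hx0 : (0:ℝ) < x := by linarith
  have hn6 : 6 ≤ n := Nat.le_floor (by exact_mod_cast hx)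
  have hnx : (n:ℝ) ≤ x := Nat.floor_le (le_of_lt hx0)
  have hxn : x < (n:ℝ)+1 := Nat.lt_floor_add_one x
  have hn6' : (6:ℝ) ≤ (n:ℝ) := by exact_mod_cast hn6
  have hn0 : (0:ℝ) < (n:ℝ) := by linarith
  set t : ℝ := x - n with ht_def
  have ht0 : 0 ≤ t := by rw [ht_def]; linarith
  have ht1 : t ≤ 1 := by rw [ht_def]; linarith
  -- convexity of log Gamma between n+1 and n+2
  have hc := Real.convexOn_log_Gamma.2
    (Set.mem_Ioi.2 (by linarith : (0:ℝ) < (n:ℝ)+1))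
    (Set.mem_Ioi.2 (by linarith : (0:ℝ) < (n:ℝ)+2))
    (by linarith : (0:ℝ) ≤ 1-t) ht0 (by ring)
  simp only [smul_eq_mul, Function.comp_apply] at hc
  rw [show (1-t)*((n:ℝ)+1) + t*((n:ℝ)+2) = x + 1 by rw [ht_def]; ring] at hc
  have hg1 : Real.Gamma ((n:ℝ)+1) = (n ! : ℝ) := Real.Gamma_nat_eq_factorial n
  have hg2 : Real.Gamma ((n:ℝ)+2) = ((n+1)! : ℝ) := by
    rw [show ((n:ℝ)+2) = (((n+1:ℕ)):ℝ)+1 by push_cast; ring]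
    exact_mod_cast Real.Gamma_nat_eq_factorial (n+1)
  rw [hg1, hg2] at hc
  have hfpos : (0:ℝ) < (n ! : ℝ) := by exact_mod_cast n.factorial_pos
  have hfact : Real.log (((n+1)! : ℕ) : ℝ) = Real.log ((n:ℝ)+1) + Real.log ((n ! : ℕ) : ℝ) := by
    rw [show (((n+1)! : ℕ):ℝ) = ((n:ℝ)+1) * ((n ! : ℕ) : ℝ) by push_cast [Nat.factorial_succ]; ring,
      Real.log_mul (by linarith) (ne_of_gt hfpos)]
  rw [hfact] at hc
  -- hc : log Γ(x+1) ≤ (1-t) * log n! + t * (log(n+1) + log n!)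
  have hlf : Real.log ((n ! : ℕ) : ℝ) ≤ (n:ℝ) * (Real.log ((n:ℝ)+1) - Real.log 2) := by
    have h1 : ((n ! : ℕ) : ℝ) ≤ (((n:ℝ)+1)/2)^n := fact_le_pow n
    have h2 := Real.log_le_log hfpos h1
    rw [Real.log_pow, Real.log_div (by linarith) (by norm_num)] at h2
    exact_mod_cast h2
  have hlx : x * Real.log (n:ℝ) ≤ x * Real.log x :=
    mul_le_mul_of_nonneg_left (Real.log_le_log hn0 hnx) (le_of_lt hx0)
  have hln0 : 0 ≤ Real.log ((n:ℝ)+1) - Real.log (n:ℝ) := by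
    have := Real.log_le_log hn0 (by linarith : (n:ℝ) ≤ (n:ℝ)+1)
    linarith
  have hln : Real.log ((n:ℝ)+1) - Real.log (n:ℝ) ≤ 1/(n:ℝ) := by
    have h1 := Real.log_le_sub_one_of_pos (show (0:ℝ) < ((n:ℝ)+1)/(n:ℝ) by positivity)
    rw [Real.log_div (by linarith) (ne_of_gt hn0)] at h1
    have h2 : ((n:ℝ)+1)/(n:ℝ) - 1 = 1/(n:ℝ) := by field_simp; ring
    linarith
  have hxd : x * (Real.log ((n:ℝ)+1) - Real.log (n:ℝ)) ≤ 7/6 := by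
    calc x * (Real.log ((n:ℝ)+1) - Real.log (n:ℝ))
        ≤ ((n:ℝ)+1) * (Real.log ((n:ℝ)+1) - Real.log (n:ℝ)) :=
          mul_le_mul_of_nonneg_right (le_of_lt hxn) hln0
      _ ≤ ((n:ℝ)+1) * (1/(n:ℝ)) := mul_le_mul_of_nonneg_left hln (by linarith)
      _ ≤ 7/6 := by
          rw [mul_one_div, div_le_iff₀ hn0]; linarith
  have l2 := Real.log_two_gt_d9
  have l2' := Real.log_two_lt_d9
  have key : (5:ℝ) * 0.5681 ≤ ((n:ℝ)-1) * (Real.log 2 - 1/8) := by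
    apply mul_le_mul (by linarith) (by norm_num at l2 ⊢; linarith) (by norm_num) (by linarith)
  have htc : t * Real.log ((n:ℝ)+1) = x * Real.log ((n:ℝ)+1) - (n:ℝ) * Real.log ((n:ℝ)+1) := by
    rw [ht_def]; ring
  linarith [hc, hlf, hlx, hxd, key, htc]

/-- `log θ(x)` is strictly increasing for `x ≥ 6`: for `6 ≤ x < y`,
`θ(x) < θ(y)`. -/
theorem theta_strictMonoOn (x y : ℝ) (hx : 6 ≤ x) (hxy : x < y) :
    theta x < theta y := by
  have hy : (6:ℝ) ≤ y := by linarith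
  have hx0 : (0:ℝ) < x := by linarith
  have hy0 : (0:ℝ) < y := by linarith
  have hzx : (0:ℝ) < zeta x := lt_of_lt_of_le one_pos (one_le_zeta (by linarith))
  have hzy : (0:ℝ) < zeta y := lt_of_lt_of_le one_pos (one_le_zeta (by linarith))
  have hgx : (0:ℝ) < Real.Gamma (x+1) := Real.Gamma_pos_of_pos (by linarith)
  have hgy : (0:ℝ) < Real.Gamma (y+1) := Real.Gamma_pos_of_pos (by linarith)
  have hFx : (0:ℝ) < 2 * zeta x * Real.Gamma (x+1) := by positivity
  have hFy : (0:ℝ) < 2 * zeta y * Real.Gamma (y+1) := by positivity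
  rw [theta, theta, Real.rpow_def_of_pos hFx, Real.rpow_def_of_pos hFy, Real.exp_lt_exp]
  rw [Real.log_mul (by positivity) (ne_of_gt hgx), Real.log_mul two_ne_zero (ne_of_gt hzx)]
  rw [Real.log_mul (by positivity) (ne_of_gt hgy), Real.log_mul two_ne_zero (ne_of_gt hzy)]
  rw [mul_one_div, mul_one_div, div_lt_div_iff₀ hx0 hy0]
  have F1 := H0_slope hx hxy
  have F1x : x*(Real.log (Real.Gamma (x+1)) + (y-x) * Real.log x) ≤ x*Real.log (Real.Gamma (y+1)) :=
    mul_le_mul_of_nonneg_left F1 (le_of_lt hx0)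
  have F2 := log_zeta_sub_le hx (le_of_lt hxy)
  have F2x : x*(Real.log (zeta x) - Real.log (zeta y)) ≤ x*((y-x)/8) :=
    mul_le_mul_of_nonneg_left F2 (le_of_lt hx0)
  have F3 := log_zeta_le hx
  have F3y : (y-x)*Real.log (zeta x) ≤ (y-x)*(1/8) :=
    mul_le_mul_of_nonneg_left F3 (by linarith)
  have F4 := xlogx_lower hx
  have F4y : (y-x)*(Real.log 2 + 1/2 + x/8) ≤ (y-x)*(x * Real.log x - Real.log (Real.Gamma (x+1))) :=
    mul_le_mul_of_nonneg_left F4 (by linarith)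
  have F5 : 0 ≤ Real.log (zeta y) := log_zeta_nonneg (by linarith)
  nlinarith [F1x, F2x, F3y, F4y, F5]
end

section
/- The sequence {|B_{2n}|^{1/n}}_{n≥1} is strictly increasing: for every integer n ≥ 1, |B_{2n}|^{1/n} < |B_{2n+2}|^{1/(n+1)}. -/
open Real

lemma lemB (m : ℕ) : (2 * m + 2) * (m + 1) ^ m ≤ (m + 2) * (m + 2) ^ m := by
  have key : 2 * (m + 1 : ℕ) ^ (m + 1) ≤ (m + 2 : ℕ) ^ (m + 1) := by
    have hm : (0 : ℝ) < (m : ℝ) + 1 := by positivity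
    have h : (2 : ℝ) * ((m : ℝ) + 1) ^ (m + 1) ≤ ((m : ℝ) + 2) ^ (m + 1) := by
      have h1 := one_add_mul_le_pow
        (le_trans (by norm_num) (by positivity : (0:ℝ) ≤ 1 / ((m:ℝ) + 1))) (m + 1)
      have h1' : (2 : ℝ) ≤ (1 + 1 / ((m:ℝ) + 1)) ^ (m + 1) := by
        push_cast at h1
        rw [mul_one_div, div_self hm.ne'] at h1
        linarith
      have h2 : (1 + (1 : ℝ) / ((m:ℝ) + 1)) ^ (m + 1) * ((m:ℝ) + 1) ^ (m + 1)
          = ((m:ℝ) + 2) ^ (m + 1) := by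
        rw [← mul_pow]; congr 1; field_simp; ring
      nlinarith [mul_le_mul_of_nonneg_right h1' (pow_pos hm (m + 1)).le]
    exact_mod_cast h
  calc (2 * m + 2) * (m + 1) ^ m = 2 * (m + 1) ^ (m + 1) := by rw [pow_succ]; ring
    _ ≤ (m + 2) ^ (m + 1) := key
    _ = (m + 2) * (m + 2) ^ m := by rw [pow_succ]; ring

lemma lemA (n : ℕ) (hn : 2 ≤ n) : 4 * (2 * n).factorial ≤ ((2 * n + 1) * (n + 1)) ^ n := by
  induction n, hn using Nat.le_induction with
  | base => decide
  | succ n hn ih =>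
    have hfac : (2 * (n + 1)).factorial = (2 * n + 2) * ((2 * n + 1) * (2 * n).factorial) := by
      have : 2 * (n + 1) = (2 * n + 1) + 1 := by ring
      rw [this, Nat.factorial_succ, Nat.factorial_succ]
    calc 4 * (2 * (n + 1)).factorial
        = (2 * n + 1) * (2 * n + 2) * (4 * (2 * n).factorial) := by rw [hfac]; ring
      _ ≤ (2 * n + 1) * (2 * n + 2) * (((2 * n + 1) * (n + 1)) ^ n) := by gcongr
      _ = (2 * n + 1) * (2 * n + 1) ^ n * ((2 * n + 2) * (n + 1) ^ n) := by
          rw [mul_pow]; ring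
      _ ≤ (2 * n + 3) * (2 * n + 3) ^ n * ((n + 2) * (n + 2) ^ n) := by
          have hb := lemB n
          have h1 : (2 * n + 1) * (2 * n + 1) ^ n ≤ (2 * n + 3) * (2 * n + 3) ^ n := by
            gcongr <;> omega
          exact Nat.mul_le_mul h1 hb
      _ = ((2 * (n + 1) + 1) * (n + 1 + 1)) ^ (n + 1) := by
          rw [mul_pow, pow_succ, pow_succ]; ring_nf

lemma lemA' (n : ℕ) (hn : 2 ≤ n) :
    4 ^ (n + 1) * ((2 * n).factorial) ^ (n + 1) ≤ 2 ^ n * ((2 * n + 2).factorial) ^ n := by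
  have hfac : (2 * n + 2).factorial = (2 * n + 2) * ((2 * n + 1) * (2 * n).factorial) := by
    rw [Nat.factorial_succ, Nat.factorial_succ]
  calc 4 ^ (n + 1) * ((2 * n).factorial) ^ (n + 1)
      = (4 * (2 * n).factorial) ^ n * (4 * (2 * n).factorial) := by
        rw [mul_pow, pow_succ, pow_succ]; ring
    _ ≤ (4 * (2 * n).factorial) ^ n * ((2 * n + 1) * (n + 1)) ^ n := by
        gcongr; exact lemA n hn
    _ = 2 ^ n * ((2 * n + 2).factorial) ^ n := by
        rw [hfac, ← mul_pow, ← mul_pow]; congr 1; ring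

lemma zeta_gt_one (k : ℕ) (hk : 1 ≤ k) : 1 < ∑' m : ℕ, 1 / (m : ℝ) ^ (2 * k) := by
  have hs := (hasSum_zeta_nat (by omega : k ≠ 0)).summable
  have h3 : ∑ m ∈ Finset.range 3, 1 / (m : ℝ) ^ (2 * k) ≤ ∑' m : ℕ, 1 / (m : ℝ) ^ (2 * k) :=
    Summable.sum_le_tsum _ (fun m _ => by positivity) hs
  have : ∑ m ∈ Finset.range 3, 1 / (m : ℝ) ^ (2 * k)
      = 1 + 1 / (2 : ℝ) ^ (2 * k) := by
    rw [Finset.sum_range_succ, Finset.sum_range_succ, Finset.sum_range_one]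
    norm_num [zero_pow (by omega : 2 * k ≠ 0)]
  rw [this] at h3
  have : (0 : ℝ) < 1 / (2 : ℝ) ^ (2 * k) := by positivity
  linarith

lemma zeta_lt_two (k : ℕ) (hk : 1 ≤ k) : ∑' m : ℕ, 1 / (m : ℝ) ^ (2 * k) < 2 := by
  have hs := (hasSum_zeta_nat (by omega : k ≠ 0)).summable
  have h2 := hasSum_zeta_two
  have hle : ∑' m : ℕ, 1 / (m : ℝ) ^ (2 * k) ≤ ∑' m : ℕ, 1 / (m : ℝ) ^ 2 := by
    refine Summable.tsum_le_tsum (fun m => ?_) hs h2.summable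
    match m with
    | 0 => simp [zero_pow (by omega : 2 * k ≠ 0)]
    | (m + 1) =>
      apply one_div_le_one_div_of_le (by positivity)
      exact pow_le_pow_right₀ (by exact_mod_cast Nat.le_add_left 1 m) (by omega)
  rw [h2.tsum_eq] at hle
  nlinarith [pi_lt_d2, pi_pos]

lemma abs_bern (k : ℕ) (hk : 1 ≤ k) :
    |(bernoulli (2 * k) : ℝ)| =
      2 * (2 * k).factorial * (∑' m : ℕ, 1 / (m : ℝ) ^ (2 * k)) / (4 * π ^ 2) ^ k := by
  have h := (hasSum_zeta_nat (by omega : k ≠ 0)).tsum_eq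
  set S := ∑' m : ℕ, 1 / (m : ℝ) ^ (2 * k) with hS
  have hSpos : 0 < S := lt_trans zero_lt_one (zeta_gt_one k hk)
  have habs : S = 2 ^ (2 * k - 1) * π ^ (2 * k) * |(bernoulli (2 * k) : ℝ)| / (2 * k).factorial := by
    have := congrArg (fun x : ℝ => |x|) h
    simp only [abs_div, abs_mul, abs_pow, abs_neg, abs_one, one_pow, one_mul, abs_two,
      abs_of_pos pi_pos, Nat.abs_cast, abs_of_pos hSpos] at this
    exact this
  have h2 : (2 : ℝ) ^ (2 * k - 1) * 2 = (2 : ℝ) ^ (2 * k) := by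
    rw [← pow_succ]; congr 1; omega
  have hq : ((4 : ℝ) * π ^ 2) ^ k = (2 : ℝ) ^ (2 * k) * π ^ (2 * k) := by
    rw [mul_pow, pow_mul, pow_mul]; norm_num
  have hfac : (0 : ℝ) < ((2 * k).factorial : ℝ) := by positivity
  rw [habs, hq, ← h2]
  have hp : (0 : ℝ) < π ^ (2 * k) := by positivity
  have h21 : (0:ℝ) < 2 ^ (2 * k - 1) := by positivity
  field_simp

/-- The sequence `{|B_{2n}|^{1/n}}_{n ≥ 1}` is strictly increasing, where `B_n`
is the `n`-th Bernoulli number. -/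
theorem abs_bernoulli_rpow_strictMono (n : ℕ) (hn : 1 ≤ n) :
    |(bernoulli (2 * n) : ℝ)| ^ ((1 : ℝ) / n) <
      |(bernoulli (2 * n + 2) : ℝ)| ^ ((1 : ℝ) / (n + 1)) := by
  set x := |(bernoulli (2 * n) : ℝ)| with hxdef
  set y := |(bernoulli (2 * n + 2) : ℝ)| with hydef
  have h2n2 : 2 * n + 2 = 2 * (n + 1) := by ring
  have hq : (0 : ℝ) < 4 * π ^ 2 := by positivity
  have hxeq : x = 2 * (2 * n).factorial * (∑' m : ℕ, 1 / (m : ℝ) ^ (2 * n)) / (4 * π ^ 2) ^ n :=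
    abs_bern n hn
  have hyeq : y = 2 * (2 * (n + 1)).factorial *
      (∑' m : ℕ, 1 / (m : ℝ) ^ (2 * (n + 1))) / (4 * π ^ 2) ^ (n + 1) := by
    rw [hydef, h2n2]; exact abs_bern (n + 1) (by omega)
  have hSx1 := zeta_gt_one n hn
  have hSx2 := zeta_lt_two n hn
  have hSy1 := zeta_gt_one (n + 1) (by omega)
  have hfx : (0 : ℝ) < ((2 * n).factorial : ℝ) := by positivity
  have hfy : (0 : ℝ) < ((2 * (n + 1)).factorial : ℝ) := by positivity
  have hx : 0 < x := by
    rw [hxeq]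
    apply div_pos _ (by positivity)
    nlinarith
  have hy : 0 < y := by
    rw [hyeq]
    apply div_pos _ (by positivity)
    nlinarith
  have key : x ^ (n + 1) < y ^ n := by
    rcases eq_or_lt_of_le hn with h1 | h2
    · -- n = 1
      have hb2 : (bernoulli 2 : ℚ) = 1 / 6 := by
        rw [bernoulli_eq_bernoulli'_of_ne_one (by norm_num), bernoulli'_two]
      have hb4 : (bernoulli 4 : ℚ) = -1 / 30 := by
        rw [bernoulli_eq_bernoulli'_of_ne_one (by norm_num), bernoulli'_four]
      rw [hxdef, hydef, ← h1]
      norm_num [hb2, hb4]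
    · -- 2 ≤ n
      have hX : x < 4 * (2 * n).factorial / (4 * π ^ 2) ^ n := by
        rw [hxeq]
        exact (div_lt_div_iff_of_pos_right (by positivity)).mpr (by nlinarith)
      have hY : 2 * (2 * (n + 1)).factorial / (4 * π ^ 2) ^ (n + 1) < y := by
        rw [hyeq]
        exact (div_lt_div_iff_of_pos_right (by positivity)).mpr (by nlinarith)
      have hmid : (4 * ((2 * n).factorial : ℝ) / (4 * π ^ 2) ^ n) ^ (n + 1)
          ≤ (2 * ((2 * (n + 1)).factorial : ℝ) / (4 * π ^ 2) ^ (n + 1)) ^ n := by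
        rw [div_pow, div_pow, ← pow_mul, ← pow_mul, show (n + 1) * n = n * (n + 1) by ring]
        apply (div_le_div_iff_of_pos_right (by positivity)).mpr
        have := lemA' n h2
        rw [mul_pow, mul_pow]
        rw [show 2 * (n + 1) = 2 * n + 2 by ring]
        exact_mod_cast this
      calc x ^ (n + 1) < (4 * ((2 * n).factorial : ℝ) / (4 * π ^ 2) ^ n) ^ (n + 1) :=
            pow_lt_pow_left₀ hX hx.le (by omega)
        _ ≤ (2 * ((2 * (n + 1)).factorial : ℝ) / (4 * π ^ 2) ^ (n + 1)) ^ n := hmid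
        _ ≤ y ^ n := pow_le_pow_left₀ (by positivity) hY.le n
  -- rpow part
  have hn' : (0 : ℝ) < n := by exact_mod_cast hn
  have e1 : x ^ ((1 : ℝ) / n) = (x ^ (n + 1)) ^ ((1 : ℝ) / (n * (n + 1))) := by
    rw [← Real.rpow_natCast x (n + 1), ← Real.rpow_mul hx.le]
    congr 1
    push_cast
    field_simp
  have e2 : y ^ ((1 : ℝ) / ((n : ℝ) + 1)) = (y ^ n) ^ ((1 : ℝ) / (n * (n + 1))) := by
    rw [← Real.rpow_natCast y n, ← Real.rpow_mul hy.le]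
    congr 1
    push_cast
    field_simp
  rw [e1, e2]
  exact Real.rpow_lt_rpow (by positivity) key (by positivity)
end

section
/- The sequence {a_n}_{n≥1} of normalized Lasalle numbers is log-convex: for every integer n ≥ 2, a_n² ≤ a_{n−1}·a_{n+1}. -/
open Finset

noncomputable def gam (l : ℕ) : ℝ := if l = 0 then 0 else 1 / ((l + 1) * (l + 2))

noncomputable def tw (l : ℕ) : ℝ := Real.sqrt (gam l)

noncomputable def vv : ℕ → ℕ → ℝ
  | 0, l => if l = 0 then 1 else 0
  | (n+1), l => tw l * vv n (l - 1) + tw (l + 1) * vv n (l + 1)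

noncomputable def Ef (r m : ℕ) : ℝ :=
  (Nat.factorial r : ℝ) / (Nat.factorial m * Nat.factorial (r + m))

lemma gam_nonneg (l : ℕ) : 0 ≤ gam l := by
  unfold gam; split
  · exact le_refl _
  · positivity

lemma tw_nonneg (l : ℕ) : 0 ≤ tw l := Real.sqrt_nonneg _

lemma tw_zero : tw 0 = 0 := by simp [tw, gam]

lemma tw_sq (l : ℕ) : tw l * tw l = gam l := Real.mul_self_sqrt (gam_nonneg l)

lemma vv_zero_of_lt : ∀ n l, n < l → vv n l = 0 := by
  intro n
  induction n with
  | zero => intro l hl; simp [vv]; omega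
  | succ n ih =>
      intro l hl
      have h1 : vv n (l - 1) = 0 := ih _ (by omega)
      have h2 : vv n (l + 1) = 0 := ih _ (by omega)
      simp [vv, h1, h2]

lemma Ef_zero (r : ℕ) : Ef r 0 = 1 := by
  have : (Nat.factorial r : ℝ) ≠ 0 := by positivity
  simp [Ef]
  exact Nat.factorial_ne_zero r

lemma Ef_three (r k : ℕ) (hr : 1 ≤ r) :
    Ef (r + 1) (k + 1) = Ef r (k + 1) - gam r * Ef (r + 2) k := by
  have hg : gam r = 1 / ((r + 1) * (r + 2)) := by
    unfold gam; rw [if_neg (by omega)]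
  rw [hg]
  unfold Ef
  have e1 : (Nat.factorial (r+1) : ℝ) = (r+1) * Nat.factorial r := by
    rw [Nat.factorial_succ]; push_cast; ring
  have e2 : (Nat.factorial (r+2) : ℝ) = (r+2) * ((r+1) * Nat.factorial r) := by
    rw [Nat.factorial_succ, Nat.factorial_succ]; push_cast; ring
  have e3 : (Nat.factorial (k+1) : ℝ) = (k+1) * Nat.factorial k := by
    rw [Nat.factorial_succ]; push_cast; ring
  have e4 : ((r+1) + (k+1)) = (r + k + 1) + 1 := by ring
  have e5 : (Nat.factorial ((r+1)+(k+1)) : ℝ) = (r+k+2) * Nat.factorial (r+k+1) := by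
    rw [e4, Nat.factorial_succ]; push_cast; ring
  have e6 : (r + (k+1)) = r + k + 1 := by ring
  have e7 : ((r+2) + k) = (r + k + 1) + 1 := by ring
  have e8 : (Nat.factorial ((r+2)+k) : ℝ) = (r+k+2) * Nat.factorial (r+k+1) := by
    rw [e7, Nat.factorial_succ]; push_cast; ring
  rw [e1, e2, e3, e5, e6, e8]
  have p1 : (Nat.factorial r : ℝ) ≠ 0 := by positivity
  have p2 : (Nat.factorial k : ℝ) ≠ 0 := by positivity
  have p3 : (Nat.factorial (r+k+1) : ℝ) ≠ 0 := by positivity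
  have p4 : ((r:ℝ)+1) ≠ 0 := by positivity
  have p5 : ((r:ℝ)+2) ≠ 0 := by positivity
  have p6 : ((k:ℝ)+1) ≠ 0 := by positivity
  have p7 : ((r:ℝ)+k+2) ≠ 0 := by positivity
  field_simp
  ring

noncomputable def Uf (n l : ℕ) : ℝ :=
  if l ≤ n ∧ (n + l) % 2 = 0 then
    (∏ i ∈ range l, tw (i + 1)) * ((-1) ^ ((n - l) / 2) * Ef (l + 2) ((n - l) / 2))
  else 0

noncomputable def gg (k : ℕ) : ℝ :=
  if k % 2 = 0 then (-1) ^ (k / 2) * Ef 1 (k / 2) else 0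

lemma Uf_zero_of_lt (n l : ℕ) (h : n < l) : Uf n l = 0 := by
  unfold Uf; rw [if_neg]; omega

lemma Uf_zero_of_odd (n l : ℕ) (h : (n + l) % 2 = 1) : Uf n l = 0 := by
  unfold Uf; rw [if_neg]; omega

lemma URec (M l : ℕ) :
    tw l * Uf M (l - 1) + tw (l + 1) * Uf M (l + 1)
      = Uf (M + 1) l - (if l = 0 then gg (M + 1) else 0) := by
  rcases Nat.eq_zero_or_pos l with hl | hl
  · subst hl
    rw [if_pos rfl, tw_zero, zero_mul, zero_add]
    rcases Nat.even_or_odd M with hM | hM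
    · -- M even, M+1 odd : everything vanishes
      obtain ⟨k, hk⟩ := hM
      have h1 : Uf (M+1) 0 = 0 := Uf_zero_of_odd _ _ (by omega)
      have h2 : gg (M+1) = 0 := by unfold gg; rw [if_neg (by omega)]
      have h3 : Uf M 1 = 0 := Uf_zero_of_odd _ _ (by omega)
      rw [h1, h2, h3]; ring
    · obtain ⟨k, hk⟩ := hM
      subst hk
      have h1 : Uf (2*k+1+1) 0 = (-1)^(k+1) * Ef 2 (k+1) := by
        unfold Uf; rw [if_pos (by omega)]
        simp only [range_zero, prod_empty, one_mul]
        congr 2 <;> omega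
      have h2 : gg (2*k+1+1) = (-1)^(k+1) * Ef 1 (k+1) := by
        unfold gg; rw [if_pos (by omega)]
        congr 2 <;> omega
      have h3 : Uf (2*k+1) 1 = tw 1 * ((-1)^k * Ef 3 k) := by
        unfold Uf; rw [if_pos (by omega)]
        have : (2*k+1-1)/2 = k := by omega
        rw [this]
        simp [prod_range_one]
      rw [h1, h2, h3]
      have h4 : tw 1 * (tw 1 * ((-1)^k * Ef 3 k)) = gam 1 * ((-1)^k * Ef 3 k) := by
        rw [← mul_assoc, tw_sq]
      rw [h4]
      have h5 : Ef 2 (k+1) = Ef 1 (k+1) - gam 1 * Ef 3 k := Ef_three 1 k le_rfl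
      rw [h5, pow_succ]
      ring
  · obtain ⟨l', rfl⟩ : ∃ l', l = l' + 1 := ⟨l - 1, by omega⟩
    rw [if_neg (by omega), sub_zero]
    simp only [Nat.add_sub_cancel]
    rcases Nat.even_or_odd (M + l') with ⟨c, hc⟩ | ⟨c, hc⟩
    swap
    · -- parity mismatch : all zero
      have h1 : Uf (M+1) (l'+1) = 0 := Uf_zero_of_odd _ _ (by omega)
      have h2 : Uf M l' = 0 := Uf_zero_of_odd _ _ (by omega)
      have h3 : Uf M (l'+1+1) = 0 := Uf_zero_of_odd _ _ (by omega)
      rw [h1, h2, h3]; ring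
    · rcases lt_or_ge (M+1) (l'+1) with hbig | hle
      · -- l > M+1 : all zero by support
        have h1 : Uf (M+1) (l'+1) = 0 := Uf_zero_of_lt _ _ (by omega)
        have h2 : Uf M l' = 0 := Uf_zero_of_lt _ _ (by omega)
        have h3 : Uf M (l'+1+1) = 0 := Uf_zero_of_lt _ _ (by omega)
        rw [h1, h2, h3]; ring
      · rcases eq_or_lt_of_le hle with heq | hlt
        · -- l = M + 1, top boundary
          have hM : l' = M := by omega
          subst hM
          have h1 : Uf (l'+1) (l'+1) = (∏ i ∈ range (l'+1), tw (i+1)) := by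
            unfold Uf; rw [if_pos (by omega)]
            have hz : (l' + 1 - (l'+1)) / 2 = 0 := by omega
            rw [hz, Ef_zero, pow_zero, mul_one, mul_one]
          have h2 : Uf l' l' = (∏ i ∈ range l', tw (i+1)) := by
            unfold Uf; rw [if_pos (by omega)]
            have hz : (l' - l') / 2 = 0 := by omega
            rw [hz, Ef_zero, pow_zero, mul_one, mul_one]
          have h3 : Uf l' (l'+1+1) = 0 := Uf_zero_of_lt _ _ (by omega)
          rw [h1, h2, h3, prod_range_succ]
          ring
        · -- main case : l+1 ≤ M
          obtain ⟨k', hk'⟩ : ∃ k', M - (l'+1+1) = 2*k' := ⟨(M - l' - 2)/2, by omega⟩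
          have e1 : (M + 1 - (l'+1)) / 2 = k' + 1 := by omega
          have e2 : (M - l') / 2 = k' + 1 := by omega
          have e3 : (M - (l'+1+1)) / 2 = k' := by omega
          have h1 : Uf (M+1) (l'+1)
              = (∏ i ∈ range (l'+1), tw (i+1)) * ((-1)^(k'+1) * Ef (l'+3) (k'+1)) := by
            unfold Uf; rw [if_pos (by omega), e1]
          have h2 : Uf M l'
              = (∏ i ∈ range l', tw (i+1)) * ((-1)^(k'+1) * Ef (l'+2) (k'+1)) := by
            unfold Uf; rw [if_pos (by omega), e2]
          have h3 : Uf M (l'+1+1)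
              = (∏ i ∈ range (l'+1+1), tw (i+1)) * ((-1)^k' * Ef (l'+4) k') := by
            unfold Uf; rw [if_pos (by omega), e3]
          rw [h1, h2, h3, prod_range_succ, prod_range_succ]
          have h5 : Ef (l'+3) (k'+1) = Ef (l'+2) (k'+1) - gam (l'+2) * Ef (l'+4) k' := by
            have := Ef_three (l'+2) k' (by omega)
            convert this using 3 <;> omega
          have h6 : tw (l'+1+1) * tw (l'+1+1) = gam (l'+2) := by
            have := tw_sq (l'+1+1)
            convert this using 2
          rw [h5, pow_succ]
          linear_combination ((∏ i ∈ range l', tw (i+1)) * tw (l'+1) * ((-1:ℝ)^k' * Ef (l'+4) k')) * h6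
lemma Tmove (x y : ℕ → ℝ) (L : ℕ) (hx : x L = 0) (hy : y L = 0) :
    ∑ l ∈ range (L + 1), (tw l * x (l - 1) + tw (l + 1) * x (l + 1)) * y l
      = ∑ l ∈ range (L + 1), x l * (tw l * y (l - 1) + tw (l + 1) * y (l + 1)) := by
  have expand1 :
      ∑ l ∈ range (L + 1), (tw l * x (l - 1) + tw (l + 1) * x (l + 1)) * y l
        = (∑ l ∈ range (L + 1), tw l * x (l - 1) * y l)
          + ∑ l ∈ range (L + 1), tw (l + 1) * x (l + 1) * y l := by
    rw [← sum_add_distrib]; congr 1; ext l; ring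
  have expand2 :
      ∑ l ∈ range (L + 1), x l * (tw l * y (l - 1) + tw (l + 1) * y (l + 1))
        = (∑ l ∈ range (L + 1), tw l * x l * y (l - 1))
          + ∑ l ∈ range (L + 1), tw (l + 1) * x l * y (l + 1) := by
    rw [← sum_add_distrib]; congr 1; ext l; ring
  have e3 : ∑ l ∈ range (L + 1), tw l * x (l - 1) * y l
      = ∑ l ∈ range (L + 1), tw (l + 1) * x l * y (l + 1) := by
    rw [Finset.sum_range_succ' (fun l => tw l * x (l - 1) * y l) L]
    rw [Finset.sum_range_succ (fun l => tw (l + 1) * x l * y (l + 1)) L]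
    simp only [tw_zero, zero_mul, add_zero, Nat.add_sub_cancel, hx, mul_zero]
  have e4 : ∑ l ∈ range (L + 1), tw (l + 1) * x (l + 1) * y l
      = ∑ l ∈ range (L + 1), tw l * x l * y (l - 1) := by
    rw [Finset.sum_range_succ' (fun l => tw l * x l * y (l - 1)) L]
    rw [Finset.sum_range_succ (fun l => tw (l + 1) * x (l + 1) * y l) L]
    simp only [tw_zero, zero_mul, add_zero, Nat.add_sub_cancel, hy, mul_zero]
  rw [expand1, expand2, e3, e4, add_comm]

lemma vv_succ (n l : ℕ) : vv (n + 1) l = tw l * vv n (l - 1) + tw (l + 1) * vv n (l + 1) := rfl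

lemma vv_step (a b L : ℕ) (ha : a < L) (hb : b < L) :
    ∑ l ∈ range (L + 1), vv (a + 1) l * vv b l
      = ∑ l ∈ range (L + 1), vv a l * vv (b + 1) l := by
  have h := Tmove (vv a) (vv b) L (vv_zero_of_lt a L ha) (vv_zero_of_lt b L hb)
  simpa only [vv_succ] using h

lemma vv_contract : ∀ a b L : ℕ, a + b < L →
    ∑ l ∈ range (L + 1), vv a l * vv b l = vv (a + b) 0 := by
  intro a
  induction a with
  | zero =>
      intro b L hL
      have : ∀ l ∈ range (L + 1), vv 0 l * vv b l = if l = 0 then vv b 0 else 0 := by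
        intro l _
        by_cases h : l = 0
        · simp [h, vv]
        · simp [vv, h]
      rw [sum_congr rfl this, sum_ite_eq' (range (L + 1)) 0 (fun _ => vv b 0)]
      simp
  | succ a ih =>
      intro b L hL
      rw [vv_step a b L (by omega) (by omega), ih (b + 1) L (by omega)]
      congr 1
      omega

lemma vv_moment_nonneg (k : ℕ) : 0 ≤ vv (2 * k) 0 := by
  have h := vv_contract k k (2 * k + 1) (by omega)
  have : k + k = 2 * k := by omega
  rw [this] at h
  rw [← h]
  exact sum_nonneg fun l _ => mul_self_nonneg _

lemma vv_logconvex (n : ℕ) (hn : 1 ≤ n) :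
    vv (2 * n) 0 ^ 2 ≤ vv (2 * (n - 1)) 0 * vv (2 * (n + 1)) 0 := by
  set L := 2 * n + 3 with hLdef
  have hA : ∑ l ∈ range (L + 1), vv (n - 1) l * vv (n + 1) l = vv (2 * n) 0 := by
    rw [vv_contract (n - 1) (n + 1) L (by omega)]
    congr 1; omega
  have hB : ∑ l ∈ range (L + 1), vv (n - 1) l * vv (n - 1) l = vv (2 * (n - 1)) 0 := by
    rw [vv_contract (n - 1) (n - 1) L (by omega)]
    congr 1; omega
  have hCc : ∑ l ∈ range (L + 1), vv (n + 1) l * vv (n + 1) l = vv (2 * (n + 1)) 0 := by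
    rw [vv_contract (n + 1) (n + 1) L (by omega)]
    congr 1; omega
  have cs := sum_mul_sq_le_sq_mul_sq (range (L + 1)) (fun l => vv (n - 1) l) (fun l => vv (n + 1) l)
  simp only [sq] at cs ⊢
  calc vv (2 * n) 0 * vv (2 * n) 0
      = (∑ l ∈ range (L + 1), vv (n - 1) l * vv (n + 1) l)
        * (∑ l ∈ range (L + 1), vv (n - 1) l * vv (n + 1) l) := by rw [hA]
    _ ≤ (∑ l ∈ range (L + 1), vv (n - 1) l * vv (n - 1) l)
        * (∑ l ∈ range (L + 1), vv (n + 1) l * vv (n + 1) l) := by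
          have := cs
          calc _ = (∑ l ∈ range (L + 1), vv (n - 1) l * vv (n + 1) l) ^ 2 := by rw [sq]
            _ ≤ _ := by
                refine (sum_mul_sq_le_sq_mul_sq _ _ _).trans_eq ?_
                simp [sq]
    _ = vv (2 * (n - 1)) 0 * vv (2 * (n + 1)) 0 := by rw [hB, hCc]
lemma lam_step (N : ℕ) : ∀ j, j ≤ N →
    ∑ l ∈ range (N + 1), vv j l * Uf (N - j) l
      = Uf N 0 - ∑ i ∈ range j, vv i 0 * gg (N - i) := by
  intro j
  induction j with
  | zero =>
      intro _
      have h1 : ∀ l ∈ range (N + 1), vv 0 l * Uf N l = if l = 0 then Uf N 0 else 0 := by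
        intro l _
        by_cases h : l = 0
        · simp [h, vv]
        · simp [vv, h]
      rw [Nat.sub_zero, sum_congr rfl h1, sum_ite_eq' (range (N + 1)) 0 (fun _ => Uf N 0)]
      simp
  | succ j ih =>
      intro hj
      have hjN : j < N := hj
      have hmove := Tmove (vv j) (Uf (N - j - 1)) N
        (vv_zero_of_lt j N (by omega))
        (Uf_zero_of_lt (N - j - 1) N (by omega))
      have hNj : N - (j + 1) = N - j - 1 := by omega
      rw [hNj]
      calc ∑ l ∈ range (N + 1), vv (j + 1) l * Uf (N - j - 1) l
          = ∑ l ∈ range (N + 1),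
              (tw l * vv j (l - 1) + tw (l + 1) * vv j (l + 1)) * Uf (N - j - 1) l := by
            simp only [vv_succ]
        _ = ∑ l ∈ range (N + 1),
              vv j l * (tw l * Uf (N - j - 1) (l - 1) + tw (l + 1) * Uf (N - j - 1) (l + 1)) :=
            hmove
        _ = ∑ l ∈ range (N + 1),
              vv j l * (Uf (N - j) l - (if l = 0 then gg (N - j) else 0)) := by
            refine sum_congr rfl fun l _ => ?_
            have hrec := URec (N - j - 1) l
            have : N - j - 1 + 1 = N - j := by omega
            rw [this] at hrec
            rw [hrec]
        _ = (∑ l ∈ range (N + 1), vv j l * Uf (N - j) l)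
              - ∑ l ∈ range (N + 1), vv j l * (if l = 0 then gg (N - j) else 0) := by
            rw [← sum_sub_distrib]
            refine sum_congr rfl fun l _ => ?_
            ring
        _ = (∑ l ∈ range (N + 1), vv j l * Uf (N - j) l) - vv j 0 * gg (N - j) := by
            congr 1
            have h2 : ∀ l ∈ range (N + 1),
                vv j l * (if l = 0 then gg (N - j) else 0)
                  = if l = 0 then vv j 0 * gg (N - j) else 0 := by
              intro l _
              by_cases h : l = 0 <;> simp [h]
            rw [sum_congr rfl h2, sum_ite_eq' (range (N + 1)) 0 (fun _ => vv j 0 * gg (N - j))]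
            simp
        _ = Uf N 0 - ∑ i ∈ range (j + 1), vv i 0 * gg (N - i) := by
            rw [ih (by omega), sum_range_succ]
            ring

lemma newton_raw (N : ℕ) :
    ∑ i ∈ range (N + 1), vv i 0 * gg (N - i) = Uf N 0 := by
  have h := lam_step N N le_rfl
  have hU0 : ∀ l, Uf 0 l = if l = 0 then 1 else 0 := by
    intro l
    by_cases hl : l = 0
    · subst hl
      unfold Uf
      rw [if_pos (by omega)]
      simp [Ef_zero]
    · rw [if_neg hl]
      exact Uf_zero_of_lt 0 l (by omega)
  have hsub : N - N = 0 := by omega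
  rw [hsub] at h
  have h1 : ∀ l ∈ range (N + 1), vv N l * Uf 0 l = if l = 0 then vv N 0 else 0 := by
    intro l _
    rw [hU0 l]
    by_cases hl : l = 0 <;> simp [hl]
  rw [sum_congr rfl h1, sum_ite_eq' (range (N + 1)) 0 (fun _ => vv N 0)] at h
  simp only [mem_range, Nat.lt_add_one_iff, Nat.zero_le, if_pos] at h
  have hggz : gg 0 = 1 := by simp [gg, Ef_zero]
  rw [sum_range_succ, hsub, hggz]
  rw [h]
  ring

lemma sum_even_odd (F : ℕ → ℝ) : ∀ n : ℕ,
    ∑ i ∈ range (2 * n + 1), F i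
      = (∑ k ∈ range (n + 1), F (2 * k)) + ∑ k ∈ range n, F (2 * k + 1) := by
  intro n
  induction n with
  | zero => simp
  | succ n ih =>
      have h1 : 2 * (n + 1) + 1 = (2 * n + 1) + 1 + 1 := by omega
      rw [h1, sum_range_succ, sum_range_succ, ih, sum_range_succ (fun k => F (2 * k)) (n + 1),
        sum_range_succ (fun k => F (2 * k + 1)) n]
      have e1 : 2 * n + 1 + 1 = 2 * (n + 1) := by omega
      rw [e1]
      ring

lemma newton (n : ℕ) :
    ∑ k ∈ range (n + 1), vv (2 * k) 0 * ((-1) ^ (n - k) * Ef 1 (n - k))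
      = (-1) ^ n * Ef 2 n := by
  have h := newton_raw (2 * n)
  rw [sum_even_odd (fun i => vv i 0 * gg (2 * n - i)) n] at h
  have hodd : ∀ k ∈ range n, vv (2 * k + 1) 0 * gg (2 * n - (2 * k + 1)) = 0 := by
    intro k hk
    rw [mem_range] at hk
    have : gg (2 * n - (2 * k + 1)) = 0 := by
      unfold gg
      rw [if_neg (by omega)]
    rw [this, mul_zero]
  rw [sum_eq_zero hodd, add_zero] at h
  have heven : ∀ k ∈ range (n + 1),
      vv (2 * k) 0 * gg (2 * n - 2 * k) = vv (2 * k) 0 * ((-1) ^ (n - k) * Ef 1 (n - k)) := by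
    intro k hk
    rw [mem_range] at hk
    have hg : gg (2 * n - 2 * k) = (-1) ^ (n - k) * Ef 1 (n - k) := by
      unfold gg
      rw [if_pos (by omega)]
      have : (2 * n - 2 * k) / 2 = n - k := by omega
      rw [this]
    rw [hg]
  rw [sum_congr rfl heven] at h
  rw [h]
  have hU : Uf (2 * n) 0 = (-1) ^ n * Ef 2 n := by
    unfold Uf
    rw [if_pos (by omega)]
    have : (2 * n - 0) / 2 = n := by omega
    rw [this]
    simp
  rw [hU]
lemma CatE (n : ℕ) (hn : 1 ≤ n) :
    (Nat.choose (2 * n) n : ℝ) / ((n : ℝ) + 1) = ((2 * n - 1).factorial : ℝ) * Ef 2 (n - 1) := by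
  obtain ⟨q, rfl⟩ : ∃ q, n = q + 1 := ⟨n - 1, by omega⟩
  have hnat : Nat.choose (2 * (q + 1)) (q + 1) * (q + 1).factorial * (q + 1).factorial
      = (2 * (q + 1)).factorial := by
    have h := Nat.choose_mul_factorial_mul_factorial (show q + 1 ≤ 2 * (q + 1) by omega)
    have e : 2 * (q + 1) - (q + 1) = q + 1 := by omega
    rwa [e] at h
  have r1 : (Nat.choose (2 * (q + 1)) (q + 1) : ℝ) * ((q + 1).factorial : ℝ) * ((q + 1).factorial : ℝ)
      = ((2 * (q + 1)).factorial : ℝ) := by exact_mod_cast hnat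
  have r2 : ((2 * (q + 1)).factorial : ℝ) = (2 * (q : ℝ) + 2) * ((2 * q + 1).factorial : ℝ) := by
    rw [show 2 * (q + 1) = (2 * q + 1) + 1 from by omega, Nat.factorial_succ]; push_cast; ring
  have r3 : ((q + 1).factorial : ℝ) = ((q : ℝ) + 1) * (q.factorial : ℝ) := by
    rw [Nat.factorial_succ]; push_cast; ring
  have hc : (Nat.choose (2 * (q + 1)) (q + 1) : ℝ)
      * ((((q : ℝ) + 1) * (q.factorial : ℝ)) * (((q : ℝ) + 1) * (q.factorial : ℝ)))
      = (2 * (q : ℝ) + 2) * ((2 * q + 1).factorial : ℝ) := by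
    rw [← r3, ← mul_assoc, r1, r2]
  have e2 : 2 * (q + 1) - 1 = 2 * q + 1 := by omega
  have e3 : q + 1 - 1 = q := by omega
  rw [e2, e3]
  unfold Ef
  have e4 : (2 : ℕ) + q = (q + 1) + 1 := by omega
  have r4 : (((2 : ℕ) + q).factorial : ℝ) = ((q : ℝ) + 2) * (((q : ℝ) + 1) * (q.factorial : ℝ)) := by
    rw [e4, Nat.factorial_succ, Nat.factorial_succ]; push_cast; ring
  have hd : (((q : ℝ) + 1) * (q.factorial : ℝ)) * (((q : ℝ) + 1) * (q.factorial : ℝ)) ≠ 0 := by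
    positivity
  have hcc : (Nat.choose (2 * (q + 1)) (q + 1) : ℝ)
      = (2 * (q : ℝ) + 2) * ((2 * q + 1).factorial : ℝ)
        / ((((q : ℝ) + 1) * (q.factorial : ℝ)) * (((q : ℝ) + 1) * (q.factorial : ℝ))) :=
    (eq_div_iff hd).mpr hc
  rw [hcc, r4]
  have h1 : (q.factorial : ℝ) ≠ 0 := by positivity
  have h2 : ((2 * q + 1).factorial : ℝ) ≠ 0 := by positivity
  have h3 : ((q : ℝ) + 1) ≠ 0 := by positivity
  have h4 : ((q : ℝ) + 2) ≠ 0 := by positivity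
  have h5 : ((q : ℝ) + 1 + 1) ≠ 0 := by positivity
  push_cast
  field_simp
  ring

lemma binCE (n j : ℕ) (h1 : 1 ≤ j) (h2 : j < n) :
    (Nat.choose (2 * n - 1) (2 * j - 1) : ℝ) * ((2 * j - 1).factorial : ℝ)
      * ((Nat.choose (2 * (n - j)) (n - j) : ℝ) / (((n - j : ℕ) : ℝ) + 1))
    = ((2 * n - 1).factorial : ℝ) * Ef 1 (n - j) := by
  obtain ⟨m, hm1, rfl⟩ : ∃ m, 1 ≤ m ∧ n = j + m := ⟨n - j, by omega, by omega⟩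
  have em : j + m - j = m := by omega
  rw [em]
  have hnat1 : Nat.choose (2 * (j + m) - 1) (2 * j - 1) * (2 * j - 1).factorial * (2 * m).factorial
      = (2 * (j + m) - 1).factorial := by
    have h := Nat.choose_mul_factorial_mul_factorial
      (show 2 * j - 1 ≤ 2 * (j + m) - 1 by omega)
    have e : 2 * (j + m) - 1 - (2 * j - 1) = 2 * m := by omega
    rwa [e] at h
  have hnat2 : Nat.choose (2 * m) m * m.factorial * m.factorial = (2 * m).factorial := by
    have h := Nat.choose_mul_factorial_mul_factorial (show m ≤ 2 * m by omega)
    have e : 2 * m - m = m := by omega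
    rwa [e] at h
  have r1 : ((2 * (j + m) - 1).factorial : ℝ)
      = (Nat.choose (2 * (j + m) - 1) (2 * j - 1) : ℝ) * ((2 * j - 1).factorial : ℝ)
        * ((2 * m).factorial : ℝ) := by exact_mod_cast hnat1.symm
  have r2 : ((2 * m).factorial : ℝ)
      = (Nat.choose (2 * m) m : ℝ) * (m.factorial : ℝ) * (m.factorial : ℝ) := by
    exact_mod_cast hnat2.symm
  rw [r1, r2]
  unfold Ef
  have r3 : (((1 : ℕ) + m).factorial : ℝ) = ((m : ℝ) + 1) * (m.factorial : ℝ) := by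
    rw [show (1 : ℕ) + m = m + 1 from by omega, Nat.factorial_succ]; push_cast; ring
  rw [r3]
  have h1 : (m.factorial : ℝ) ≠ 0 := by positivity
  have h3 : ((m : ℝ) + 1) ≠ 0 := by positivity
  simp only [Nat.factorial_one]
  push_cast
  field_simp
lemma fact_ineq (q : ℕ) :
    ((q + 1).factorial * (q + 3).factorial) * ((q + 1).factorial * (q + 3).factorial)
      ≤ (q.factorial * (q + 2).factorial) * ((q + 2).factorial * (q + 4).factorial) := by
  have e1 : (q + 1).factorial = (q + 1) * q.factorial := Nat.factorial_succ q
  have e2 : (q + 2).factorial = (q + 2) * ((q + 1) * q.factorial) := by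
    rw [show q + 2 = (q + 1) + 1 from rfl, Nat.factorial_succ, e1]
  have e3 : (q + 3).factorial = (q + 3) * ((q + 2) * ((q + 1) * q.factorial)) := by
    rw [show q + 3 = (q + 2) + 1 from rfl, Nat.factorial_succ, e2]
  have e4 : (q + 4).factorial = (q + 4) * ((q + 3) * ((q + 2) * ((q + 1) * q.factorial))) := by
    rw [show q + 4 = (q + 3) + 1 from rfl, Nat.factorial_succ, e3]
  rw [e1, e2, e3, e4]
  have key : (q + 1) * (q + 3) ≤ (q + 2) * (q + 4) := by nlinarith
  calc ((q + 1) * q.factorial * ((q + 3) * ((q + 2) * ((q + 1) * q.factorial))))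
        * ((q + 1) * q.factorial * ((q + 3) * ((q + 2) * ((q + 1) * q.factorial))))
      = ((q + 1) * (q + 3))
        * ((q + 1) * (q + 1) * (q + 1) * (q + 2) * (q + 2) * (q + 3)
            * (q.factorial * q.factorial * q.factorial * q.factorial)) := by ring
    _ ≤ ((q + 2) * (q + 4))
        * ((q + 1) * (q + 1) * (q + 1) * (q + 2) * (q + 2) * (q + 3)
            * (q.factorial * q.factorial * q.factorial * q.factorial)) :=
        Nat.mul_le_mul_right _ key
    _ = (q.factorial * ((q + 2) * ((q + 1) * q.factorial)))
        * ((q + 2) * ((q + 1) * q.factorial)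
            * ((q + 4) * ((q + 3) * ((q + 2) * ((q + 1) * q.factorial))))) := by ring

/-- Let `C n` be the `n`-th Catalan number and let `A` be the sequence of
Lasalle numbers, determined by `A 1 = 1` and the recurrence
`(−1)^{n−1} A n = C n + ∑_{j=1}^{n−1} (−1)^j (2n−1 choose 2j−1) A j C_{n−j}`.
Then the sequence `a n = 2 A n / C n` of normalized Lasalle numbers is
log-convex: `a n ² ≤ a (n−1) · a (n+1)` for `n ≥ 2`. -/
theorem lasalle_logConvex (C A a : ℕ → ℝ)
    (hC : ∀ n : ℕ, C n = (Nat.choose (2 * n) n : ℝ) / (n + 1))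
    (hA1 : A 1 = 1)
    (hA : ∀ n : ℕ, 1 ≤ n →
      (-1 : ℝ) ^ (n - 1) * A n =
        C n + ∑ j ∈ Finset.Ico 1 n,
          (-1 : ℝ) ^ j * (Nat.choose (2 * n - 1) (2 * j - 1) : ℝ) * A j * C (n - j))
    (ha : ∀ n : ℕ, 1 ≤ n → a n = 2 * A n / C n)
    (n : ℕ) (hn : 2 ≤ n) :
    a n ^ 2 ≤ a (n - 1) * a (n + 1) := by
  -- Identification of A with the Bessel-walk moments
  have keyA : ∀ nn : ℕ, 1 ≤ nn → A nn = ((2 * nn - 1).factorial : ℝ) * vv (2 * (nn - 1)) 0 := by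
    intro nn
    induction nn using Nat.strong_induction_on with
    | _ nn ih =>
      intro h1
      have hEq := hA nn h1
      have hsign : ((-1 : ℝ) ^ (nn - 1)) * ((-1 : ℝ) ^ (nn - 1)) = 1 := by
        rw [← pow_add]
        exact Even.neg_one_pow ⟨nn - 1, by ring⟩
      set S := ∑ j ∈ Finset.Ico 1 nn,
        (-1 : ℝ) ^ j * (Nat.choose (2 * nn - 1) (2 * j - 1) : ℝ) * A j * C (nn - j) with hSdef
      have hAn : A nn = (-1 : ℝ) ^ (nn - 1) * (C nn + S) := by
        rw [← hEq, ← mul_assoc, hsign, one_mul]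
      have hterm : ∀ j ∈ Finset.Ico 1 nn,
          (-1 : ℝ) ^ j * (Nat.choose (2 * nn - 1) (2 * j - 1) : ℝ) * A j * C (nn - j)
            = ((2 * nn - 1).factorial : ℝ)
                * ((-1) ^ j * (Ef 1 (nn - j) * vv (2 * (j - 1)) 0)) := by
        intro j hj
        rw [Finset.mem_Ico] at hj
        rw [ih j hj.2 hj.1, hC (nn - j)]
        linear_combination
          ((-1 : ℝ) ^ j * vv (2 * (j - 1)) 0) * binCE nn j hj.1 hj.2
      have hS : S = ((2 * nn - 1).factorial : ℝ)
          * ∑ j ∈ Finset.Ico 1 nn, (-1 : ℝ) ^ j * (Ef 1 (nn - j) * vv (2 * (j - 1)) 0) := by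
        rw [hSdef, Finset.sum_congr rfl hterm, Finset.mul_sum]
      have hreindex : ∑ j ∈ Finset.Ico 1 nn, (-1 : ℝ) ^ j * (Ef 1 (nn - j) * vv (2 * (j - 1)) 0)
          = ∑ k ∈ range (nn - 1), (-1 : ℝ) ^ (1 + k) * (Ef 1 (nn - 1 - k) * vv (2 * k) 0) := by
        rw [Finset.sum_Ico_eq_sum_range]
        refine Finset.sum_congr rfl fun k hk => ?_
        rw [Finset.mem_range] at hk
        have e1 : nn - (1 + k) = nn - 1 - k := by omega
        have e2 : 1 + k - 1 = k := by omega
        rw [e1, e2]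
      have hnewton := newton (nn - 1)
      rw [sum_range_succ] at hnewton
      have e3 : nn - 1 - (nn - 1) = 0 := by omega
      rw [e3, Ef_zero, pow_zero, one_mul, mul_one] at hnewton
      have hsum : ∑ k ∈ range (nn - 1), vv (2 * k) 0 * ((-1 : ℝ) ^ (nn - 1 - k) * Ef 1 (nn - 1 - k))
          = (-1 : ℝ) ^ (nn - 1) * Ef 2 (nn - 1) - vv (2 * (nn - 1)) 0 := by
        linarith [hnewton]
      have hT : ∑ k ∈ range (nn - 1), (-1 : ℝ) ^ (1 + k) * (Ef 1 (nn - 1 - k) * vv (2 * k) 0)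
          = -((-1 : ℝ) ^ (nn - 1)
              * ((-1 : ℝ) ^ (nn - 1) * Ef 2 (nn - 1) - vv (2 * (nn - 1)) 0)) := by
        rw [← hsum, Finset.mul_sum, ← Finset.sum_neg_distrib]
        refine Finset.sum_congr rfl fun k hk => ?_
        rw [Finset.mem_range] at hk
        have hx : (-1 : ℝ) ^ (nn - 1) * (-1 : ℝ) ^ (nn - 1 - k) = (-1 : ℝ) ^ k := by
          rw [← pow_add]
          have e : (nn - 1) + (nn - 1 - k) = 2 * (nn - 1 - k) + k := by omega
          rw [e, pow_add, pow_mul, neg_one_sq, one_pow, one_mul]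
        have hx2 : (-1 : ℝ) ^ (1 + k) = -(-1 : ℝ) ^ k := by
          rw [pow_add, pow_one]; ring
        rw [hx2]
        linear_combination (Ef 1 (nn - 1 - k) * vv (2 * k) 0) * hx
      have hCn : C nn = ((2 * nn - 1).factorial : ℝ) * Ef 2 (nn - 1) := by
        rw [hC nn]
        exact CatE nn h1
      rw [hAn, hS, hreindex, hT, hCn]
      linear_combination (((2 * nn - 1).factorial : ℝ) * vv (2 * (nn - 1)) 0
        - ((2 * nn - 1).factorial : ℝ) * ((-1 : ℝ) ^ (nn - 1) * Ef 2 (nn - 1))) * hsign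
  -- Formula for a
  have hak : ∀ k : ℕ, 1 ≤ k →
      a k = ((k - 1).factorial : ℝ) * ((k + 1).factorial : ℝ) * vv (2 * (k - 1)) 0 := by
    intro k hk
    have hCk : C k = ((2 * k - 1).factorial : ℝ) * Ef 2 (k - 1) := by
      rw [hC k]; exact CatE k hk
    rw [ha k hk, keyA k hk, hCk]
    unfold Ef
    have e : (2 : ℕ) + (k - 1) = k + 1 := by omega
    rw [e]
    have h2 : (Nat.factorial 2 : ℝ) = 2 := by norm_num [Nat.factorial]
    rw [h2]
    have p1 : ((2 * k - 1).factorial : ℝ) ≠ 0 := by positivity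
    have p2 : ((k - 1).factorial : ℝ) ≠ 0 := by positivity
    have p3 : ((k + 1).factorial : ℝ) ≠ 0 := by positivity
    field_simp
  obtain ⟨q, rfl⟩ : ∃ q, n = q + 2 := ⟨n - 2, by omega⟩
  have ea : a (q + 2) = ((q + 1).factorial : ℝ) * ((q + 3).factorial : ℝ) * vv (2 * (q + 1)) 0 := by
    have := hak (q + 2) (by omega)
    have e1 : q + 2 - 1 = q + 1 := by omega
    have e2 : q + 2 + 1 = q + 3 := by omega
    rwa [e1, e2] at this
  have eb : a (q + 2 - 1) = ((q).factorial : ℝ) * ((q + 2).factorial : ℝ) * vv (2 * q) 0 := by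
    have := hak (q + 1) (by omega)
    have e0 : q + 2 - 1 = q + 1 := by omega
    have e1 : q + 1 - 1 = q := by omega
    have e2 : q + 1 + 1 = q + 2 := by omega
    rw [e0]
    rwa [e1, e2] at this
  have ec : a (q + 2 + 1) = ((q + 2).factorial : ℝ) * ((q + 4).factorial : ℝ) * vv (2 * (q + 2)) 0 := by
    have := hak (q + 3) (by omega)
    have e0 : q + 2 + 1 = q + 3 := by omega
    have e1 : q + 3 - 1 = q + 2 := by omega
    have e2 : q + 3 + 1 = q + 4 := by omega
    rw [e0]
    rwa [e1, e2] at this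
  have lc : vv (2 * (q + 1)) 0 ^ 2 ≤ vv (2 * q) 0 * vv (2 * (q + 2)) 0 := by
    have := vv_logconvex (q + 1) (by omega)
    have e1 : q + 1 - 1 = q := by omega
    have e2 : q + 1 + 1 = q + 2 := by omega
    rwa [e1, e2] at this
  have nn1 : (0 : ℝ) ≤ vv (2 * q) 0 := vv_moment_nonneg q
  have nn2 : (0 : ℝ) ≤ vv (2 * (q + 2)) 0 := vv_moment_nonneg (q + 2)
  have fi : (((q + 1).factorial : ℝ) * ((q + 3).factorial : ℝ))
      * (((q + 1).factorial : ℝ) * ((q + 3).factorial : ℝ))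
      ≤ ((q.factorial : ℝ) * ((q + 2).factorial : ℝ))
        * (((q + 2).factorial : ℝ) * ((q + 4).factorial : ℝ)) := by
    exact_mod_cast fact_ineq q
  rw [ea, eb, ec]
  have c1 : (0 : ℝ) ≤ ((q + 1).factorial : ℝ) * ((q + 3).factorial : ℝ) := by positivity
  have hxz : (0 : ℝ) ≤ vv (2 * q) 0 * vv (2 * (q + 2)) 0 := mul_nonneg nn1 nn2
  calc (((q + 1).factorial : ℝ) * ((q + 3).factorial : ℝ) * vv (2 * (q + 1)) 0) ^ 2
      = (((q + 1).factorial : ℝ) * ((q + 3).factorial : ℝ))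
        * (((q + 1).factorial : ℝ) * ((q + 3).factorial : ℝ)) * vv (2 * (q + 1)) 0 ^ 2 := by
        ring
    _ ≤ (((q + 1).factorial : ℝ) * ((q + 3).factorial : ℝ))
        * (((q + 1).factorial : ℝ) * ((q + 3).factorial : ℝ))
        * (vv (2 * q) 0 * vv (2 * (q + 2)) 0) := by
        apply mul_le_mul_of_nonneg_left lc
        positivity
    _ ≤ ((q.factorial : ℝ) * ((q + 2).factorial : ℝ))
        * (((q + 2).factorial : ℝ) * ((q + 4).factorial : ℝ))
        * (vv (2 * q) 0 * vv (2 * (q + 2)) 0) := by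
        exact mul_le_mul_of_nonneg_right fi hxz
    _ = ((q).factorial : ℝ) * ((q + 2).factorial : ℝ) * vv (2 * q) 0
        * (((q + 2).factorial : ℝ) * ((q + 4).factorial : ℝ) * vv (2 * (q + 2)) 0) := by
        ring
end

section
/- The sequence {a_n^{1/n}}_{n≥2} of normalized Lasalle numbers is strictly increasing: for every integer n ≥ 2, a_n^{1/n} < a_{n+1}^{1/(n+1)}. -/
open Finset Nat

set_option linter.unusedSectionVars false

noncomputable def mm (C : ℕ → ℝ) (k : ℕ) : ℝ := C k / ((2*k)! : ℝ)
noncomputable def uu (A : ℕ → ℝ) (j : ℕ) : ℝ := (-1)^(j-1) * A j / ((2*j-1)! : ℝ)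

lemma mm_zero (C : ℕ → ℝ) (hC : ∀ n : ℕ, C n = (Nat.choose (2 * n) n : ℝ) / (n + 1)) :
    mm C 0 = 1 := by
  simp [mm, hC 0]

-- R2 : n(n+1) m_n = m_{n-1}
lemma R2 (C : ℕ → ℝ) (hC : ∀ n : ℕ, C n = (Nat.choose (2 * n) n : ℝ) / (n + 1))
    (n : ℕ) (hn : 1 ≤ n) :
    (n : ℝ) * (n+1) * mm C n = mm C (n-1) := by
  obtain ⟨m, rfl⟩ : ∃ m, n = m + 1 := ⟨n - 1, by omega⟩
  simp only [mm, hC, Nat.add_sub_cancel]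
  have h1 : (2*(m+1)) = (2*m+1) + 1 := by ring
  have h2 : ((2*(m+1)).choose (m+1) : ℝ) * ((m+1))^2 = ((2*m).choose m : ℝ) * (2*(m+1)) * (2*m+1) := by
    rw [Nat.cast_choose ℝ (by omega : m + 1 ≤ 2*(m+1)), Nat.cast_choose ℝ (by omega : m ≤ 2*m)]
    have e1 : 2*(m+1) - (m+1) = m + 1 := by omega
    have e2 : 2*m - m = m := by omega
    rw [e1, e2]
    have f1 : ((2*(m+1))! : ℝ) = (2*(m+1)) * (2*m+1) * ((2*m)! : ℝ) := by
      have : 2*(m+1) = (2*m+1)+1 := by ring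
      rw [this]
      push_cast [Nat.factorial_succ]
      ring
    have f2 : ((m+1)! : ℝ) = (m+1) * (m ! : ℝ) := by push_cast [Nat.factorial_succ]; ring
    rw [f1, f2]
    have hm : (m ! : ℝ) ≠ 0 := by positivity
    have hm1 : ((m+1) : ℝ) ≠ 0 := by positivity
    field_simp
  have f1 : ((2*(m+1))! : ℝ) = (2*(m+1)) * (2*m+1) * ((2*m)! : ℝ) := by
    have : 2*(m+1) = (2*m+1)+1 := by ring
    rw [this]
    push_cast [Nat.factorial_succ]
    ring
  rw [f1]
  have h2m : ((2*m)! : ℝ) ≠ 0 := by positivity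
  have : ((m:ℝ)+1) ≠ 0 := by positivity
  have h3 : ((2:ℝ)*(m+1)) * (2*m+1) ≠ 0 := by positivity
  field_simp
  push_cast at h2 ⊢
  exact mul_left_cancel₀ this (by linear_combination h2)



lemma R1 (C A : ℕ → ℝ)
    (hC : ∀ n : ℕ, C n = (Nat.choose (2 * n) n : ℝ) / (n + 1))
    (hA : ∀ n : ℕ, 1 ≤ n →
      (-1 : ℝ) ^ (n - 1) * A n =
        C n + ∑ j ∈ Finset.Ico 1 n,
          (-1 : ℝ) ^ j * (Nat.choose (2 * n - 1) (2 * j - 1) : ℝ) * A j * C (n - j))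
    (n : ℕ) (hn : 1 ≤ n) :
    (2*(n:ℝ)) * mm C n = ∑ j ∈ Icc 1 n, uu A j * mm C (n - j) := by
  have hC0 : C 0 = 1 := by simp [hC 0]
  have key : C n = ∑ j ∈ Icc 1 n, (-1:ℝ)^(j-1) * (((2*n-1).choose (2*j-1) : ℕ) : ℝ) * A j * C (n-j) := by
    have h := hA n hn
    have hIco : Finset.Ico 1 n = Finset.Icc 1 (n-1) := by
      rw [← Finset.Ico_add_one_right_eq_Icc]; congr 1; omega
    rw [hIco] at h
    have hsplit : ∑ j ∈ Icc 1 n, (-1:ℝ)^(j-1) * (((2*n-1).choose (2*j-1) : ℕ) : ℝ) * A j * C (n-j)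
        = (∑ j ∈ Icc 1 (n-1), (-1:ℝ)^(j-1) * (((2*n-1).choose (2*j-1) : ℕ) : ℝ) * A j * C (n-j))
          + (-1:ℝ)^(n-1) * A n := by
      obtain ⟨m, rfl⟩ : ∃ m, n = m + 1 := ⟨n-1, by omega⟩
      rw [Finset.sum_Icc_succ_top (by omega : 1 ≤ m + 1)]
      simp [Nat.choose_self, hC0]
    have hneg : ∑ j ∈ Icc 1 (n-1), (-1:ℝ)^(j-1) * (((2*n-1).choose (2*j-1) : ℕ) : ℝ) * A j * C (n-j)
        = - ∑ j ∈ Icc 1 (n-1), (-1:ℝ)^j * (((2*n-1).choose (2*j-1) : ℕ) : ℝ) * A j * C (n-j) := by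
      rw [← Finset.sum_neg_distrib]
      refine Finset.sum_congr rfl ?_
      intro j hj
      simp only [mem_Icc] at hj
      have : (-1:ℝ)^j = -(-1:ℝ)^(j-1) := by
        have e : j - 1 + 1 = j := by omega
        conv_lhs => rw [← e]
        rw [pow_succ]; ring
      rw [this]; ring
    rw [hsplit, hneg]
    linarith [h]
  have h2n : ((2*n)! : ℝ) = (2*n) * ((2*n-1)! : ℝ) := by
    have e : 2*n - 1 + 1 = 2*n := by omega
    rw [← e, Nat.factorial_succ]
    push_cast
    rw [Nat.cast_sub (by omega : 1 ≤ 2*n)]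
    push_cast; ring
  have hfne : ((2*n-1)! : ℝ) ≠ 0 := by positivity
  have hterm : ∀ j ∈ Icc 1 n,
      (-1:ℝ)^(j-1) * (((2*n-1).choose (2*j-1) : ℕ) : ℝ) * A j * C (n-j) / ((2*n-1)! : ℝ)
        = uu A j * mm C (n-j) := by
    intro j hj
    simp only [mem_Icc] at hj
    rw [Nat.cast_choose ℝ (by omega : 2*j-1 ≤ 2*n-1)]
    have e : (2*n-1) - (2*j-1) = 2*(n-j) := by omega
    rw [e, uu, mm]
    have h1 : ((2*j-1)! : ℝ) ≠ 0 := by positivity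
    have h2 : ((2*(n-j))! : ℝ) ≠ 0 := by positivity
    field_simp
  calc (2*(n:ℝ)) * mm C n = C n / ((2*n-1)! : ℝ) := by
        rw [mm, h2n]
        have : (2*(n:ℝ)) ≠ 0 := by positivity
        have : ((n:ℝ)) ≠ 0 := by
          exact Nat.cast_ne_zero.mpr (by omega : n ≠ 0)
        field_simp
    _ = (∑ j ∈ Icc 1 n, (-1:ℝ)^(j-1) * (((2*n-1).choose (2*j-1) : ℕ) : ℝ) * A j * C (n-j)) / ((2*n-1)! : ℝ) := by
        rw [← key]
    _ = ∑ j ∈ Icc 1 n, (-1:ℝ)^(j-1) * (((2*n-1).choose (2*j-1) : ℕ) : ℝ) * A j * C (n-j) / ((2*n-1)! : ℝ) :=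
        Finset.sum_div _ _ _
    _ = ∑ j ∈ Icc 1 n, uu A j * mm C (n - j) := Finset.sum_congr rfl hterm


noncomputable def EE (A : ℕ → ℝ) (k : ℕ) : ℝ :=
  (2*(k:ℝ)+2) * uu A k + (∑ a ∈ Icc 1 (k-1), uu A a * uu A (k-a)) - (if k = 1 then 4 else 0)

section
variable (C A : ℕ → ℝ)
  (hR1 : ∀ n : ℕ, 1 ≤ n → (2*(n:ℝ)) * mm C n = ∑ j ∈ Icc 1 n, uu A j * mm C (n - j))
  (hR2 : ∀ n : ℕ, 1 ≤ n → (n : ℝ) * (n+1) * mm C n = mm C (n-1))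
  (hm0 : mm C 0 = 1)

include hR1 hR2 hm0 in
lemma keysum (n : ℕ) (hn : 1 ≤ n) : ∑ k ∈ Icc 1 n, EE A k * mm C (n-k) = 0 := by
  have expand : ∀ k ∈ Icc 1 n, EE A k * mm C (n-k) =
      2*(k:ℝ) * (uu A k * mm C (n-k)) + 2 * (uu A k * mm C (n-k))
      + (∑ a ∈ Icc 1 (k-1), uu A a * uu A (k-a)) * mm C (n-k)
      - (if k = 1 then (4:ℝ) else 0) * mm C (n-k) := by
    intro k _; rw [EE]; ring
  rw [Finset.sum_congr rfl expand]
  have hsplit :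
      ∑ k ∈ Icc 1 n, (2*(k:ℝ) * (uu A k * mm C (n-k)) + 2 * (uu A k * mm C (n-k))
        + (∑ a ∈ Icc 1 (k-1), uu A a * uu A (k-a)) * mm C (n-k)
        - (if k = 1 then (4:ℝ) else 0) * mm C (n-k))
      = (∑ k ∈ Icc 1 n, 2*(k:ℝ) * (uu A k * mm C (n-k)))
        + (∑ k ∈ Icc 1 n, 2 * (uu A k * mm C (n-k)))
        + (∑ k ∈ Icc 1 n, (∑ a ∈ Icc 1 (k-1), uu A a * uu A (k-a)) * mm C (n-k))
        - (∑ k ∈ Icc 1 n, (if k = 1 then (4:ℝ) else 0) * mm C (n-k)) := by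
    rw [Finset.sum_sub_distrib, Finset.sum_add_distrib, Finset.sum_add_distrib]
  rw [hsplit]
  -- piece B
  have hB : (∑ k ∈ Icc 1 n, 2 * (uu A k * mm C (n-k))) = 4*(n:ℝ) * mm C n := by
    rw [← Finset.mul_sum, ← hR1 n hn]; ring
  -- piece D
  have hD : (∑ k ∈ Icc 1 n, (if k = 1 then (4:ℝ) else 0) * mm C (n-k)) = 4 * mm C (n-1) := by
    rw [Finset.sum_eq_single 1]
    · simp
    · intro b _ hb; simp [hb]
    · intro h; exact absurd (Finset.mem_Icc.mpr ⟨le_refl 1, hn⟩) h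
  -- piece P3 : double sum
  have hP3 : (∑ k ∈ Icc 1 n, (∑ a ∈ Icc 1 (k-1), uu A a * uu A (k-a)) * mm C (n-k))
      = ∑ a ∈ Icc 1 (n-1), uu A a * (2*((n:ℝ)-(a:ℝ)) * mm C (n-a)) := by
    have step1 : ∀ k ∈ Icc 1 n, (∑ a ∈ Icc 1 (k-1), uu A a * uu A (k-a)) * mm C (n-k)
        = ∑ a ∈ Icc 1 (k-1), uu A a * uu A (k-a) * mm C (n-k) := by
      intro k _; rw [Finset.sum_mul]
    have step2 : ∀ a ∈ Icc 1 (n-1), uu A a * (2*((n:ℝ)-(a:ℝ)) * mm C (n-a))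
        = ∑ b ∈ Icc 1 (n-a), uu A a * (uu A b * mm C ((n-a) - b)) := by
      intro a ha
      simp only [mem_Icc] at ha
      rw [← Finset.mul_sum, ← hR1 (n-a) (by omega)]
      have : ((n - a : ℕ) : ℝ) = (n:ℝ) - (a:ℝ) := by
        rw [Nat.cast_sub (by omega)]
      rw [this]
    have mid : (∑ x ∈ (Icc 1 n).sigma (fun k => Icc 1 (k-1)), uu A x.2 * uu A (x.1 - x.2) * mm C (n - x.1))
        = ∑ x ∈ (Icc 1 (n-1)).sigma (fun a => Icc 1 (n-a)), uu A x.1 * (uu A x.2 * mm C ((n - x.1) - x.2)) := by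
      refine Finset.sum_nbij' (fun x => ⟨x.2, x.1 - x.2⟩) (fun y => ⟨y.1 + y.2, y.1⟩) ?_ ?_ ?_ ?_ ?_
      · intro x hx
        simp only [Finset.mem_sigma, Finset.mem_Icc] at hx ⊢
        omega
      · intro y hy
        simp only [Finset.mem_sigma, Finset.mem_Icc] at hy ⊢
        omega
      · rintro ⟨k, a⟩ hx
        simp only [Finset.mem_sigma, Finset.mem_Icc] at hx
        show (⟨a + (k - a), a⟩ : (_ : ℕ) × ℕ) = ⟨k, a⟩
        have e : a + (k - a) = k := by omega
        rw [e]
      · rintro ⟨a, b⟩ hy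
        simp only [Finset.mem_sigma, Finset.mem_Icc] at hy
        show (⟨a, a + b - a⟩ : (_ : ℕ) × ℕ) = ⟨a, b⟩
        have e : a + b - a = b := by omega
        rw [e]
      · intro x hx
        simp only [Finset.mem_sigma, Finset.mem_Icc] at hx
        have e1 : x.1 - (x.1 - x.2) = x.2 := by omega
        have e2 : (n - x.2) - (x.1 - x.2) = n - x.1 := by omega
        simp only [e1, e2]
        ring
    calc (∑ k ∈ Icc 1 n, (∑ a ∈ Icc 1 (k-1), uu A a * uu A (k-a)) * mm C (n-k))
        = ∑ k ∈ Icc 1 n, ∑ a ∈ Icc 1 (k-1), uu A a * uu A (k-a) * mm C (n-k) :=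
          Finset.sum_congr rfl step1
      _ = ∑ x ∈ (Icc 1 n).sigma (fun k => Icc 1 (k-1)), uu A x.2 * uu A (x.1 - x.2) * mm C (n - x.1) :=
          Finset.sum_sigma' (Icc 1 n) (fun k => Icc 1 (k-1)) (fun k a => uu A a * uu A (k-a) * mm C (n-k))
      _ = ∑ x ∈ (Icc 1 (n-1)).sigma (fun a => Icc 1 (n-a)), uu A x.1 * (uu A x.2 * mm C ((n - x.1) - x.2)) := mid
      _ = ∑ a ∈ Icc 1 (n-1), ∑ b ∈ Icc 1 (n-a), uu A a * (uu A b * mm C ((n-a) - b)) :=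
          (Finset.sum_sigma' (Icc 1 (n-1)) (fun a => Icc 1 (n-a)) (fun a b => uu A a * (uu A b * mm C ((n-a) - b)))).symm
      _ = ∑ a ∈ Icc 1 (n-1), uu A a * (2*((n:ℝ)-(a:ℝ)) * mm C (n-a)) :=
          (Finset.sum_congr rfl step2).symm
  rw [hB, hD, hP3]
  -- combine piece A with P3
  have hA' : (∑ k ∈ Icc 1 n, 2*(k:ℝ) * (uu A k * mm C (n-k)))
      + (∑ a ∈ Icc 1 (n-1), uu A a * (2*((n:ℝ)-(a:ℝ)) * mm C (n-a)))
      = 4*(n:ℝ)^2 * mm C n := by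
    obtain ⟨m, rfl⟩ : ∃ m, n = m + 1 := ⟨n-1, by omega⟩
    rw [Finset.sum_Icc_succ_top (by omega : 1 ≤ m+1)]
    push_cast
    rw [show (m - m) = (m+1-(m+1)) from by omega]
    have merge : ∀ k ∈ Icc 1 m, 2*(k:ℝ) * (uu A k * mm C (m+1-k))
        + uu A k * (2*(((m:ℝ)+1)-(k:ℝ)) * mm C (m+1-k))
        = 2*((m:ℝ)+1) * (uu A k * mm C (m+1-k)) := by
      intro k _; ring
    have hs : ∑ k ∈ Icc 1 (m+1), uu A k * mm C (m+1-k) = 2*((m:ℝ)+1) * mm C (m+1) := by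
      rw [← hR1 (m+1) (by omega)]; push_cast; ring
    calc ∑ k ∈ Icc 1 m, 2*(k:ℝ) * (uu A k * mm C (m+1-k))
          + 2*((m:ℝ)+1) * (uu A (m+1) * mm C (m+1-(m+1)))
          + ∑ a ∈ Icc 1 m, uu A a * (2*(((m:ℝ)+1)-(a:ℝ)) * mm C (m+1-a))
        = (∑ k ∈ Icc 1 m, (2*(k:ℝ) * (uu A k * mm C (m+1-k))
            + uu A k * (2*(((m:ℝ)+1)-(k:ℝ)) * mm C (m+1-k))))
          + 2*((m:ℝ)+1) * (uu A (m+1) * mm C (m+1-(m+1))) := by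
          rw [Finset.sum_add_distrib]; ring
      _ = (∑ k ∈ Icc 1 m, 2*((m:ℝ)+1) * (uu A k * mm C (m+1-k)))
          + 2*((m:ℝ)+1) * (uu A (m+1) * mm C (m+1-(m+1))) := by
          rw [Finset.sum_congr rfl merge]
      _ = ∑ k ∈ Icc 1 (m+1), 2*((m:ℝ)+1) * (uu A k * mm C (m+1-k)) := by
          rw [Finset.sum_Icc_succ_top (by omega : 1 ≤ m+1)]
      _ = 2*((m:ℝ)+1) * ∑ k ∈ Icc 1 (m+1), uu A k * mm C (m+1-k) := by
          rw [Finset.mul_sum]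
      _ = 2*((m:ℝ)+1) * (2*((m:ℝ)+1) * mm C (m+1)) := by rw [hs]
      _ = 4*((m:ℝ)+1)^2 * mm C (m+1) := by ring
  have goal1 : (∑ k ∈ Icc 1 n, 2*(k:ℝ) * (uu A k * mm C (n-k)))
      + 4*(n:ℝ) * mm C n
      + (∑ a ∈ Icc 1 (n-1), uu A a * (2*((n:ℝ)-(a:ℝ)) * mm C (n-a)))
      - 4 * mm C (n-1)
      = 4*(n:ℝ)^2 * mm C n + 4*(n:ℝ) * mm C n - 4 * mm C (n-1) := by
    linarith [hA']
  rw [goal1]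
  have := hR2 n hn
  linarith [this]

include hR1 hR2 hm0 in
lemma EEzero : ∀ n : ℕ, 1 ≤ n → EE A n = 0 := by
  intro n
  induction n using Nat.strong_induction_on with
  | _ n IH =>
    intro hn
    have h := keysum C A hR1 hR2 hm0 n hn
    obtain ⟨m, rfl⟩ : ∃ m, n = m + 1 := ⟨n-1, by omega⟩
    rw [Finset.sum_Icc_succ_top (by omega : 1 ≤ m+1)] at h
    have hz : ∑ k ∈ Icc 1 m, EE A k * mm C (m+1-k) = 0 := by
      apply Finset.sum_eq_zero
      intro k hk
      simp only [mem_Icc] at hk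
      rw [IH k (by omega) (by omega)]
      ring
    rw [hz] at h
    have e : m + 1 - (m+1) = 0 := Nat.sub_self _
    rw [e, hm0, zero_add, mul_one] at h
    exact h
end


noncomputable def Y (A : ℕ → ℝ) (j : ℕ) : ℝ := A j / (2 * ((2*j-1)! : ℝ))

lemma uu_eq_Y (A : ℕ → ℝ) (j : ℕ) : uu A j = (-1)^(j-1) * (2 * Y A j) := by
  rw [uu, Y]
  have : ((2*j-1)! : ℝ) ≠ 0 := by positivity
  field_simp

section
variable (C A : ℕ → ℝ)
  (hEE : ∀ n : ℕ, 1 ≤ n → EE A n = 0)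

include hEE in
lemma yrec (n : ℕ) (hn : 2 ≤ n) :
    ((n:ℝ)+1) * Y A n = ∑ a ∈ Icc 1 (n-1), Y A a * Y A (n-a) := by
  have h := hEE n (by omega)
  rw [EE, if_neg (by omega : ¬ n = 1)] at h
  have hsum : ∑ a ∈ Icc 1 (n-1), uu A a * uu A (n-a)
      = (-1:ℝ)^(n-2) * (4 * ∑ a ∈ Icc 1 (n-1), Y A a * Y A (n-a)) := by
    calc ∑ a ∈ Icc 1 (n-1), uu A a * uu A (n-a)
        = ∑ a ∈ Icc 1 (n-1), (-1:ℝ)^(n-2) * (4 * (Y A a * Y A (n-a))) := by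
          refine Finset.sum_congr rfl ?_
          intro a ha
          simp only [mem_Icc] at ha
          rw [uu_eq_Y, uu_eq_Y]
          have e : (a-1) + (n-a-1) = n-2 := by omega
          calc (-1:ℝ)^(a-1) * (2 * Y A a) * ((-1)^(n-a-1) * (2 * Y A (n-a)))
              = ((-1:ℝ)^(a-1) * (-1)^(n-a-1)) * (4 * (Y A a * Y A (n-a))) := by ring
            _ = (-1:ℝ)^(n-2) * (4 * (Y A a * Y A (n-a))) := by rw [← pow_add, e]
      _ = (-1:ℝ)^(n-2) * (4 * ∑ a ∈ Icc 1 (n-1), Y A a * Y A (n-a)) := by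
          rw [← Finset.mul_sum, ← Finset.mul_sum]
  have hsign : (-1:ℝ)^(n-1) = -(-1:ℝ)^(n-2) := by
    conv_lhs => rw [show n-1 = (n-2)+1 from by omega]
    rw [pow_succ]; ring
  rw [uu_eq_Y, hsign, hsum] at h
  have h2 : (-1:ℝ)^(n-2) * ((4 * ∑ a ∈ Icc 1 (n-1), Y A a * Y A (n-a)) - (4*(n:ℝ)+4) * Y A n) = 0 := by
    linear_combination h
  have hpow : (-1:ℝ)^(n-2) ≠ 0 := pow_ne_zero _ (by norm_num)
  rcases mul_eq_zero.mp h2 with hc | hc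
  · exact absurd hc hpow
  · linarith [hc]


lemma splitbot (g : ℕ → ℝ) (n : ℕ) (hn : 1 ≤ n) :
    ∑ a ∈ Icc 1 n, g a = g 1 + ∑ b ∈ Icc 1 (n-1), g (b+1) := by
  rw [← Finset.Ico_add_one_right_eq_Icc, Finset.sum_eq_sum_Ico_succ_bot (by omega : 1 < n+1)]
  congr 1
  refine Finset.sum_nbij' (fun x => x - 1) (fun x => x + 1) ?_ ?_ ?_ ?_ ?_ <;>
    intro x hx <;> simp only [Finset.mem_Ico, Finset.mem_Icc] at hx ⊢ <;> try omega
  congr 1; omega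

include hEE in
lemma ypos (hA1 : A 1 = 1) : ∀ n : ℕ, 1 ≤ n → 0 < Y A n := by
  intro n
  induction n using Nat.strong_induction_on with
  | _ n IH =>
    intro hn
    rcases Nat.lt_or_ge n 2 with h2 | h2
    · have e : n = 1 := by omega
      rw [e, Y, hA1]
      norm_num
    · have hr := yrec A hEE n h2
      have hS : 0 < ∑ a ∈ Icc 1 (n-1), Y A a * Y A (n-a) := by
        apply Finset.sum_pos
        · intro a ha
          simp only [mem_Icc] at ha
          exact mul_pos (IH a (by omega) (by omega)) (IH (n-a) (by omega) (by omega))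
        · exact ⟨1, Finset.mem_Icc.mpr ⟨le_refl 1, by omega⟩⟩
      nlinarith [hr, hS, (Nat.cast_pos (α := ℝ)).mpr (by omega : 0 < n)]

include hEE in
lemma y1val (hA1 : A 1 = 1) : Y A 1 = 1/2 := by
  rw [Y, hA1]; norm_num

include hEE in
lemma y2val (hA1 : A 1 = 1) : Y A 2 = 1/12 := by
  have hr := yrec A hEE 2 (le_refl 2)
  have : (2:ℕ) - 1 = 1 := rfl
  rw [this] at hr
  rw [Finset.Icc_self, Finset.sum_singleton] at hr
  have h1 : Y A 1 = 1/2 := y1val A hEE hA1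
  rw [show (2:ℕ) - 1 = 1 from rfl, h1] at hr
  push_cast at hr
  linarith

include hEE in
lemma yl (hA1 : A 1 = 1) : ∀ n : ℕ, 1 ≤ n → Y A n / 6 ≤ Y A (n+1) := by
  intro n
  induction n using Nat.strong_induction_on with
  | _ n IH =>
    intro hn
    rcases Nat.lt_or_ge n 2 with h2 | h2
    · have e : n = 1 := by omega
      subst e
      rw [y1val A hEE hA1, y2val A hEE hA1]
      norm_num
    · have hr := yrec A hEE (n+1) (by omega)
      have e1 : n + 1 - 1 = n := rfl
      rw [e1] at hr
      rw [splitbot (fun a => Y A a * Y A (n+1-a)) n (by omega)] at hr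
      have e2 : ∀ b ∈ Icc 1 (n-1), Y A b / 6 * Y A (n-b) ≤ Y A (b+1) * Y A (n-b) := by
        intro b hb
        simp only [mem_Icc] at hb
        exact mul_le_mul_of_nonneg_right (IH b (by omega) (by omega))
          (le_of_lt (ypos A hEE hA1 (n-b) (by omega)))
      have hsum : (∑ b ∈ Icc 1 (n-1), Y A b / 6 * Y A (n-b))
          ≤ ∑ b ∈ Icc 1 (n-1), Y A (b+1) * Y A (n-b) := Finset.sum_le_sum e2
      have hfac : (∑ b ∈ Icc 1 (n-1), Y A b / 6 * Y A (n-b))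
          = (((n:ℝ)+1) * Y A n) / 6 := by
        rw [yrec A hEE n h2, Finset.sum_div]
        refine Finset.sum_congr rfl ?_
        intro b _; ring
      have h1 : Y A 1 * Y A (n+1-1) = Y A n / 2 := by
        rw [y1val A hEE hA1, show n+1-1 = n from rfl]; ring
      rw [h1] at hr
      push_cast at hr
      have hYn : 0 < Y A n := ypos A hEE hA1 n (by omega)
      have hn1 : (0:ℝ) < (n:ℝ) + 2 := by positivity
      have key : ((n:ℝ)+1+1) * Y A (n+1) ≥ Y A n / 2 + (((n:ℝ)+1) * Y A n) / 6 := by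
        rw [hr]
        have := le_trans (le_of_eq hfac.symm) hsum
        linarith [this]
      have final : Y A n / 2 + (((n:ℝ)+1) * Y A n) / 6 ≥ ((n:ℝ)+2) * (Y A n / 6) := by
        nlinarith [hYn]
      have : ((n:ℝ)+2) * (Y A n / 6) ≤ ((n:ℝ)+2) * Y A (n+1) := by
        push_cast at key
        linarith [key, final]
      exact le_of_mul_le_mul_left (by linarith [this]) hn1

include hEE in
lemma yu (hA1 : A 1 = 1) : ∀ n : ℕ, 1 ≤ n → Y A (n+1) ≤ Y A n / 2 := by
  intro n
  induction n using Nat.strong_induction_on with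
  | _ n IH =>
    intro hn
    rcases Nat.lt_or_ge n 2 with h2 | h2
    · have e : n = 1 := by omega
      subst e
      rw [y1val A hEE hA1, y2val A hEE hA1]
      norm_num
    · have hr := yrec A hEE (n+1) (by omega)
      have e1 : n + 1 - 1 = n := rfl
      rw [e1] at hr
      rw [splitbot (fun a => Y A a * Y A (n+1-a)) n (by omega)] at hr
      have e2 : ∀ b ∈ Icc 1 (n-1), Y A (b+1) * Y A (n-b) ≤ Y A b / 2 * Y A (n-b) := by
        intro b hb
        simp only [mem_Icc] at hb
        exact mul_le_mul_of_nonneg_right (IH b (by omega) (by omega))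
          (le_of_lt (ypos A hEE hA1 (n-b) (by omega)))
      have hsum : (∑ b ∈ Icc 1 (n-1), Y A (b+1) * Y A (n-b))
          ≤ ∑ b ∈ Icc 1 (n-1), Y A b / 2 * Y A (n-b) := Finset.sum_le_sum e2
      have hfac : (∑ b ∈ Icc 1 (n-1), Y A b / 2 * Y A (n-b))
          = (((n:ℝ)+1) * Y A n) / 2 := by
        rw [yrec A hEE n h2, Finset.sum_div]
        refine Finset.sum_congr rfl ?_
        intro b _; ring
      have h1 : Y A 1 * Y A (n+1-1) = Y A n / 2 := by
        rw [y1val A hEE hA1, show n+1-1 = n from rfl]; ring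
      rw [h1] at hr
      push_cast at hr
      have hn1 : (0:ℝ) < (n:ℝ) + 2 := by positivity
      have key : ((n:ℝ)+1+1) * Y A (n+1) ≤ Y A n / 2 + (((n:ℝ)+1) * Y A n) / 2 := by
        rw [hr]
        linarith [le_trans hsum (le_of_eq hfac)]
      have : ((n:ℝ)+2) * Y A (n+1) ≤ ((n:ℝ)+2) * (Y A n / 2) := by
        push_cast at key
        linarith [key]
      exact le_of_mul_le_mul_left this hn1

include hEE in
lemma yb (hA1 : A 1 = 1) : ∀ n : ℕ, 1 ≤ n → Y A n ≤ (1/2)^n := by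
  intro n
  induction n with
  | zero => intro h; omega
  | succ m IH =>
    intro _
    rcases Nat.lt_or_ge m 1 with h1 | h1
    · have : m = 0 := by omega
      subst this
      rw [y1val A hEE hA1]
      norm_num
    · calc Y A (m+1) ≤ Y A m / 2 := yu A hEE hA1 m h1
        _ ≤ (1/2)^m / 2 := by linarith [IH h1]
        _ = (1/2)^(m+1) := by rw [pow_succ]; ring

end


lemma factIneq : ∀ n : ℕ, 3 ≤ n → 2*(((n-1))! : ℝ)*(((n+1))! : ℝ) < ((n:ℝ)*((n:ℝ)+2)/3)^n := by
  intro n hn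
  induction n, hn using Nat.le_induction with
  | base => norm_num [Nat.factorial]
  | succ n hn3 IH =>
    have hn3' : (3:ℝ) ≤ (n:ℝ) := by exact_mod_cast hn3
    have hn0 : (0:ℝ) < (n:ℝ) := by linarith
    have hfn : ((n !) : ℝ) = (n:ℝ) * (((n-1))! : ℝ) := by
      conv_lhs => rw [show n = (n-1)+1 from by omega]
      rw [Nat.factorial_succ]
      rw [Nat.cast_mul, Nat.cast_add, Nat.cast_sub (by omega : 1 ≤ n)]
      push_cast; ring
    have hfn2 : (((n+2))! : ℝ) = ((n:ℝ)+2) * (((n+1))! : ℝ) := by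
      rw [show n+2 = (n+1)+1 from rfl, Nat.factorial_succ]
      push_cast; ring
    set p : ℝ := (1 + 1/(n:ℝ))^n with hp
    set q : ℝ := (1 + 1/((n:ℝ)+2))^n with hq
    have hb1 : 2 ≤ p := by
      have h := one_add_mul_le_pow (a := 1/(n:ℝ)) (le_trans (by norm_num : (-2:ℝ) ≤ 0) (by positivity)) n
      have : (n:ℝ) * (1/(n:ℝ)) = 1 := by field_simp
      rw [this] at h
      linarith
    have hb2 : 3/2 ≤ q := by
      have h := one_add_mul_le_pow (a := 1/((n:ℝ)+2)) (le_trans (by norm_num : (-2:ℝ) ≤ 0) (by positivity)) n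
      have h2 : 1/2 ≤ (n:ℝ) * (1/((n:ℝ)+2)) := by
        rw [mul_one_div, le_div_iff₀ (by positivity)]
        linarith
      linarith
    have hq0 : 0 < q := by positivity
    have hpq : 3 ≤ p * q := by nlinarith [hb1, hb2, hq0]
    set R : ℝ := (n:ℝ)*((n:ℝ)+2)/3 with hR
    have hR0 : 0 < R := by positivity
    have hRn : 0 < R^n := by positivity
    have hbase : ((n:ℝ)+1)*(((n:ℝ)+1)+2)/3 = R * ((1 + 1/(n:ℝ)) * (1 + 1/((n:ℝ)+2))) := by
      field_simp
      ring
    have hpow : (((n:ℝ)+1)*(((n:ℝ)+1)+2)/3)^(n+1)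
        = (R * ((1 + 1/(n:ℝ)) * (1 + 1/((n:ℝ)+2))))^n * (((n:ℝ)+1)*(((n:ℝ)+1)+2)/3) := by
      rw [pow_succ, hbase]
    have hsplit2 : (R * ((1 + 1/(n:ℝ)) * (1 + 1/((n:ℝ)+2))))^n = R^n * (p * q) := by
      rw [mul_pow, mul_pow]
    have hS : ((n:ℝ)+1)*(((n:ℝ)+1)+2) ≥ (n:ℝ)*((n:ℝ)+2) := by nlinarith
    have main2 : (n:ℝ)*((n:ℝ)+2) * R^n ≤ (((n:ℝ)+1)*(((n:ℝ)+1)+2)/3)^(n+1) := by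
      rw [hpow, hsplit2]
      have h3S : 3 * (((n:ℝ)+1)*(((n:ℝ)+1)+2)/3) = ((n:ℝ)+1)*(((n:ℝ)+1)+2) := by ring
      nlinarith [hRn, hpq, hS, mul_le_mul_of_nonneg_right hpq (le_of_lt hRn)]
    calc 2*(((n+1-1))! : ℝ)*(((n+1+1))! : ℝ) = (n:ℝ)*((n:ℝ)+2) * (2*(((n-1))! : ℝ)*(((n+1))! : ℝ)) := by
          rw [show n+1-1 = n from rfl, show n+1+1 = n+2 from rfl, hfn2, hfn]
          ring
      _ < (n:ℝ)*((n:ℝ)+2) * R^n := by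
          have := mul_lt_mul_of_pos_left IH (show (0:ℝ) < (n:ℝ)*((n:ℝ)+2) by positivity)
          exact this
      _ ≤ (((n:ℝ)+1)*(((n:ℝ)+1)+2)/3)^(n+1) := main2
      _ = ((((n+1:ℕ)):ℝ)*((((n+1:ℕ)):ℝ)+2)/3)^(n+1) := by push_cast; ring_nf


lemma aval (C A a : ℕ → ℝ)
    (hC : ∀ n : ℕ, C n = (Nat.choose (2 * n) n : ℝ) / (n + 1))
    (ha : ∀ n : ℕ, 1 ≤ n → a n = 2 * A n / C n)
    (n : ℕ) (hn : 1 ≤ n) :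
    a n = 2 * (((n-1))! : ℝ) * (((n+1))! : ℝ) * Y A n := by
  obtain ⟨m, rfl⟩ : ∃ m, n = m + 1 := ⟨n-1, by omega⟩
  rw [ha _ (by omega), hC, Y]
  rw [show 2*(m+1)-1 = 2*m+1 from by omega]
  rw [Nat.cast_choose ℝ (by omega : m+1 ≤ 2*(m+1))]
  rw [show 2*(m+1) - (m+1) = m+1 from by omega]
  rw [show m+1-1 = m from rfl]
  have f1 : ((2*(m+1))! : ℝ) = (2*(m:ℝ)+2) * ((2*m+1)! : ℝ) := by
    rw [show 2*(m+1) = (2*m+1)+1 from by ring, Nat.factorial_succ]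
    push_cast; ring
  have f2 : (((m+1+1))! : ℝ) = ((m:ℝ)+2) * (((m+1))! : ℝ) := by
    rw [Nat.factorial_succ]; push_cast; ring
  have f3 : (((m+1))! : ℝ) = ((m:ℝ)+1) * ((m)! : ℝ) := by
    rw [Nat.factorial_succ]; push_cast; ring
  rw [f1, f2]
  have h1 : ((2*m+1)! : ℝ) ≠ 0 := by positivity
  have h2 : (((m+1))! : ℝ) ≠ 0 := by positivity
  have h3 : ((m:ℝ)+1) ≠ 0 := by positivity
  have h4 : ((m:ℝ)+1+1) ≠ 0 := by positivity
  have h5 : (2*(m:ℝ)+2) ≠ 0 := by positivity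
  have h6 : ((m)! : ℝ) ≠ 0 := by positivity
  rw [f3]
  field_simp
  push_cast
  ring

/-- Let `C n` be the `n`-th Catalan number and let `A` be the sequence of
Lasalle numbers, determined by `A 1 = 1` and the recurrence
`(−1)^{n−1} A n = C n + ∑_{j=1}^{n−1} (−1)^j (2n−1 choose 2j−1) A j C_{n−j}`.
Then the sequence `{(a n)^{1/n}}_{n ≥ 2}` of `n`-th roots of the normalized
Lasalle numbers `a n = 2 A n / C n` is strictly increasing. -/
theorem lasalle_nthRoot_strictMono (C A a : ℕ → ℝ)
    (hC : ∀ n : ℕ, C n = (Nat.choose (2 * n) n : ℝ) / (n + 1))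
    (hA1 : A 1 = 1)
    (hA : ∀ n : ℕ, 1 ≤ n →
      (-1 : ℝ) ^ (n - 1) * A n =
        C n + ∑ j ∈ Finset.Ico 1 n,
          (-1 : ℝ) ^ j * (Nat.choose (2 * n - 1) (2 * j - 1) : ℝ) * A j * C (n - j))
    (ha : ∀ n : ℕ, 1 ≤ n → a n = 2 * A n / C n)
    (n : ℕ) (hn : 2 ≤ n) :
    a n ^ ((1 : ℝ) / n) < a (n + 1) ^ ((1 : ℝ) / (n + 1)) := by
  have hR1' := R1 C A hC hA
  have hR2' := R2 C hC
  have hm0 := mm_zero C hC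
  have hEE := EEzero C A hR1' hR2' hm0
  have hYpos := ypos A hEE hA1
  -- positivity of a
  have hapos : ∀ k : ℕ, 1 ≤ k → 0 < a k := by
    intro k hk
    rw [aval C A a hC ha k hk]
    have := hYpos k hk
    positivity
  have hx : 0 < a n := hapos n (by omega)
  have hz : 0 < a (n+1) := hapos (n+1) (by omega)
  -- main power inequality
  have hkey : a n ^ (n+1) < a (n+1) ^ n := by
    rcases Nat.lt_or_ge n 3 with h3 | h3
    · -- n = 2
      have e : n = 2 := by omega
      subst e
      have y2 : Y A 2 = 1/12 := y2val A hEE hA1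
      have y3 : Y A 3 = 1/48 := by
        have hr := yrec A hEE 3 (by omega)
        rw [show (3:ℕ)-1 = 2 from rfl] at hr
        rw [show Finset.Icc 1 2 = {1, 2} from rfl] at hr
        rw [Finset.sum_insert (by decide), Finset.sum_singleton] at hr
        rw [show (3:ℕ)-1 = 2 from rfl, show (3:ℕ)-2 = 1 from rfl] at hr
        rw [y1val A hEE hA1, y2] at hr
        push_cast at hr
        linarith
      have ha2 : a 2 = 1 := by
        rw [aval C A a hC ha 2 (by omega), y2]
        norm_num [Nat.factorial]
      have ha3 : a 3 = 2 := by
        rw [aval C A a hC ha 3 (by omega), y3]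
        norm_num [Nat.factorial]
      rw [ha2, ha3]
      norm_num
    · -- n ≥ 3
      have h3' : (3:ℝ) ≤ (n:ℝ) := by exact_mod_cast h3
      set F : ℝ := 2 * (((n-1))! : ℝ) * (((n+1))! : ℝ) with hF
      have hFpos : 0 < F := by positivity
      have hyn : 0 < Y A n := hYpos n (by omega)
      have han : a n = F * Y A n := aval C A a hC ha n (by omega)
      have hFstep : 2 * ((n)! : ℝ) * (((n+2))! : ℝ) = F * ((n:ℝ) * ((n:ℝ)+2)) := by
        have f2 : (((n+2))! : ℝ) = ((n:ℝ)+2) * (((n+1))! : ℝ) := by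
          rw [show n+2 = (n+1)+1 from rfl, Nat.factorial_succ]; push_cast; ring
        have f3 : ((n)! : ℝ) = (n:ℝ) * (((n-1))! : ℝ) := by
          conv_lhs => rw [show n = (n-1)+1 from by omega]
          rw [Nat.factorial_succ]
          rw [Nat.cast_mul, Nat.cast_add, Nat.cast_sub (by omega : 1 ≤ n)]
          push_cast; ring
        rw [f2, f3, hF]; ring
      have han1 : a (n+1) = (F * ((n:ℝ) * ((n:ℝ)+2))) * Y A (n+1) := by
        rw [aval C A a hC ha (n+1) (by omega)]
        rw [show n+1-1 = n from rfl, show n+1+1 = n+2 from rfl]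
        rw [← hFstep]
      have hyl' : Y A n / 6 ≤ Y A (n+1) := yl A hEE hA1 n (by omega)
      have hyb' : Y A n ≤ (1/2)^n := yb A hEE hA1 n (by omega)
      have hfi := factIneq n h3
      -- F * Y A n < (n(n+2)/6)^n
      have hmid : F * Y A n < ((n:ℝ) * ((n:ℝ)+2) / 6)^n := by
        have s1 : F * Y A n ≤ F * (1/2)^n :=
          mul_le_mul_of_nonneg_left hyb' hFpos.le
        have s2 : F * (1/2)^n < ((n:ℝ)*((n:ℝ)+2)/3)^n * (1/2)^n := by
          apply mul_lt_mul_of_pos_right hfi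
          positivity
        have s3 : ((n:ℝ)*((n:ℝ)+2)/3)^n * (1/2)^n = ((n:ℝ)*((n:ℝ)+2)/6)^n := by
          rw [← mul_pow]
          congr 1
          ring
        calc F * Y A n ≤ F * (1/2)^n := s1
          _ < ((n:ℝ)*((n:ℝ)+2)/3)^n * (1/2)^n := s2
          _ = ((n:ℝ)*((n:ℝ)+2)/6)^n := s3
      have hFy : 0 < F * Y A n := by positivity
      calc a n ^ (n+1) = (F * Y A n)^n * (F * Y A n) := by rw [han, pow_succ]
        _ < (F * Y A n)^n * ((n:ℝ)*((n:ℝ)+2)/6)^n := by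
            apply mul_lt_mul_of_pos_left hmid
            positivity
        _ = ((F * Y A n) * ((n:ℝ)*((n:ℝ)+2)/6))^n := by rw [← mul_pow]
        _ = ((F * ((n:ℝ)*((n:ℝ)+2))) * (Y A n / 6))^n := by ring_nf
        _ ≤ ((F * ((n:ℝ)*((n:ℝ)+2))) * Y A (n+1))^n := by
            apply pow_le_pow_left₀
            · positivity
            · apply mul_le_mul_of_nonneg_left hyl'
              positivity
        _ = a (n+1) ^ n := by rw [han1]
  -- rpow wrap-up
  have hn0 : ((n:ℝ)) ≠ 0 := by
    have : (2:ℝ) ≤ (n:ℝ) := by exact_mod_cast hn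
    linarith
  have hn1 : ((n:ℝ)+1) ≠ 0 := by
    have : (2:ℝ) ≤ (n:ℝ) := by exact_mod_cast hn
    linarith
  set p : ℝ := 1/((n:ℝ)*((n:ℝ)+1)) with hp
  have hppos : 0 < p := by
    have : (2:ℝ) ≤ (n:ℝ) := by exact_mod_cast hn
    rw [hp]
    positivity
  have e1 : a n ^ ((1:ℝ)/n) = (a n ^ (n+1 : ℕ)) ^ p := by
    rw [← Real.rpow_natCast (a n) (n+1), ← Real.rpow_mul hx.le]
    congr 1
    push_cast
    have hnn : (n:ℝ) + (n:ℝ)^2 ≠ 0 := by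
      have : (2:ℝ) ≤ (n:ℝ) := by exact_mod_cast hn
      nlinarith
    rw [hp]
    field_simp
  have e2 : a (n+1) ^ ((1:ℝ)/(n+1)) = (a (n+1) ^ (n : ℕ)) ^ p := by
    rw [← Real.rpow_natCast (a (n+1)) n, ← Real.rpow_mul hz.le]
    congr 1
    push_cast
    have hnn : (n:ℝ) + (n:ℝ)^2 ≠ 0 := by
      have : (2:ℝ) ≤ (n:ℝ) := by exact_mod_cast hn
      nlinarith
    rw [hp]
    field_simp
  rw [e1, e2]
  exact Real.rpow_lt_rpow (by positivity) hkey hppos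
end

section
/- For every real number x > 1, the function B(x) = (1/e)·∑_{k≥0} k^x/k! satisfies B(x)·B''(x) − (B'(x))² > 0, where B'(x) = (1/e)∑_{k≥1} k^x (log k)/k! and B''(x) = (1/e)∑_{k≥1} k^x (log k)²/k!. Equivalently, the second derivative of log B(x) is strictly positive for x > 1. -/
open Real

/-- auxiliary: `k^y ≤ (e^y)^k` for naturals `k`, `y > 0`. -/
lemma aux_rpow_le (y : ℝ) (hy : 0 < y) (k : ℕ) :
    (k : ℝ) ^ y ≤ (Real.exp y) ^ k := by
  rcases Nat.eq_zero_or_pos k with hk | hk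
  · subst hk
    simp [Real.zero_rpow hy.ne']
  · have hk0 : (0 : ℝ) < k := by exact_mod_cast hk
    rw [← Real.exp_log hk0, ← Real.exp_nat_mul, ← Real.exp_mul]
    apply Real.exp_le_exp.mpr
    have hlog : Real.log k ≤ k := (Real.log_le_sub_one_of_pos hk0).trans (by linarith)
    nlinarith [Real.log_nonneg (by exact_mod_cast hk : (1:ℝ) ≤ k)]

lemma aux_summable_rpow (y : ℝ) (hy : 0 < y) :
    Summable (fun k : ℕ => (k : ℝ) ^ y / (Nat.factorial k : ℝ)) := by
  refine Summable.of_nonneg_of_le (fun k => by positivity)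
    (fun k => ?_) (Real.summable_pow_div_factorial (Real.exp y))
  exact div_le_div_of_nonneg_right (aux_rpow_le y hy k) (by positivity)

lemma aux_summable_logpow (x : ℝ) (hx : 0 < x) (n : ℕ) :
    Summable (fun k : ℕ => (k : ℝ) ^ x * (Real.log k) ^ n / (Nat.factorial k : ℝ)) := by
  refine Summable.of_nonneg_of_le (fun k => ?_) (fun k => ?_)
    (aux_summable_rpow (x + n) (by positivity))
  · have : (0:ℝ) ≤ Real.log k := by
      rcases Nat.eq_zero_or_pos k with hk | hk
      · simp [hk]
      · exact Real.log_nonneg (by exact_mod_cast hk)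
    positivity
  · rcases Nat.eq_zero_or_pos k with hk | hk
    · subst hk
      simp [Real.zero_rpow (by positivity : x + (n:ℝ) ≠ 0), Real.zero_rpow hx.ne']
    · have hk0 : (0 : ℝ) < k := by exact_mod_cast hk
      have hlognn : (0:ℝ) ≤ Real.log k := Real.log_nonneg (by exact_mod_cast hk)
      have hlog : Real.log k ≤ k := (Real.log_le_sub_one_of_pos hk0).trans (by linarith)
      have h1 : (Real.log k) ^ n ≤ (k:ℝ) ^ n := pow_le_pow_left₀ hlognn hlog n
      have h2 : (k:ℝ) ^ x * (Real.log k) ^ n ≤ (k:ℝ) ^ (x + n) := by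
        rw [Real.rpow_add hk0, Real.rpow_natCast]
        exact mul_le_mul_of_nonneg_left h1 (Real.rpow_nonneg hk0.le x)
      exact div_le_div_of_nonneg_right h2 (by positivity)

/-- The Bell function, defined for real `x > 0` by Dobinski-type series
`B(x) = (1/e) ∑_{k ≥ 0} k^x / k!` (the `k = 0` term vanishes). -/
noncomputable def bellFun (x : ℝ) : ℝ :=
  (1 / Real.exp 1) * ∑' k : ℕ, (k : ℝ) ^ x / (Nat.factorial k : ℝ)

/-- For real `x > 1`, `B(x)·B''(x) − (B'(x))² > 0`, where
`B'(x) = (1/e) ∑ k^x (log k)/k!` and `B''(x) = (1/e) ∑ k^x (log k)²/k!`. -/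
theorem bellFun_mul_deriv2_sub_deriv_sq_pos (x : ℝ) (hx : 1 < x) :
    bellFun x *
        ((1 / Real.exp 1) * ∑' k : ℕ, (k : ℝ) ^ x * (Real.log k) ^ 2 / (Nat.factorial k : ℝ)) -
      ((1 / Real.exp 1) * ∑' k : ℕ, (k : ℝ) ^ x * Real.log k / (Nat.factorial k : ℝ)) ^ 2 > 0 := by
  have hx0 : 0 < x := by linarith
  set a : ℕ → ℝ := fun k => (k : ℝ) ^ x / (Nat.factorial k : ℝ) with ha
  set b : ℕ → ℝ := fun k => (k : ℝ) ^ x * Real.log k / (Nat.factorial k : ℝ) with hb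
  set c : ℕ → ℝ := fun k => (k : ℝ) ^ x * (Real.log k) ^ 2 / (Nat.factorial k : ℝ) with hc
  have hsa : Summable a := aux_summable_rpow x hx0
  have hsb : Summable b := by
    have := aux_summable_logpow x hx0 1
    simpa [hb] using this
  have hsc : Summable c := aux_summable_logpow x hx0 2
  have hannneg : ∀ k, 0 ≤ a k := fun k => by positivity
  have hlognn : ∀ k : ℕ, (0:ℝ) ≤ Real.log k := by
    intro k
    rcases Nat.eq_zero_or_pos k with hk | hk
    · simp [hk]
    · exact Real.log_nonneg (by exact_mod_cast hk)
  have hbnneg : ∀ k, 0 ≤ b k := fun k => by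
    have := hlognn k; simp only [hb]; positivity
  have hcnneg : ∀ k, 0 ≤ c k := fun k => by simp only [hc]; positivity
  set S0 := ∑' k, a k with hS0
  set S1 := ∑' k, b k with hS1
  set S2 := ∑' k, c k with hS2
  -- a 1 = 1
  have ha1 : a 1 = 1 := by simp [ha]
  -- S2 ≥ c 2 > 0
  have hc2 : 0 < c 2 := by
    have h2 : (0:ℝ) < Real.log 2 := Real.log_pos (by norm_num)
    have : (0:ℝ) < (2:ℝ) ^ x := Real.rpow_pos_of_pos (by norm_num) x
    simp only [hc]
    have : ((2:ℕ):ℝ) = (2:ℝ) := by norm_num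
    rw [this]
    positivity
  have hS2pos : 0 < S2 := lt_of_lt_of_le hc2 (Summable.le_tsum hsc 2 fun j _ => hcnneg j)
  -- a' : a with the k = 1 term removed
  set a' : ℕ → ℝ := fun k => if k = 1 then 0 else a k with ha'
  have ha'le : ∀ k, a' k ≤ a k := fun k => by
    rcases eq_or_ne k 1 with h | h
    · subst h; simpa [ha'] using hannneg 1
    · simp [ha', h]
  have ha'nn : ∀ k, 0 ≤ a' k := fun k => by
    by_cases h : k = 1 <;> simp [ha', h, hannneg k]
  have hsa' : Summable a' := hsa.of_nonneg_of_le ha'nn ha'le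
  have htsum_a' : ∑' k, a' k = S0 - 1 := by
    have := Summable.tsum_eq_add_tsum_ite hsa 1
    rw [hS0, this, ha1, ha']
    ring
  -- Cauchy-Schwarz: S1 ^ 2 ≤ (S0 - 1) * S2
  have hS01 : (0:ℝ) ≤ S0 - 1 := by
    have h1 : a 1 ≤ S0 := Summable.le_tsum hsa 1 fun j _ => hannneg j
    rw [ha1] at h1; linarith
  have hCS : S1 ^ 2 ≤ (S0 - 1) * S2 := by
    have hS1le : S1 ≤ Real.sqrt ((S0 - 1) * S2) := by
      refine Summable.tsum_le_of_sum_le hsb (fun F => ?_)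
      set f : ℕ → ℝ := fun k => if k = 1 then 0 else Real.sqrt (a k) with hf
      set g : ℕ → ℝ := fun k => Real.sqrt (a k) * Real.log k with hg
      have hfg : ∀ k, b k = f k * g k := by
        intro k
        by_cases h : k = 1
        · simp [hb, h, hf, hg]
        · simp only [hf, hg, if_neg h]
          rw [← mul_assoc, Real.mul_self_sqrt (hannneg k), hb, ha]
          ring
      have hf2 : ∀ k, f k ^ 2 = a' k := by
        intro k
        by_cases h : k = 1 <;> simp [hf, ha', h, Real.sq_sqrt (hannneg k)]
      have hg2 : ∀ k, g k ^ 2 = c k := by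
        intro k
        simp only [hg, mul_pow, Real.sq_sqrt (hannneg k), hc, ha]
        rw [Real.sq_sqrt (by positivity)]
        ring
      calc ∑ k ∈ F, b k = ∑ k ∈ F, f k * g k := by simp_rw [hfg]
        _ ≤ Real.sqrt ((∑ k ∈ F, f k ^ 2) * ∑ k ∈ F, g k ^ 2) := by
            rw [← Real.sqrt_sq (Finset.sum_nonneg fun k _ =>
              mul_nonneg (by by_cases h : k = 1 <;>
                simp [hf, h, Real.sqrt_nonneg]) (mul_nonneg (Real.sqrt_nonneg _) (hlognn k)))]
            exact Real.sqrt_le_sqrt (Finset.sum_mul_sq_le_sq_mul_sq F f g)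
        _ ≤ Real.sqrt ((S0 - 1) * S2) := by
            apply Real.sqrt_le_sqrt
            apply mul_le_mul
            · simp_rw [hf2]
              rw [← htsum_a']
              exact Summable.sum_le_tsum F (fun k _ => ha'nn k) hsa'
            · simp_rw [hg2]
              exact Summable.sum_le_tsum F (fun k _ => hcnneg k) hsc
            · exact Finset.sum_nonneg fun k _ => by rw [hg2]; exact hcnneg k
            · exact hS01
    have hS1nn : 0 ≤ S1 := tsum_nonneg hbnneg
    calc S1 ^ 2 ≤ Real.sqrt ((S0 - 1) * S2) ^ 2 := by
          apply pow_le_pow_left₀ hS1nn hS1le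
      _ = (S0 - 1) * S2 := Real.sq_sqrt (mul_nonneg hS01 hS2pos.le)
  -- conclude
  have key : 0 < S0 * S2 - S1 ^ 2 := by nlinarith
  have hE : (0:ℝ) < 1 / Real.exp 1 := by positivity
  have : bellFun x = (1 / Real.exp 1) * S0 := rfl
  rw [this]
  have expand : (1 / Real.exp 1) * S0 * ((1 / Real.exp 1) * S2) -
      ((1 / Real.exp 1) * S1) ^ 2 = (1 / Real.exp 1) ^ 2 * (S0 * S2 - S1 ^ 2) := by ring
  calc (0:ℝ) < (1 / Real.exp 1) ^ 2 * (S0 * S2 - S1 ^ 2) := by positivity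
    _ = _ := expand.symm
end

section
/- The function B(x) = (1/e)·∑_{k≥0} k^x/k! is log-convex on (1, ∞): for all real x, y > 1 and all λ ∈ [0,1], B(λx + (1−λ)y) ≤ B(x)^λ · B(y)^{1−λ}. -/
lemma bell_summable (x : ℝ) (hx0 : 0 ≤ x) :
    Summable (fun k : ℕ => (k : ℝ) ^ x / (Nat.factorial k : ℝ)) := by
  apply summable_of_ratio_norm_eventually_le (r := 1/2) (by norm_num)
  filter_upwards [Filter.eventually_ge_atTop (⌈2 * (2:ℝ) ^ x⌉₊ + 1)] with k hk
  have hk1 : 1 ≤ k := le_trans (Nat.le_add_left 1 _) hk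
  have hkc : (2:ℝ) * 2 ^ x ≤ k := by
    calc (2:ℝ) * 2 ^ x ≤ (⌈2 * (2:ℝ) ^ x⌉₊ : ℝ) := Nat.le_ceil _
      _ ≤ k := by exact_mod_cast le_trans (Nat.le_succ _) hk
  have hkpos : (0:ℝ) < k := by positivity
  have hterm : (0:ℝ) ≤ (k:ℝ) ^ x / (Nat.factorial k : ℝ) := by positivity
  have hterm' : (0:ℝ) ≤ ((k+1:ℕ):ℝ) ^ x / (Nat.factorial (k+1) : ℝ) := by positivity
  rw [Real.norm_of_nonneg hterm', Real.norm_of_nonneg hterm]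
  have hfac : (0:ℝ) < (Nat.factorial k : ℝ) := by positivity
  have hfac' : (Nat.factorial (k+1) : ℝ) = ((k:ℝ)+1) * (Nat.factorial k : ℝ) := by
    rw [Nat.factorial_succ]; push_cast; ring
  have key : ((k:ℝ) + 1) ^ x ≤ (1/2) * ((k:ℝ)+1) * (k:ℝ) ^ x := by
    have h1 : ((k:ℝ) + 1) ^ x ≤ ((2:ℝ) * k) ^ x := by
      apply Real.rpow_le_rpow (by positivity) _ hx0
      have : (1:ℝ) ≤ k := by exact_mod_cast hk1
      linarith
    have h2 : ((2:ℝ) * k) ^ x = 2 ^ x * (k:ℝ) ^ x :=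
      Real.mul_rpow (by norm_num) (le_of_lt hkpos)
    have h3 : (2:ℝ) ^ x ≤ (1/2) * ((k:ℝ)+1) := by nlinarith
    have hkx : (0:ℝ) ≤ (k:ℝ) ^ x := by positivity
    calc ((k:ℝ) + 1) ^ x ≤ 2 ^ x * (k:ℝ) ^ x := by rw [← h2]; exact h1
      _ ≤ (1/2) * ((k:ℝ)+1) * (k:ℝ) ^ x := by nlinarith
  push_cast
  rw [hfac', div_le_iff₀ (by positivity)]
  have heq : (1:ℝ)/2 * ((k:ℝ) ^ x / (Nat.factorial k : ℝ)) * (((k:ℝ)+1) * (Nat.factorial k : ℝ))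
      = (1/2) * ((k:ℝ)+1) * (k:ℝ) ^ x := by field_simp
  rw [heq]
  exact key

lemma bell_tsum_holder (x y l : ℝ) (hx : 0 < x) (hy : 0 < y)
    (hl0 : 0 < l) (hl1 : l < 1) :
    (∑' k : ℕ, (k : ℝ) ^ (l * x + (1 - l) * y) / (Nat.factorial k : ℝ))
      ≤ (∑' k : ℕ, (k : ℝ) ^ x / (Nat.factorial k : ℝ)) ^ l *
        (∑' k : ℕ, (k : ℝ) ^ y / (Nat.factorial k : ℝ)) ^ (1 - l) := by
  have hl1' : 0 < 1 - l := by linarith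
  set p : ℝ := l⁻¹ with hp
  set q : ℝ := (1 - l)⁻¹ with hq
  have hpq : p.HolderConjugate q := by
    rw [Real.holderConjugate_iff]
    constructor
    · exact (one_lt_inv₀ hl0).mpr hl1
    · rw [hp, hq, inv_inv, inv_inv]; ring
  set f : ℕ → ℝ := fun k => ((k : ℝ) ^ x / (Nat.factorial k : ℝ)) ^ l with hfdef
  set g : ℕ → ℝ := fun k => ((k : ℝ) ^ y / (Nat.factorial k : ℝ)) ^ (1 - l) with hgdef
  have hf : ∀ k : ℕ, (0:ℝ) ≤ f k := fun k => by positivity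
  have hg : ∀ k : ℕ, (0:ℝ) ≤ g k := fun k => by positivity
  have hfp : ∀ k : ℕ, f k ^ p = (k : ℝ) ^ x / (Nat.factorial k : ℝ) := by
    intro k
    have ha : (0:ℝ) ≤ (k : ℝ) ^ x / (Nat.factorial k : ℝ) := by positivity
    rw [hfdef, ← Real.rpow_mul ha, mul_inv_cancel₀ (ne_of_gt hl0), Real.rpow_one]
  have hgq : ∀ k : ℕ, g k ^ q = (k : ℝ) ^ y / (Nat.factorial k : ℝ) := by
    intro k
    have ha : (0:ℝ) ≤ (k : ℝ) ^ y / (Nat.factorial k : ℝ) := by positivity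
    rw [hgdef, ← Real.rpow_mul ha, mul_inv_cancel₀ (ne_of_gt hl1'), Real.rpow_one]
  have hfs : Summable (fun k => f k ^ p) := by
    simp only [hfp]; exact bell_summable x hx.le
  have hgs : Summable (fun k => g k ^ q) := by
    simp only [hgq]; exact bell_summable y hy.le
  have H := Real.inner_le_Lp_mul_Lq_tsum_of_nonneg hpq hf hg hfs hgs
  have hfg : ∀ k : ℕ, f k * g k = (k : ℝ) ^ (l * x + (1 - l) * y) / (Nat.factorial k : ℝ) := by
    intro k
    rcases Nat.eq_zero_or_pos k with rfl | hk
    · have hz : l * x + (1 - l) * y ≠ 0 := by positivity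
      simp [hfdef, hgdef, Real.zero_rpow hz, Real.zero_rpow (ne_of_gt hx),
        Real.zero_rpow (ne_of_gt hy), Real.zero_rpow (ne_of_gt hl0),
        Real.zero_rpow (ne_of_gt hl1')]
    · have hc : (0:ℝ) < (k:ℝ) := by exact_mod_cast hk
      have hF : (0:ℝ) < (Nat.factorial k : ℝ) := by positivity
      show ((k:ℝ) ^ x / (Nat.factorial k : ℝ)) ^ l * ((k:ℝ) ^ y / (Nat.factorial k : ℝ)) ^ (1 - l)
          = (k : ℝ) ^ (l * x + (1 - l) * y) / (Nat.factorial k : ℝ)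
      rw [Real.div_rpow (by positivity) hF.le, Real.div_rpow (by positivity) hF.le,
        div_mul_div_comm, ← Real.rpow_mul hc.le, ← Real.rpow_mul hc.le,
        ← Real.rpow_add hc, ← Real.rpow_add hF]
      rw [show x * l + y * (1 - l) = l * x + (1 - l) * y by ring,
        show l + (1 - l) = 1 by ring, Real.rpow_one]
  calc (∑' k : ℕ, (k : ℝ) ^ (l * x + (1 - l) * y) / (Nat.factorial k : ℝ))
      = ∑' k : ℕ, f k * g k := by simp only [hfg]
    _ ≤ (∑' k, f k ^ p) ^ (1/p) * (∑' k, g k ^ q) ^ (1/q) := H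
    _ = (∑' k : ℕ, (k : ℝ) ^ x / (Nat.factorial k : ℝ)) ^ l *
        (∑' k : ℕ, (k : ℝ) ^ y / (Nat.factorial k : ℝ)) ^ (1 - l) := by
        simp only [hfp, hgq]
        simp only [hp, hq, one_div, inv_inv]

/-- The Bell function `B` is log-convex on `(1, ∞)`. -/
theorem bellFun_logConvex (x y l : ℝ) (hx : 1 < x) (hy : 1 < y)
    (hl0 : 0 ≤ l) (hl1 : l ≤ 1) :
    bellFun (l * x + (1 - l) * y) ≤ bellFun x ^ l * bellFun y ^ (1 - l) := by
  have hB : ∀ z : ℝ, 0 ≤ bellFun z := by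
    intro z
    apply mul_nonneg (by positivity)
    exact tsum_nonneg (fun k => by positivity)
  rcases eq_or_lt_of_le hl0 with rfl | hl0'
  · simp [Real.rpow_zero]
  rcases eq_or_lt_of_le hl1 with rfl | hl1'
  · simp [Real.rpow_zero]
  have key := bell_tsum_holder x y l (by linarith) (by linarith) hl0' hl1'
  have he : (0:ℝ) < 1 / Real.exp 1 := by positivity
  have hSx : (0:ℝ) ≤ ∑' k : ℕ, (k : ℝ) ^ x / (Nat.factorial k : ℝ) :=
    tsum_nonneg (fun k => by positivity)
  have hSy : (0:ℝ) ≤ ∑' k : ℕ, (k : ℝ) ^ y / (Nat.factorial k : ℝ) :=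
    tsum_nonneg (fun k => by positivity)
  unfold bellFun
  rw [Real.mul_rpow he.le hSx, Real.mul_rpow he.le hSy]
  have hee : (1 / Real.exp 1) ^ l * (1 / Real.exp 1) ^ (1 - l) = 1 / Real.exp 1 := by
    rw [← Real.rpow_add he, show l + (1 - l) = 1 by ring, Real.rpow_one]
  calc (1 / Real.exp 1) * ∑' k : ℕ, (k : ℝ) ^ (l * x + (1 - l) * y) / (Nat.factorial k : ℝ)
      ≤ (1 / Real.exp 1) * ((∑' k : ℕ, (k : ℝ) ^ x / (Nat.factorial k : ℝ)) ^ l *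
        (∑' k : ℕ, (k : ℝ) ^ y / (Nat.factorial k : ℝ)) ^ (1 - l)) :=
        mul_le_mul_of_nonneg_left key he.le
    _ = (1 / Real.exp 1) ^ l * (∑' k : ℕ, (k : ℝ) ^ x / (Nat.factorial k : ℝ)) ^ l *
        ((1 / Real.exp 1) ^ (1 - l) * (∑' k : ℕ, (k : ℝ) ^ y / (Nat.factorial k : ℝ)) ^ (1 - l)) := by
        rw [mul_mul_mul_comm, hee]
end

section
/- The function x ↦ log B(x)^{1/x} = (log B(x))/x is strictly increasing for x ≥ 1, where B(x) = (1/e)·∑_{k≥0} k^x/k!; that is, for all real numbers 1 ≤ x < y one has B(x)^{1/x} < B(y)^{1/y}. -/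
open Real Filter Topology

namespace BellAux

noncomputable def S (x : ℝ) : ℝ := ∑' k : ℕ, (k : ℝ) ^ x / (Nat.factorial k : ℝ)

lemma term_nonneg (x : ℝ) (k : ℕ) : 0 ≤ (k : ℝ) ^ x / (Nat.factorial k : ℝ) := by
  positivity

lemma summable_bell (x : ℝ) :
    Summable (fun k : ℕ => (k : ℝ) ^ x / (Nat.factorial k : ℝ)) := by
  set f : ℕ → ℝ := fun k => (k : ℝ) ^ x / (Nat.factorial k : ℝ) with hf
  apply summable_of_ratio_test_tendsto_lt_one (l := 0) (by norm_num)
  · filter_upwards [eventually_ge_atTop 1] with n hn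
    have hn0 : (0 : ℝ) < (n : ℝ) := by exact_mod_cast hn
    have : 0 < f n := by
      apply div_pos (Real.rpow_pos_of_pos hn0 x)
      exact_mod_cast Nat.factorial_pos n
    exact ne_of_gt this
  · have h1 : Tendsto (fun n : ℕ => (((n : ℝ) + 1) / n) ^ x) atTop (𝓝 1) := by
      have hb : Tendsto (fun n : ℕ => ((n : ℝ) + 1) / n) atTop (𝓝 1) := by
        have : Tendsto (fun n : ℕ => 1 + ((n : ℝ))⁻¹) atTop (𝓝 (1 + 0)) :=
          tendsto_const_nhds.add (tendsto_inv_atTop_nhds_zero_nat)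
        rw [add_zero] at this
        apply this.congr'
        filter_upwards [eventually_ge_atTop 1] with n hn
        have hn0 : (0 : ℝ) < (n : ℝ) := by exact_mod_cast hn
        field_simp
      have hc : ContinuousAt (fun t : ℝ => t ^ x) 1 :=
        Real.continuousAt_rpow_const 1 x (Or.inl one_ne_zero)
      have := hc.tendsto.comp hb
      simpa [Function.comp_def, Real.one_rpow] using this
    have h2 : Tendsto (fun n : ℕ => ((n : ℝ) + 1)⁻¹) atTop (𝓝 0) :=
      tendsto_one_div_add_atTop_nhds_zero_nat.congr (by simp [one_div])
    have h3 := h1.mul h2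
    rw [mul_zero] at h3
    apply h3.congr'
    filter_upwards [eventually_ge_atTop 1] with n hn
    have hn0 : (0 : ℝ) < (n : ℝ) := by exact_mod_cast hn
    have hfac : (0 : ℝ) < (Nat.factorial n : ℝ) := by exact_mod_cast Nat.factorial_pos n
    have hfn : 0 ≤ f n := term_nonneg x n
    have hfn1 : 0 ≤ f (n + 1) := term_nonneg x (n + 1)
    rw [Real.norm_of_nonneg hfn1, Real.norm_of_nonneg hfn]
    simp only [hf]
    push_cast [Nat.factorial_succ]
    rw [Real.div_rpow (by positivity) hn0.le]
    have hx1 : (0 : ℝ) < ((n : ℝ) + 1) ^ x := Real.rpow_pos_of_pos (by positivity) x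
    have hx2 : (0 : ℝ) < (n : ℝ) ^ x := Real.rpow_pos_of_pos hn0 x
    field_simp

lemma S_one : S 1 = Real.exp 1 := by
  have hsum : Summable (fun k : ℕ => (k : ℝ) ^ (1 : ℝ) / (Nat.factorial k : ℝ)) :=
    summable_bell 1
  have h0 : S 1 = ∑' k : ℕ, (k : ℝ) / (Nat.factorial k : ℝ) := by
    unfold S; congr 1; funext k; rw [Real.rpow_one]
  rw [h0]
  have hsum' : Summable (fun k : ℕ => (k : ℝ) / (Nat.factorial k : ℝ)) := by
    apply hsum.congr; intro k; rw [Real.rpow_one]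
  rw [Summable.tsum_eq_zero_add hsum']
  have hshift : ∀ n : ℕ, ((n : ℝ) + 1) / (Nat.factorial (n + 1) : ℝ)
      = 1 / (Nat.factorial n : ℝ) := by
    intro n
    rw [Nat.factorial_succ]
    have hfac : (0 : ℝ) < (Nat.factorial n : ℝ) := by exact_mod_cast Nat.factorial_pos n
    push_cast
    field_simp
  have hexp : HasSum (fun n : ℕ => (1 : ℝ) ^ n / (Nat.factorial n : ℝ)) (Real.exp 1) := by
    rw [Real.exp_eq_exp_ℝ]
    exact NormedSpace.expSeries_div_hasSum_exp (1 : ℝ)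
  have : ∑' n : ℕ, ((n : ℕ) + 1 : ℝ) / (Nat.factorial (n + 1) : ℝ) = Real.exp 1 := by
    calc ∑' n : ℕ, ((n : ℕ) + 1 : ℝ) / (Nat.factorial (n + 1) : ℝ)
        = ∑' n : ℕ, (1 : ℝ) ^ n / (Nat.factorial n : ℝ) := by
          congr 1; funext n; rw [hshift n, one_pow]
      _ = Real.exp 1 := hexp.tsum_eq
  simp only [Nat.cast_zero, Nat.factorial_zero, Nat.cast_one, zero_div, zero_add]
  push_cast at this ⊢
  exact this

lemma S_pos (x : ℝ) (hx : x ≠ 0) : 0 < S x := by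
  have h1 : (1 : ℝ) ^ x / (Nat.factorial 1 : ℝ) = 1 := by
    simp [Real.one_rpow]
  apply Summable.tsum_pos (summable_bell x) (term_nonneg x) 1
  simp only [Nat.cast_one]
  rw [h1]; norm_num

lemma S_gt (y : ℝ) (hy : 1 < y) : Real.exp 1 < S y := by
  rw [← S_one]
  unfold S
  apply Summable.tsum_lt_tsum_of_nonneg (i := 2) (term_nonneg 1)
  · intro k
    rcases Nat.eq_zero_or_pos k with hk | hk
    · subst hk
      simp [Real.zero_rpow (by norm_num : (1:ℝ) ≠ 0), Real.zero_rpow (by linarith : y ≠ 0)]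
    · have hk1 : (1 : ℝ) ≤ (k : ℝ) := by exact_mod_cast hk
      have hfac : (0 : ℝ) < (Nat.factorial k : ℝ) := by positivity
      exact (div_le_div_iff_of_pos_right hfac).mpr
        (Real.rpow_le_rpow_of_exponent_le hk1 (le_of_lt hy))
  · have hfac : (0 : ℝ) < (Nat.factorial 2 : ℝ) := by positivity
    have h2 : ((2 : ℕ) : ℝ) ^ (1 : ℝ) < ((2 : ℕ) : ℝ) ^ y := by
      apply Real.rpow_lt_rpow_of_exponent_lt (by norm_num) hy
    exact div_lt_div_of_pos_right h2 hfac
  · exact summable_bell y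

lemma holder (x y : ℝ) (hx : 1 < x) (hxy : x < y) :
    S x ≤ (Real.exp 1) ^ (1 - (x - 1) / (y - 1)) * (S y) ^ ((x - 1) / (y - 1)) := by
  set lam : ℝ := (x - 1) / (y - 1) with hlam
  have hy1 : (0 : ℝ) < y - 1 := by linarith
  have hlam0 : 0 < lam := div_pos (by linarith) hy1
  have hlam1 : lam < 1 := (div_lt_one hy1).mpr (by linarith)
  have h1lam : 0 < 1 - lam := by linarith
  set p : ℝ := (1 - lam)⁻¹ with hp
  set q : ℝ := lam⁻¹ with hq
  have hpq : p.HolderConjugate q := by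
    rw [Real.holderConjugate_iff]
    constructor
    · rw [hp]
      rw [one_lt_inv_iff₀]
      exact ⟨h1lam, by linarith⟩
    · rw [hp, hq, inv_inv, inv_inv]; ring
  set f : ℕ → ℝ := fun k => ((k : ℝ) ^ (1 : ℝ) / (Nat.factorial k : ℝ)) ^ (1 - lam) with hfdef
  set g : ℕ → ℝ := fun k => ((k : ℝ) ^ y / (Nat.factorial k : ℝ)) ^ lam with hgdef
  have hfp : ∀ k, f k ^ p = (k : ℝ) ^ (1 : ℝ) / (Nat.factorial k : ℝ) := by
    intro k
    rw [hfdef, hp]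
    exact Real.rpow_rpow_inv (term_nonneg 1 k) (ne_of_gt h1lam)
  have hgq : ∀ k, g k ^ q = (k : ℝ) ^ y / (Nat.factorial k : ℝ) := by
    intro k
    rw [hgdef, hq]
    exact Real.rpow_rpow_inv (term_nonneg y k) (ne_of_gt hlam0)
  have hfg : ∀ k, f k * g k = (k : ℝ) ^ x / (Nat.factorial k : ℝ) := by
    intro k
    have hfac : (0 : ℝ) < (Nat.factorial k : ℝ) := by exact_mod_cast Nat.factorial_pos k
    have hk0 : (0 : ℝ) ≤ (k : ℝ) := Nat.cast_nonneg k
    simp only [hfdef, hgdef]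
    rw [Real.div_rpow (Real.rpow_nonneg hk0 1) hfac.le,
        Real.div_rpow (Real.rpow_nonneg hk0 y) hfac.le]
    rw [div_mul_div_comm]
    rw [← Real.rpow_mul hk0, ← Real.rpow_mul hk0]
    have hnum : (k : ℝ) ^ (1 * (1 - lam)) * (k : ℝ) ^ (y * lam) = (k : ℝ) ^ x := by
      rw [← Real.rpow_add' hk0 (by
        have : 1 * (1 - lam) + y * lam = x := by
          rw [hlam]; field_simp; ring
        rw [this]; linarith)]
      congr 1
      rw [hlam]; field_simp; ring
    have hden : (Nat.factorial k : ℝ) ^ (1 - lam) * (Nat.factorial k : ℝ) ^ lam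
        = (Nat.factorial k : ℝ) := by
      rw [← Real.rpow_add hfac]
      norm_num
    rw [hnum, hden]
  have hfnn : ∀ k, 0 ≤ f k := fun k => Real.rpow_nonneg (term_nonneg 1 k) _
  have hgnn : ∀ k, 0 ≤ g k := fun k => Real.rpow_nonneg (term_nonneg y k) _
  have hsf : Summable (fun k => f k ^ p) :=
    (summable_bell 1).congr (fun k => (hfp k).symm)
  have hsg : Summable (fun k => g k ^ q) :=
    (summable_bell y).congr (fun k => (hgq k).symm)
  have hH := inner_le_Lp_mul_Lq_tsum_of_nonneg hpq hfnn hgnn hsf hsg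
  have e1 : ∑' k, f k * g k = S x := tsum_congr hfg
  have e2 : ∑' k, f k ^ p = Real.exp 1 := by
    rw [tsum_congr hfp]; exact S_one
  have e3 : ∑' k, g k ^ q = S y := tsum_congr hgq
  rw [e1, e2, e3] at hH
  have ep : 1 / p = 1 - lam := by rw [hp, one_div, inv_inv]
  have eq' : 1 / q = lam := by rw [hq, one_div, inv_inv]
  rwa [ep, eq'] at hH

end BellAux

/-- The function `x ↦ log B(x)^{1/x}` is strictly increasing for `x ≥ 1`:
for `1 ≤ x < y`, `B(x)^{1/x} < B(y)^{1/y}`. -/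
theorem bellFun_rpow_strictMonoOn (x y : ℝ) (hx : 1 ≤ x) (hxy : x < y) :
    bellFun x ^ (1 / x) < bellFun y ^ (1 / y) := by
  open BellAux in
  have he : (0 : ℝ) < Real.exp 1 := Real.exp_pos 1
  have hy1 : 1 < y := lt_of_le_of_lt hx hxy
  have hBy : bellFun y = S y / Real.exp 1 := by
    unfold bellFun; rw [one_div, inv_mul_eq_div]; rfl
  have hBy1 : 1 < bellFun y := by
    rw [hBy, lt_div_iff₀ he, one_mul]
    exact S_gt y hy1
  have hBypos : 0 < bellFun y := lt_trans one_pos hBy1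
  rcases eq_or_lt_of_le hx with h1 | h1
  · -- x = 1
    have hB1 : bellFun x = 1 := by
      unfold bellFun
      rw [← h1]
      have : (∑' k : ℕ, (k : ℝ) ^ (1:ℝ) / (Nat.factorial k : ℝ)) = Real.exp 1 := S_one
      rw [this]
      field_simp
    rw [hB1, Real.one_rpow]
    rw [Real.one_lt_rpow_iff_of_pos hBypos]
    exact Or.inl ⟨hBy1, by positivity⟩
  · -- 1 < x
    set lam : ℝ := (x - 1) / (y - 1) with hlam
    have hx0 : (0 : ℝ) < x := by linarith
    have hy0 : (0 : ℝ) < y := by linarith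
    have hy1' : (0 : ℝ) < y - 1 := by linarith
    have hBx : bellFun x = S x / Real.exp 1 := by
      unfold bellFun; rw [one_div, inv_mul_eq_div]; rfl
    have hSxpos : 0 < S x := S_pos x (by linarith)
    have hBxpos : 0 < bellFun x := by rw [hBx]; positivity
    have hSy0 : (0 : ℝ) ≤ S y := le_of_lt (lt_trans he (S_gt y hy1))
    have hkey : bellFun x ≤ bellFun y ^ lam := by
      rw [hBx, hBy, Real.div_rpow hSy0 he.le,
        div_le_div_iff₀ he (Real.rpow_pos_of_pos he lam)]
      have h0 := holder x y h1 hxy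
      calc S x * Real.exp 1 ^ lam
          ≤ (Real.exp 1 ^ (1 - lam) * S y ^ lam) * Real.exp 1 ^ lam := by
            apply mul_le_mul_of_nonneg_right h0 (Real.rpow_nonneg he.le lam)
        _ = S y ^ lam * (Real.exp 1 ^ (1 - lam) * Real.exp 1 ^ lam) := by ring
        _ = S y ^ lam * Real.exp 1 := by
            rw [← Real.rpow_add he, sub_add_cancel, Real.rpow_one]
    have hlogkey : Real.log (bellFun x) ≤ lam * Real.log (bellFun y) := by
      have := Real.log_le_log hBxpos hkey
      rwa [Real.log_rpow hBypos] at this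
    have hlogy : 0 < Real.log (bellFun y) := Real.log_pos hBy1
    have hfrac : lam / x < 1 / y := by
      rw [div_lt_div_iff₀ hx0 hy0, hlam, div_mul_eq_mul_div, div_lt_iff₀ hy1']
      nlinarith
    have hchain : 1 / x * Real.log (bellFun x) < 1 / y * Real.log (bellFun y) := by
      calc 1 / x * Real.log (bellFun x)
          ≤ 1 / x * (lam * Real.log (bellFun y)) := by
            apply mul_le_mul_of_nonneg_left hlogkey (by positivity)
        _ = (lam / x) * Real.log (bellFun y) := by ring
        _ < (1 / y) * Real.log (bellFun y) :=
            mul_lt_mul_of_pos_right hfrac hlogy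
    rw [Real.rpow_def_of_pos hBxpos, Real.rpow_def_of_pos hBypos]
    apply Real.exp_lt_exp.mpr
    rw [mul_comm (Real.log (bellFun x)), mul_comm (Real.log (bellFun y))]
    exact hchain
end

section
/- The sequence {B_n^{1/n}}_{n≥1} of n-th roots of the Bell numbers is strictly increasing: for every integer n ≥ 1, B_n^{1/n} < B_{n+1}^{1/(n+1)}. -/
open Finset Filter

/-- The `n`-th Bell number: the number of partitions of an `n`-element set,
i.e. the number of equivalence relations (setoids) on a set of `n` elements. -/


noncomputable def bellNumber (n : ℕ) : ℕ := Nat.card (Setoid (Fin n))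

instance setoidFinite {α : Type*} [Finite α] : Finite (Setoid α) :=
  Finite.of_injective (fun s : Setoid α => s.r)
    (fun a b h => Setoid.ext fun x y => by rw [show a.r = b.r from h])

-- Setoid congruence under an equiv
def setoidCongr {α β : Type*} (e : α ≃ β) : Setoid α ≃ Setoid β where
  toFun r := r.comap e.symm
  invFun r := r.comap e
  left_inv r := Setoid.ext fun x y => by simp [Setoid.comap_rel]
  right_inv r := Setoid.ext fun x y => by simp [Setoid.comap_rel]

lemma card_setoid_congr {α β : Type*} (e : α ≃ β) :
    Nat.card (Setoid α) = Nat.card (Setoid β) :=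
  Nat.card_congr (setoidCongr e)

lemma card_setoid_eq_bell (α : Type*) [Fintype α] :
    Nat.card (Setoid α) = bellNumber (Fintype.card α) :=
  card_setoid_congr (Fintype.equivFin α)


lemma sigma_setoid_ext {n : ℕ} {s s' : Finset (Fin n)} (h : s = s')
    {q : Setoid {x : Fin n // x ∉ s}} {q' : Setoid {x : Fin n // x ∉ s'}}
    (hq : ∀ (x y : Fin n) (hx : x ∉ s) (hx' : x ∉ s') (hy : y ∉ s) (hy' : y ∉ s'),
      (q ⟨x, hx⟩ ⟨y, hy⟩ ↔ q' ⟨x, hx'⟩ ⟨y, hy'⟩)) :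
    (⟨s, q⟩ : Σ s : Finset (Fin n), Setoid {x : Fin n // x ∉ s}) = ⟨s', q'⟩ := by
  subst h
  congr 1
  refine Setoid.ext fun a b => ?_
  obtain ⟨a, ha⟩ := a
  obtain ⟨b, hb⟩ := b
  exact hq a b ha ha hb hb

open Finset Classical in
noncomputable def partEquiv (n : ℕ) :
    Setoid (Fin (n+1)) ≃ (Σ s : Finset (Fin n), Setoid {x : Fin n // x ∉ s}) where
  toFun r :=
    ⟨Finset.univ.filter (fun y : Fin n => r y.castSucc (Fin.last n)),
     Setoid.comap (fun x => x.val.castSucc) r⟩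
  invFun p :=
    Setoid.ker (Fin.lastCases (motive := fun _ => Option (Quotient p.2)) none
      (fun y => if h : y ∈ p.1 then none else some (Quotient.mk p.2 ⟨y, h⟩)))
  left_inv r := by
    refine Setoid.ext fun x y => ?_
    rw [Setoid.ker_def]
    induction x using Fin.lastCases with
    | last =>
      induction y using Fin.lastCases with
      | last => simp [Setoid.refl']
      | cast b =>
        simp only [Fin.lastCases_last, Fin.lastCases_castSucc, Finset.mem_filter,
          Finset.mem_univ, true_and]
        by_cases hb : r b.castSucc (Fin.last n)
        · rw [dif_pos hb]
          exact iff_of_true (by simp) (Setoid.symm' r hb)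
        · rw [dif_neg hb]
          exact iff_of_false (by simp) (fun h => hb (Setoid.symm' r h))
    | cast a =>
      induction y using Fin.lastCases with
      | last =>
        simp only [Fin.lastCases_last, Fin.lastCases_castSucc, Finset.mem_filter,
          Finset.mem_univ, true_and]
        by_cases ha : r a.castSucc (Fin.last n)
        · rw [dif_pos ha]
          exact iff_of_true (by simp) ha
        · rw [dif_neg ha]
          exact iff_of_false (by simp) ha
      | cast b =>
        simp only [Fin.lastCases_castSucc, Finset.mem_filter, Finset.mem_univ, true_and]
        by_cases ha : r a.castSucc (Fin.last n) <;> by_cases hb : r b.castSucc (Fin.last n)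
        · rw [dif_pos ha, dif_pos hb]
          exact iff_of_true (by simp) (Setoid.trans' r ha (Setoid.symm' r hb))
        · rw [dif_pos ha, dif_neg hb]
          exact iff_of_false (by simp)
            (fun h => hb (Setoid.trans' r (Setoid.symm' r h) ha))
        · rw [dif_neg ha, dif_pos hb]
          exact iff_of_false (by simp)
            (fun h => ha (Setoid.trans' r h hb))
        · rw [dif_neg ha, dif_neg hb]
          rw [Option.some_inj, Quotient.eq]
          exact Setoid.comap_rel _ _ _ _
  right_inv p := by
    obtain ⟨s, q⟩ := p
    have h1 : (Finset.univ.filter (fun y : Fin n =>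
        (Setoid.ker (Fin.lastCases (motive := fun _ => Option (Quotient q)) none
          (fun y => if h : y ∈ s then none else some (Quotient.mk q ⟨y, h⟩))))
          y.castSucc (Fin.last n))) = s := by
      ext a
      simp only [Finset.mem_filter, Finset.mem_univ, true_and, Setoid.ker_def,
        Fin.lastCases_last, Fin.lastCases_castSucc]
      by_cases ha : a ∈ s
      · simp [ha]
      · simp [ha]
    refine sigma_setoid_ext h1 fun x y hx hx' hy hy' => ?_
    rw [Setoid.comap_rel, Setoid.ker_def]
    rw [Fin.lastCases_castSucc, Fin.lastCases_castSucc, dif_neg hx', dif_neg hy',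
      Option.some_inj, Quotient.eq]

lemma nat_card_sigma {ι : Type*} [Fintype ι] (T : ι → Type*) [∀ i, Finite (T i)] :
    Nat.card (Σ i, T i) = ∑ i, Nat.card (T i) := by
  haveI := fun i => Fintype.ofFinite (T i)
  simp [Nat.card_eq_fintype_card, Fintype.card_sigma]

lemma bell_rec (n : ℕ) :
    bellNumber (n + 1) = ∑ k ∈ Finset.range (n + 1), n.choose k * bellNumber k := by
  classical
  have h0 : bellNumber (n + 1)
      = Nat.card (Σ s : Finset (Fin n), Setoid {x : Fin n // x ∉ s}) :=
    Nat.card_congr (partEquiv n)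
  rw [h0, nat_card_sigma]
  have h1 : ∀ s : Finset (Fin n),
      Nat.card (Setoid {x : Fin n // x ∉ s}) = bellNumber (n - s.card) := by
    intro s
    rw [card_setoid_eq_bell]
    congr 1
    rw [Fintype.card_subtype_compl]
    simp
  simp only [h1]
  rw [← Finset.powerset_univ, Finset.sum_powerset]
  have h2 : ∀ j ∈ Finset.range (n + 1),
      (∑ t ∈ Finset.powersetCard j (Finset.univ : Finset (Fin n)),
        bellNumber (n - t.card)) = n.choose j * bellNumber (n - j) := by
    intro j hj
    rw [Finset.sum_congr rfl (fun t ht => by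
      rw [(Finset.mem_powersetCard.mp ht).2]), Finset.sum_const,
      Finset.card_powersetCard, smul_eq_mul, Finset.card_univ, Fintype.card_fin]
  rw [Finset.card_univ, Fintype.card_fin, Finset.sum_congr rfl h2]
  rw [← Finset.sum_range_reflect]
  refine Finset.sum_congr rfl fun j hj => ?_
  rw [Finset.mem_range] at hj
  have hj' : j ≤ n := Nat.lt_succ_iff.mp hj
  rw [show n + 1 - 1 - j = n - j from rfl, Nat.choose_symm hj', Nat.sub_sub_self hj']

lemma bell0 : bellNumber 0 = 1 := by
  haveI : Unique (Setoid (Fin 0)) :=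
    { default := ⊥, uniq := fun a => Setoid.ext fun x y => x.elim0 }
  exact Nat.card_unique
lemma bell_pos (n : ℕ) : 0 < bellNumber n := by
  haveI : Finite (Setoid (Fin n)) :=
    Finite.of_injective (fun s : Setoid (Fin n) => s.r)
      (fun a b h => Setoid.ext fun x y => by rw [show a.r = b.r from h])
  haveI : Nonempty (Setoid (Fin n)) := ⟨⊥⟩
  exact Nat.card_pos


open Finset

noncomputable def dob (j : ℕ) : ℝ := ∑' k : ℕ, (k : ℝ) ^ j / (Nat.factorial k)

lemma two_pow_le_fact (k : ℕ) : 2 ^ k ≤ 2 * Nat.factorial k := by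
  induction k with
  | zero => norm_num
  | succ k ih =>
    rcases Nat.eq_zero_or_pos k with hk | hk
    · subst hk; norm_num [Nat.factorial]
    · calc 2 ^ (k + 1) = 2 * 2 ^ k := by ring
        _ ≤ 2 * (2 * k.factorial) := by omega
        _ ≤ 2 * ((k + 1) * k.factorial) := by
            have : 2 ≤ k + 1 := by omega
            have := Nat.factorial_pos k
            nlinarith
        _ = 2 * (k + 1).factorial := by rw [Nat.factorial_succ]

lemma dob_term_nonneg (j k : ℕ) : 0 ≤ (k : ℝ) ^ j / (Nat.factorial k) := by positivity

lemma summable_dob (j : ℕ) : Summable (fun k : ℕ => (k : ℝ) ^ j / (Nat.factorial k)) := by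
  have hs : Summable (fun k : ℕ => 2 * ((k : ℝ) ^ j * (1 / 2 : ℝ) ^ k)) := by
    exact (summable_pow_mul_geometric_of_norm_lt_one (R := ℝ) j (by norm_num)).mul_left 2
  refine Summable.of_nonneg_of_le (fun k => dob_term_nonneg j k) (fun k => ?_) hs
  have hfk : (0 : ℝ) < (Nat.factorial k : ℝ) := by positivity
  have h2k : (0 : ℝ) < (2 : ℝ) ^ k := by positivity
  have hle : ((2 : ℝ)) ^ k ≤ 2 * (Nat.factorial k : ℝ) := by
    exact_mod_cast two_pow_le_fact k
  have h1 : (1 : ℝ) / (Nat.factorial k : ℝ) ≤ 2 * (1 / 2 : ℝ) ^ k := by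
    rw [div_pow, one_pow, mul_one_div, div_le_div_iff₀ hfk h2k]
    linarith
  calc (k : ℝ) ^ j / (Nat.factorial k) = (k : ℝ) ^ j * (1 / (Nat.factorial k : ℝ)) := by ring
    _ ≤ (k : ℝ) ^ j * (2 * (1 / 2 : ℝ) ^ k) := by
        exact mul_le_mul_of_nonneg_left h1 (by positivity)
    _ = 2 * ((k : ℝ) ^ j * (1 / 2 : ℝ) ^ k) := by ring

lemma dob_rec (n : ℕ) :
    dob (n + 1) = ∑ j ∈ range (n + 1), (n.choose j : ℝ) * dob j := by
  have key : ∀ m : ℕ, ((m + 1 : ℕ) : ℝ) ^ (n + 1) / (Nat.factorial (m + 1))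
      = ∑ j ∈ range (n + 1), (n.choose j : ℝ) * ((m : ℝ) ^ j / (Nat.factorial m)) := by
    intro m
    have hm1 : ((m : ℝ) + 1) ≠ 0 := by positivity
    have hfm : ((Nat.factorial m : ℝ)) ≠ 0 := by positivity
    have hfact : ((Nat.factorial (m + 1) : ℝ)) = ((m : ℝ) + 1) * (Nat.factorial m) := by
      rw [Nat.factorial_succ]; push_cast; ring
    have hpow : ((m : ℝ) + 1) ^ (n + 1) = (∑ j ∈ range (n + 1),
        (m : ℝ) ^ j * 1 ^ (n - j) * (n.choose j : ℝ)) * ((m : ℝ) + 1) := by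
      rw [← add_pow]; ring
    push_cast
    rw [hfact, hpow]
    rw [mul_div_assoc]
    have hcan : ((m : ℝ) + 1) / (((m : ℝ) + 1) * (Nat.factorial m : ℝ))
        = 1 / (Nat.factorial m : ℝ) := by
      field_simp
    rw [hcan, mul_one_div, Finset.sum_div]
    refine Finset.sum_congr rfl fun j hj => ?_
    ring
  rw [dob, Summable.tsum_eq_zero_add (summable_dob (n + 1))]
  simp only [Nat.cast_zero, ne_eq, Nat.succ_ne_zero, not_false_iff, zero_pow, Nat.factorial_zero,
    Nat.cast_one, zero_div, zero_add, Nat.cast_ofNat]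
  have : ∀ m : ℕ, ((m + 1 : ℕ) : ℝ) ^ (n + 1) / (Nat.factorial (m + 1))
      = ∑ j ∈ range (n + 1), (n.choose j : ℝ) * ((m : ℝ) ^ j / (Nat.factorial m)) := key
  calc (∑' m : ℕ, ((m + 1 : ℕ) : ℝ) ^ (n + 1) / (Nat.factorial (m + 1)))
      = ∑' m : ℕ, ∑ j ∈ range (n + 1), (n.choose j : ℝ) * ((m : ℝ) ^ j / (Nat.factorial m)) := by
        exact tsum_congr key
    _ = ∑ j ∈ range (n + 1), ∑' m : ℕ, (n.choose j : ℝ) * ((m : ℝ) ^ j / (Nat.factorial m)) := by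
        exact Summable.tsum_finsetSum (fun j hj => (summable_dob j).mul_left _)
    _ = ∑ j ∈ range (n + 1), (n.choose j : ℝ) * dob j := by
        refine Finset.sum_congr rfl fun j hj => ?_
        rw [tsum_mul_left]; rfl

lemma dob_def (j : ℕ) : dob j = ∑' k : ℕ, (k : ℝ) ^ j / (Nat.factorial k) := rfl



lemma dob0_pos : 0 < dob 0 := by
  rw [dob_def]
  refine Summable.tsum_pos (summable_dob 0) (fun k => by positivity) 0 ?_
  norm_num

lemma dob_eq (n : ℕ) : dob n = dob 0 * (bellNumber n : ℝ) := by
  induction n using Nat.strong_induction_on with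
  | _ n ih =>
    match n with
    | 0 => rw [bell0]; norm_num
    | (m + 1) =>
      rw [dob_rec, bell_rec]
      push_cast
      rw [Finset.mul_sum]
      refine Finset.sum_congr rfl fun j hj => ?_
      rw [ih j (by rw [Finset.mem_range] at hj; omega)]
      ring

lemma dob_cs (n : ℕ) : dob (n + 1) ^ 2 ≤ dob n * dob (n + 2) := by
  set x : ℕ → ℝ := fun k => Real.sqrt ((k : ℝ) ^ n / (Nat.factorial k)) with hx
  set y : ℕ → ℝ := fun k => Real.sqrt ((k : ℝ) ^ (n + 2) / (Nat.factorial k)) with hy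
  have hxy : ∀ k, x k * y k = (k : ℝ) ^ (n + 1) / (Nat.factorial k) := by
    intro k
    rw [hx, hy]
    rw [← Real.sqrt_mul (by positivity)]
    have : (k : ℝ) ^ n / (Nat.factorial k) * ((k : ℝ) ^ (n + 2) / (Nat.factorial k))
        = ((k : ℝ) ^ (n + 1) / (Nat.factorial k)) ^ 2 := by
      rw [div_mul_div_comm, ← pow_add, div_pow, ← pow_mul]
      ring_nf
    rw [this, Real.sqrt_sq (by positivity)]
  have hbound : ∀ N : ℕ, (∑ k ∈ range N, (k : ℝ) ^ (n + 1) / (Nat.factorial k)) ^ 2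
      ≤ dob n * dob (n + 2) := by
    intro N
    have hcs := Finset.sum_mul_sq_le_sq_mul_sq (range N) x y
    have hx2 : ∀ k, x k ^ 2 = (k : ℝ) ^ n / (Nat.factorial k) := fun k =>
      Real.sq_sqrt (by positivity)
    have hy2 : ∀ k, y k ^ 2 = (k : ℝ) ^ (n + 2) / (Nat.factorial k) := fun k =>
      Real.sq_sqrt (by positivity)
    simp only [hxy, hx2, hy2] at hcs
    refine hcs.trans (mul_le_mul ?_ ?_ ?_ ?_)
    · rw [dob_def]; exact Summable.sum_le_tsum _ (fun k _ => by positivity) (summable_dob n)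
    · rw [dob_def]; exact Summable.sum_le_tsum _ (fun k _ => by positivity) (summable_dob (n + 2))
    · positivity
    · rw [dob_def]; exact tsum_nonneg (fun k => by positivity)
  have htend : Tendsto (fun N => (∑ k ∈ range N, (k : ℝ) ^ (n + 1) / (Nat.factorial k)) ^ 2)
      atTop (nhds (dob (n + 1) ^ 2)) := by
    rw [dob_def]
    exact ((summable_dob (n + 1)).hasSum.tendsto_sum_nat).pow 2
  exact le_of_tendsto htend (Eventually.of_forall hbound)

lemma bell_logconvex (n : ℕ) :
    bellNumber (n + 1) ^ 2 ≤ bellNumber n * bellNumber (n + 2) := by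
  have h := dob_cs n
  rw [dob_eq n, dob_eq (n + 1), dob_eq (n + 2)] at h
  have h2 : (dob 0) ^ 2 * ((bellNumber (n + 1) : ℝ)) ^ 2
      ≤ (dob 0) ^ 2 * ((bellNumber n : ℝ) * (bellNumber (n + 2) : ℝ)) := by ring_nf; ring_nf at h; linarith
  have h3 := le_of_mul_le_mul_left h2 (pow_pos dob0_pos 2)
  exact_mod_cast h3



lemma bell1 : bellNumber 1 = 1 := by
  rw [bell_rec 0]; simp [bell0]

lemma bell2 : bellNumber 2 = 2 := by
  rw [bell_rec 1]; simp [Finset.sum_range_succ, bell0, bell1]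

noncomputable def br (k : ℕ) : ℝ := (bellNumber (k + 1) : ℝ) / (bellNumber k : ℝ)

lemma hbR (k : ℕ) : (0 : ℝ) < (bellNumber k : ℝ) := by exact_mod_cast bell_pos k

lemma br_pos (k : ℕ) : 0 < br k := div_pos (hbR _) (hbR _)

lemma br_mono : Monotone br := by
  refine monotone_nat_of_le_succ fun k => ?_
  rw [br, br, div_le_div_iff₀ (hbR k) (hbR (k + 1))]
  have h := bell_logconvex k
  have h' : ((bellNumber (k + 1) : ℝ)) ^ 2 ≤ (bellNumber k : ℝ) * (bellNumber (k + 2) : ℝ) := by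
    exact_mod_cast h
  nlinarith [h']

lemma br_prod (n : ℕ) : (bellNumber n : ℝ) = ∏ k ∈ range n, br k := by
  induction n with
  | zero => simp [bell0]
  | succ n ih =>
    rw [Finset.prod_range_succ, ← ih, br, mul_comm, div_mul_cancel₀ _ (ne_of_gt (hbR n))]

lemma bell_key (n : ℕ) (hn : 1 ≤ n) :
    (bellNumber n : ℝ) ^ (n + 1) < (bellNumber (n + 1) : ℝ) ^ n := by
  obtain ⟨m, rfl⟩ : ∃ m, n = m + 1 := ⟨n - 1, by omega⟩
  set n := m + 1
  have h2 : (2 : ℝ) ≤ br n := by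
    have := br_mono (show 1 ≤ n by omega)
    rwa [show br 1 = 2 by rw [br, bell2, bell1]; norm_num] at this
  have hA : (bellNumber n : ℝ) ≤ br n ^ m := by
    rw [br_prod n, Finset.prod_range_succ']
    have h0 : br 0 = 1 := by rw [br, bell1, bell0]; norm_num
    rw [h0, mul_one]
    calc ∏ k ∈ range m, br (k + 1) ≤ ∏ k ∈ range m, br n := by
          refine Finset.prod_le_prod (fun k _ => (br_pos _).le) (fun k hk => ?_)
          exact br_mono (show k + 1 ≤ n by rw [Finset.mem_range] at hk; omega)
      _ = br n ^ m := by rw [Finset.prod_const, Finset.card_range]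
  have hB : (bellNumber n : ℝ) < br n ^ n := by
    refine hA.trans_lt ?_
    exact pow_lt_pow_right₀ (by linarith) (by omega)
  rw [br, div_pow, lt_div_iff₀ (pow_pos (hbR n) n)] at hB
  calc (bellNumber n : ℝ) ^ (n + 1) = (bellNumber n : ℝ) * (bellNumber n : ℝ) ^ n := by ring
    _ < (bellNumber (n + 1) : ℝ) ^ n := hB

/-- The sequence `{B_n^{1/n}}_{n ≥ 1}` of `n`-th roots of the Bell numbers is
strictly increasing. -/
theorem bellNumber_nthRoot_strictMono (n : ℕ) (hn : 1 ≤ n) :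
    (bellNumber n : ℝ) ^ ((1 : ℝ) / n) <
      (bellNumber (n + 1) : ℝ) ^ ((1 : ℝ) / (n + 1)) := by
  have hkey := bell_key n hn
  have hz : (0 : ℝ) < 1 / ((n : ℝ) * ((n : ℝ) + 1)) := by positivity
  have h := Real.rpow_lt_rpow (by positivity) hkey hz
  rw [← Real.rpow_natCast (bellNumber n : ℝ) (n + 1), ← Real.rpow_natCast (bellNumber (n + 1) : ℝ) n,
    ← Real.rpow_mul (hbR n).le, ← Real.rpow_mul (hbR (n + 1)).le] at h
  have hn0 : (n : ℝ) ≠ 0 := Nat.cast_ne_zero.mpr (by omega)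
  have hn1 : ((n : ℝ) + 1) ≠ 0 := by positivity
  have e1 : (((n + 1 : ℕ)) : ℝ) * (1 / ((n : ℝ) * ((n : ℝ) + 1))) = 1 / (n : ℝ) := by
    push_cast; field_simp
  have e2 : ((n : ℕ) : ℝ) * (1 / ((n : ℝ) * ((n : ℝ) + 1))) = 1 / ((n : ℝ) + 1) := by
    field_simp
  rw [e1, e2] at h
  exact_mod_cast h
end
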